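/- arXiv:2405.10184 — 6 statements merged into one kernel-verified Lean document; each statement's English description precedes it below -/
import Mathlib

section
/- Let Q = (Q_{x,y})_{x,y∈𝒳} be a real matrix on a finite set 𝒳 with Q·𝟙 ≤ 0, Q_{x,x} ≤ 0 for all x, and Q_{x,y} ≥ 0 for all x ≠ y. Suppose for each x ∈ 𝒳 there are distinct states z₁,…,z_m, y (all different from x) with Q_{x,z₁} Q_{z₁,z₂} ⋯ Q_{z_m,y} > 0 and Σ_{z∈𝒳} Q_{y,z} < 0. Then every eigenvalue of Q has strictly negative real part; in particular Q is invertible. -/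
open Matrix

open Finset in


lemma aux5 {V : Type*} [Fintype V] [DecidableEq V]
    (Q : Matrix V V ℝ)
    (hrow : ∀ x, ∑ y, Q x y ≤ 0)
    (hdiag : ∀ x, Q x x ≤ 0)
    (hoff : ∀ x y, x ≠ y → 0 ≤ Q x y)
    (μ : ℂ) (hre : 0 ≤ μ.re) (v : V → ℂ) (M0 : ℝ) (hM0 : 0 < M0)
    (hmax : ∀ w, ‖v w‖ ≤ M0)
    (z : V) (hz : ‖v z‖ = M0)
    (heig : ∑ w, (Q z w : ℂ) * v w = μ * v z) :
    (∑ w, Q z w = 0) ∧ ∀ w, 0 < Q z w → ‖v w‖ = M0 := by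
  set s := Finset.univ.erase z with hs
  have hsplit : ∑ w ∈ s, (Q z w : ℂ) * v w = (μ - Q z z) * v z := by
    rw [← Finset.add_sum_erase _ _ (Finset.mem_univ z)] at heig
    have h2 : ∑ w ∈ s, (Q z w : ℂ) * v w = μ * v z - (Q z z : ℂ) * v z :=
      eq_sub_of_add_eq' heig
    rw [h2]; ring
  have habs1 : ‖∑ w ∈ s, (Q z w : ℂ) * v w‖
      ≤ ∑ w ∈ s, Q z w * ‖v w‖ := by
    refine (norm_sum_le _ _).trans_eq ?_
    refine Finset.sum_congr rfl fun w hw => ?_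
    rw [norm_mul, Complex.norm_real, Real.norm_eq_abs,
      abs_of_nonneg (hoff z w (Finset.ne_of_mem_erase hw).symm)]
  have habs2 : ∑ w ∈ s, Q z w * ‖v w‖ ≤ ∑ w ∈ s, Q z w * M0 :=
    Finset.sum_le_sum fun w hw =>
      mul_le_mul_of_nonneg_left (hmax w) (hoff z w (Finset.ne_of_mem_erase hw).symm)
  have hrowerase : ∑ w ∈ s, Q z w = (∑ w, Q z w) - Q z z :=
    Finset.sum_erase_eq_sub (Finset.mem_univ z)
  have habs3 : ∑ w ∈ s, Q z w * M0 ≤ (-Q z z) * M0 := by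
    rw [← Finset.sum_mul]
    apply mul_le_mul_of_nonneg_right _ hM0.le
    rw [hrowerase]; linarith [hrow z]
  have hlow : (-Q z z) * M0 ≤ ‖∑ w ∈ s, (Q z w : ℂ) * v w‖ := by
    rw [hsplit, norm_mul, hz]
    apply mul_le_mul_of_nonneg_right _ hM0.le
    have h1 : (μ - (Q z z : ℂ)).re = μ.re - Q z z := by simp
    calc -Q z z ≤ μ.re - Q z z := by linarith
      _ = (μ - (Q z z : ℂ)).re := h1.symm
      _ ≤ ‖μ - (Q z z : ℂ)‖ := Complex.re_le_norm _
  have he1 : ∑ w ∈ s, Q z w * ‖v w‖ = ∑ w ∈ s, Q z w * M0 :=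
    le_antisymm habs2 (by linarith)
  have he2 : ∑ w ∈ s, Q z w * M0 = (-Q z z) * M0 :=
    le_antisymm habs3 (by linarith)
  constructor
  · rw [← Finset.sum_mul] at he2
    have := mul_right_cancel₀ hM0.ne' he2
    rw [hrowerase] at this; linarith
  · intro w hw
    have hwz : w ≠ z := by
      intro h; rw [h] at hw; exact absurd hw (not_lt.2 (hdiag z))
    have hsum0 : ∑ w ∈ s, Q z w * (M0 - ‖v w‖) = 0 := by
      simp only [mul_sub, Finset.sum_sub_distrib, he1]
      ring
    have hterm := (Finset.sum_eq_zero_iff_of_nonneg (fun w hw' =>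
        mul_nonneg (hoff z w (Finset.ne_of_mem_erase hw').symm)
          (sub_nonneg.2 (hmax w)))).1 hsum0 w
        (Finset.mem_erase.2 ⟨hwz, Finset.mem_univ w⟩)
    rcases mul_eq_zero.1 hterm with h | h
    · exact absurd h hw.ne'
    · linarith

/-- Let `Q` be a real matrix on a finite set with nonpositive row sums, nonpositive diagonal
and nonnegative off-diagonal entries. If from each state `x` there is a chain of distinct
states (all different from `x`) with positive entries leading to a state `y` whose row sum is
strictly negative, then every complex eigenvalue of `Q` has strictly negative real part; in
particular `Q` is invertible. -/
theorem stmt5 {V : Type*} [Fintype V] [DecidableEq V] [Nonempty V]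
    (Q : Matrix V V ℝ)
    (hrow : ∀ x, ∑ y, Q x y ≤ 0)
    (hdiag : ∀ x, Q x x ≤ 0)
    (hoff : ∀ x y, x ≠ y → 0 ≤ Q x y)
    (hpath : ∀ x : V, ∃ (l : List V) (y : V),
      (x :: (l ++ [y])).Nodup ∧
      List.Chain (fun a b => 0 < Q a b) x (l ++ [y]) ∧
      ∑ z, Q y z < 0) :
    (∀ μ : ℂ, μ ∈ spectrum ℂ (Q.map Complex.ofReal) → μ.re < 0) ∧ IsUnit Q := by
  have key : ∀ μ : ℂ, μ ∈ spectrum ℂ (Q.map Complex.ofReal) → μ.re < 0 := by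
    intro μ hμ
    by_contra hre
    push_neg at hre
    rw [spectrum.mem_iff] at hμ
    have hdet : (algebraMap ℂ (Matrix V V ℂ) μ - Q.map Complex.ofReal).det = 0 := by
      by_contra h
      exact hμ ((Matrix.isUnit_iff_isUnit_det _).2 (isUnit_iff_ne_zero.2 h))
    obtain ⟨v, hv, hv0⟩ := (Matrix.exists_mulVec_eq_zero_iff).2 hdet
    have heig : ∀ z, ∑ w, (Q z w : ℂ) * v w = μ * v z := by
      intro z
      have h := congrFun hv0 z
      simp only [Matrix.mulVec, dotProduct, Matrix.sub_apply,
        Matrix.algebraMap_matrix_apply, Matrix.map_apply, sub_mul, ite_mul, zero_mul,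
        Finset.sum_sub_distrib, Finset.sum_ite_eq, Finset.mem_univ, if_true,
        Pi.zero_apply, sub_eq_zero] at h
      exact h.symm
    obtain ⟨x0, -, hx0⟩ := Finset.exists_max_image Finset.univ
      (fun x => ‖v x‖) Finset.univ_nonempty
    set M0 := ‖v x0‖ with hM0def
    have hmax : ∀ w, ‖v w‖ ≤ M0 := fun w => hx0 w (Finset.mem_univ w)
    have hM0 : 0 < M0 := by
      obtain ⟨w, hw⟩ := Function.ne_iff.1 hv
      exact lt_of_lt_of_le (norm_pos_iff.2 hw) (hmax w)
    have step : ∀ a, ‖v a‖ = M0 →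
        (∑ z, Q a z = 0) ∧ ∀ b, 0 < Q a b → ‖v b‖ = M0 :=
      fun a ha => aux5 Q hrow hdiag hoff μ hre v M0 hM0 hmax a ha (heig a)
    obtain ⟨l, y, hnd, hch, hy⟩ := hpath x0
    have hprop : ∀ (L : List V) (a : V), ‖v a‖ = M0 →
        List.Chain (fun a b => 0 < Q a b) a L →
        ∀ b ∈ L, ‖v b‖ = M0 := by
      intro L
      induction L with
      | nil => simp
      | cons c L ih =>
        intro a ha hc b hbL
        have hc : 0 < Q a c ∧ List.Chain (fun a b => 0 < Q a b) c L := List.isChain_cons_cons.1 hc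
        have hcM : ‖v c‖ = M0 := (step a ha).2 c hc.1
        rcases List.mem_cons.1 hbL with rfl | hbL
        · exact hcM
        · exact ih c hcM hc.2 b hbL
    have hyM : ‖v y‖ = M0 :=
      hprop (l ++ [y]) x0 rfl hch y (by simp)
    have := (step y hyM).1
    linarith
  refine ⟨key, ?_⟩
  rw [Matrix.isUnit_iff_isUnit_det, isUnit_iff_ne_zero]
  intro hdet
  have hdetC : (Q.map Complex.ofReal).det = 0 := by
    have h1 : (Q.map Complex.ofReal).det = ((Q.det : ℝ) : ℂ) := by
      rw [show Q.map Complex.ofReal = Complex.ofRealHom.mapMatrix Q from rfl]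
      exact (RingHom.map_det Complex.ofRealHom Q).symm
    rw [h1, hdet]; simp
  have h0 : (0 : ℂ) ∈ spectrum ℂ (Q.map Complex.ofReal) := by
    rw [spectrum.mem_iff]
    intro h
    rw [map_zero, zero_sub] at h
    have h2 := h.neg
    rw [neg_neg] at h2
    have := (Matrix.isUnit_iff_isUnit_det _).1 h2
    rw [hdetC] at this
    exact (not_isUnit_zero this).elim
  have := key 0 h0
  simp at this
end

section
/- Consider a family of generators Q(ε) = Σ_{k≥0} ε^k Q^(k) on a finite state space 𝒳 = 𝒜 ∪ 𝒯 such that Q(ε) is an irreducible Q-matrix for 0 < ε < ε₀, and for ε = 0 every state of 𝒜 is absorbing and every state of 𝒯 is transient (so Q^(0) has block form with zero blocks on the 𝒜-rows, and blocks R₀, T₀ on the 𝒯-rows with T₀ invertible). Write Q^(1) in blocks A₁ (𝒜×𝒜), S₁ (𝒜×𝒯), R₁, T₁. Then the matrix Q_𝒜 := A₁ + S₁ (−T₀)⁻¹ R₀ is a Q-matrix on 𝒜: its off-diagonal entries are nonnegative and its row sums are zero. -/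
open Matrix Filter Topology

/-- If a power series `∑ εᵏ c k` converges to `f ε` on `[0, ε₀)` and `c 0 = 0`, then
`f ε / ε → c 1` as `ε → 0⁺`. -/
lemma deriv_limit (ε₀ : ℝ) (hε₀ : 0 < ε₀) (c : ℕ → ℝ) (f : ℝ → ℝ)
    (hc0 : c 0 = 0)
    (hs : ∀ ε : ℝ, 0 ≤ ε → ε < ε₀ → HasSum (fun k : ℕ => ε ^ k * c k) (f ε)) :
    Tendsto (fun ε => f ε / ε) (𝓝[>] (0:ℝ)) (𝓝 (c 1)) := by
  set ε₁ := ε₀ / 2 with hε₁def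
  have hε₁ : 0 < ε₁ := by positivity
  have hε₁lt : ε₁ < ε₀ := by simp [hε₁def]; linarith
  have hsum := hs ε₁ hε₁.le hε₁lt
  have htend : Tendsto (fun k : ℕ => |ε₁ ^ k * c k|) atTop (𝓝 0) := by
    simpa using (hsum.summable.tendsto_atTop_zero.abs)
  obtain ⟨M, hM⟩ := htend.bddAbove_range
  set M' := max M 1 with hM'def
  have hM'pos : (0:ℝ) < M' := lt_of_lt_of_le one_pos (le_max_right _ _)
  have hMb : ∀ k, |c k| * ε₁ ^ k ≤ M' := by
    intro k
    have h1 : |ε₁ ^ k * c k| ≤ M := hM ⟨k, rfl⟩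
    have : |ε₁ ^ k * c k| = |c k| * ε₁ ^ k := by
      rw [abs_mul, abs_of_nonneg (by positivity : (0:ℝ) ≤ ε₁ ^ k), mul_comm]
    linarith [le_max_left M 1, this ▸ h1]
  set K := 2 * M' / ε₁ ^ 2 with hKdef
  have hest : ∀ ε : ℝ, 0 < ε → ε ≤ ε₁ / 2 → |f ε / ε - c 1| ≤ K * ε := by
    intro ε hεpos hεle
    have hεlt₀ : ε < ε₀ := by linarith
    have hfε := hs ε hεpos.le hεlt₀
    set r := ε / ε₁ with hrdef
    have hr0 : 0 < r := by positivity
    have hr2 : r ≤ 1/2 := by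
      rw [hrdef, div_le_iff₀ hε₁]; linarith
    have hr1 : r < 1 := by linarith
    have hfin : HasSum (fun k : ℕ => if k < 2 then ε ^ k * c k else 0) (ε * c 1) := by
      have := hasSum_sum_of_ne_finset_zero (L := SummationFilter.unconditional ℕ) (s := Finset.range 2)
        (f := fun k : ℕ => if k < 2 then ε ^ k * c k else 0)
        (fun k hk => if_neg (by simp [Finset.mem_range] at hk; omega))
      simpa [Finset.sum_range_succ, hc0] using this
    have hdiff : HasSum (fun k : ℕ => if k < 2 then 0 else ε ^ k * c k)
        (f ε - ε * c 1) := by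
      have := hfε.sub hfin
      convert this using 1
      · rfl
      funext k
      by_cases h : k < 2 <;> simp [h]
    have hgeo : HasSum (fun k : ℕ => M' * r ^ k) (M' * (1 - r)⁻¹) :=
      (hasSum_geometric_of_lt_one hr0.le hr1).mul_left M'
    have hgfin : HasSum (fun k : ℕ => if k < 2 then M' * r ^ k else 0)
        (M' + M' * r) := by
      have := hasSum_sum_of_ne_finset_zero (L := SummationFilter.unconditional ℕ) (s := Finset.range 2)
        (f := fun k : ℕ => if k < 2 then M' * r ^ k else 0)
        (fun k hk => if_neg (by simp [Finset.mem_range] at hk; omega))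
      simpa [Finset.sum_range_succ] using this
    have hu : HasSum (fun k : ℕ => if k < 2 then 0 else M' * r ^ k)
        (M' * (1 - r)⁻¹ - (M' + M' * r)) := by
      have := hgeo.sub hgfin
      convert this using 1
      · rfl
      funext k
      by_cases h : k < 2 <;> simp [h]
    have hbound : ∀ k : ℕ, ‖if k < 2 then (0:ℝ) else ε ^ k * c k‖ ≤
        (if k < 2 then 0 else M' * r ^ k) := by
      intro k
      by_cases h : k < 2
      · simp [h]
      · simp only [h, if_false]
        rw [Real.norm_eq_abs, abs_mul, abs_of_nonneg (by positivity : (0:ℝ) ≤ ε ^ k)]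
        have : ε ^ k = r ^ k * ε₁ ^ k := by
          rw [← mul_pow, hrdef, div_mul_cancel₀]; exact hε₁.ne'
        rw [this]
        calc r ^ k * ε₁ ^ k * |c k| = r ^ k * (|c k| * ε₁ ^ k) := by ring
          _ ≤ r ^ k * M' := by
              exact mul_le_mul_of_nonneg_left (hMb k) (by positivity)
          _ = M' * r ^ k := mul_comm _ _
    have hnorm : ‖f ε - ε * c 1‖ ≤ M' * (1 - r)⁻¹ - (M' + M' * r) := by
      rw [← hdiff.tsum_eq]
      exact tsum_of_norm_bounded hu hbound
    have hinv : (1 - r)⁻¹ ≤ 1 + r + 2 * r ^ 2 := by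
      rw [inv_le_iff_one_le_mul₀ (by linarith : (0:ℝ) < 1 - r)]
      nlinarith
    have hS : M' * (1 - r)⁻¹ - (M' + M' * r) ≤ 2 * M' * r ^ 2 := by
      have := mul_le_mul_of_nonneg_left hinv hM'pos.le
      nlinarith
    have h2 : |f ε - ε * c 1| ≤ 2 * M' * r ^ 2 := by
      rw [← Real.norm_eq_abs]; linarith
    have h3 : |f ε / ε - c 1| = |f ε - ε * c 1| / ε := by
      have : f ε / ε - c 1 = (f ε - ε * c 1) / ε := by field_simp
      rw [this, abs_div, abs_of_pos hεpos]
    rw [h3, div_le_iff₀ hεpos]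
    calc |f ε - ε * c 1| ≤ 2 * M' * r ^ 2 := h2
      _ = (2 * M' / ε₁ ^ 2) * ε * ε := by
          rw [hrdef]; field_simp
      _ = K * ε * ε := by rw [hKdef]
  have hKpos : 0 < K := by positivity
  rw [← tendsto_sub_nhds_zero_iff,
    tendsto_zero_iff_abs_tendsto_zero (fun ε => f ε / ε - c 1)]
  show Tendsto (fun ε => |f ε / ε - c 1|) (𝓝[>] (0:ℝ)) (𝓝 0)
  have hev1 : Set.Ioo (0:ℝ) (ε₁/2) ∈ 𝓝[>] (0:ℝ) :=
    Ioo_mem_nhdsGT_of_mem ⟨le_refl 0, by positivity⟩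
  apply squeeze_zero' (g := fun ε => K * ε)
  · exact Eventually.of_forall (fun ε => abs_nonneg _)
  · filter_upwards [hev1] with ε hε
    exact hest ε hε.1 hε.2.le
  · have : Tendsto (fun ε : ℝ => K * ε) (𝓝 (0:ℝ)) (𝓝 (K * 0)) :=
      (continuous_const.mul continuous_id).tendsto 0
    simpa using this.mono_left nhdsWithin_le_nhds

/-- Maximum‑principle step: at a state realizing a negative minimum where the
balance inequality holds, there is no rate out to `𝒜`, and every state reachable in one
positive step also realizes the minimum. -/
lemma closed_step {A T : Type*} [Fintype A] [Fintype T]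
    (Q0 : Matrix (A ⊕ T) (A ⊕ T) ℝ)
    (hoff : ∀ x y, x ≠ y → 0 ≤ Q0 x y) (hrow : ∀ x, ∑ y, Q0 x y = 0)
    (x : T → ℝ) (m : ℝ) (hm : m < 0) (hmle : ∀ u, m ≤ x u)
    (t : T) (ht : x t = m)
    (hx : ∑ u, Q0 (Sum.inr t) (Sum.inr u) * x u ≤ 0) :
    (∀ a : A, Q0 (Sum.inr t) (Sum.inl a) = 0) ∧
      ∀ u, 0 < Q0 (Sum.inr t) (Sum.inr u) → x u = m := by
  set σ := ∑ u, Q0 (Sum.inr t) (Sum.inr u) with hσ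
  set ρ := ∑ a, Q0 (Sum.inr t) (Sum.inl a) with hρ
  have hρ0 : 0 ≤ ρ :=
    Finset.sum_nonneg fun a _ => hoff _ _ (by simp)
  have hσρ : ρ + σ = 0 := by
    have := hrow (Sum.inr t)
    rwa [Fintype.sum_sum_type] at this
  have hFnn : ∀ u, 0 ≤ Q0 (Sum.inr t) (Sum.inr u) * (x u - m) := by
    intro u
    by_cases h : u = t
    · subst h; rw [ht]; simp
    · exact mul_nonneg (hoff _ _ (by simp [Ne.symm h])) (by linarith [hmle u])
  have hsplit : ∑ u, Q0 (Sum.inr t) (Sum.inr u) * (x u - m) + σ * m =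
      ∑ u, Q0 (Sum.inr t) (Sum.inr u) * x u := by
    rw [hσ, Finset.sum_mul]
    rw [← Finset.sum_add_distrib]
    congr 1; funext u; ring
  have hσm : 0 ≤ σ * m := by
    have : σ = -ρ := by linarith
    rw [this]; rw [neg_mul]
    nlinarith
  have hFsum : 0 ≤ ∑ u, Q0 (Sum.inr t) (Sum.inr u) * (x u - m) :=
    Finset.sum_nonneg fun u _ => hFnn u
  have hboth : ∑ u, Q0 (Sum.inr t) (Sum.inr u) * (x u - m) = 0 ∧ σ * m = 0 := by
    constructor <;> linarith [hsplit ▸ hx]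
  have hσ0 : σ = 0 := by
    rcases mul_eq_zero.mp hboth.2 with h | h
    · exact h
    · exact absurd h hm.ne
  have hρ2 : ρ = 0 := by linarith
  constructor
  · intro a
    exact (Finset.sum_eq_zero_iff_of_nonneg
      (fun a _ => hoff (Sum.inr t) (Sum.inl a) (by simp))).mp hρ2 a (Finset.mem_univ a)
  · intro u hu
    have := (Finset.sum_eq_zero_iff_of_nonneg (fun u _ => hFnn u)).mp hboth.1 u
      (Finset.mem_univ u)
    rcases mul_eq_zero.mp this with h | h
    · exact absurd h hu.ne'
    · linarith

/-- If `(−T₀) x ≥ 0` componentwise for the transient block of a Q-matrix whose transient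
states all reach 𝒜, then `x ≥ 0`. -/
lemma inv_nonneg_aux {A T : Type*} [Fintype A] [Fintype T] [Nonempty T]
    (Q0 : Matrix (A ⊕ T) (A ⊕ T) ℝ)
    (hoff : ∀ x y, x ≠ y → 0 ≤ Q0 x y) (hrow : ∀ x, ∑ y, Q0 x y = 0)
    (htrans : ∀ t : T, ∃ a : A,
      Relation.ReflTransGen (fun u v => 0 < Q0 u v) (Sum.inr t) (Sum.inl a))
    (x : T → ℝ) (hx : ∀ t, 0 ≤ ((-(Q0.toBlocks₂₂)) *ᵥ x) t) : ∀ t, 0 ≤ x t := by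
  obtain ⟨t₀, -, hmin⟩ := Finset.exists_min_image Finset.univ x
    ⟨Classical.arbitrary T, Finset.mem_univ _⟩
  have hmin' : ∀ u, x t₀ ≤ x u := fun u => hmin u (Finset.mem_univ u)
  suffices h : 0 ≤ x t₀ by intro t; linarith [hmin' t]
  by_contra h
  push_neg at h
  set m := x t₀ with hmdef
  have hx' : ∀ t : T, ∑ u, Q0 (Sum.inr t) (Sum.inr u) * x u ≤ 0 := by
    intro t
    have := hx t
    simp only [Matrix.mulVec, dotProduct, Matrix.neg_apply, Matrix.toBlocks₂₂,
      Matrix.of_apply, neg_mul, Finset.sum_neg_distrib] at this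
    linarith
  have reach : ∀ z, Relation.ReflTransGen (fun u v => 0 < Q0 u v) (Sum.inr t₀) z →
      ∃ u : T, z = Sum.inr u ∧ x u = m := by
    intro z hz
    induction hz with
    | refl => exact ⟨t₀, rfl, rfl⟩
    | tail hab step ih =>
      obtain ⟨u, rfl, hu⟩ := ih
      have hcl := closed_step Q0 hoff hrow x m h hmin' u hu (hx' u)
      rename_i c
      cases c with
      | inl a => exact absurd (hcl.1 a) step.ne'
      | inr v => exact ⟨v, rfl, hcl.2 v step⟩
  obtain ⟨a, ha⟩ := htrans t₀
  obtain ⟨u, hu, -⟩ := reach _ ha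
  exact Sum.inl_ne_inr hu

/-- The matrix `Q_𝒜 = A₁ + S₁ (−T₀)⁻¹ R₀`, built from the blocks of `Q⁽¹⁾` and `Q⁽⁰⁾`
in the decomposition of the state space as 𝒜 ⊕ 𝒯. -/
noncomputable def QAmat {A T : Type*} [Fintype T] [DecidableEq T]
    (Q0 Q1 : Matrix (A ⊕ T) (A ⊕ T) ℝ) : Matrix A A ℝ :=
  Q1.toBlocks₁₁ + Q1.toBlocks₁₂ * (-Q0.toBlocks₂₂)⁻¹ * Q0.toBlocks₂₁

/-- For a family of generators `Q(ε) = Σ_k ε^k Q⁽ᵏ⁾` on `𝒜 ⊕ 𝒯`, irreducible Q-matrices for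
`0 < ε < ε₀`, such that for `ε = 0` every state of 𝒜 is absorbing and every state of 𝒯 is
transient (each leads to an absorbing state; the block `T₀` of `Q(0)` is then invertible),
the matrix `Q_𝒜 = A₁ + S₁ (−T₀)⁻¹ R₀` is a Q-matrix on 𝒜: it has nonnegative off-diagonal
entries and zero row sums. -/
theorem stmt9 {A T : Type*} [Fintype A] [Fintype T] [DecidableEq A] [DecidableEq T]
    [Nonempty A] [Nonempty T]
    (ε₀ : ℝ) (hε₀ : 0 < ε₀)
    (Q : ℝ → Matrix (A ⊕ T) (A ⊕ T) ℝ)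
    (Qk : ℕ → Matrix (A ⊕ T) (A ⊕ T) ℝ)
    (hseries : ∀ ε : ℝ, 0 ≤ ε → ε < ε₀ → ∀ x y,
      HasSum (fun k : ℕ => ε ^ k * Qk k x y) (Q ε x y))
    (hQ0 : Qk 0 = Q 0)
    (hQmat : ∀ ε : ℝ, 0 < ε → ε < ε₀ →
      (∀ x y, x ≠ y → 0 ≤ Q ε x y) ∧ ∀ x, ∑ y, Q ε x y = 0)
    (hirr : ∀ ε : ℝ, 0 < ε → ε < ε₀ →
      ∀ x y : A ⊕ T, Relation.ReflTransGen (fun a b => 0 < Q ε a b) x y)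
    (hQ0mat : (∀ x y, x ≠ y → 0 ≤ Q 0 x y) ∧ ∀ x, ∑ y, Q 0 x y = 0)
    (habs : ∀ a : A, ∀ y, Q 0 (Sum.inl a) y = 0)
    (htrans : ∀ t : T, ∃ a : A,
      Relation.ReflTransGen (fun u v => 0 < Q 0 u v) (Sum.inr t) (Sum.inl a))
    (hT0 : IsUnit (Q 0).toBlocks₂₂) :
    (∀ a b : A, a ≠ b → 0 ≤ QAmat (Q 0) (Qk 1) a b) ∧
    ∀ a : A, ∑ b : A, QAmat (Q 0) (Qk 1) a b = 0 := by
  classical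
  -- Part (a): properties of the 𝒜-rows of Q⁽¹⁾
  have key : ∀ (a : A) (y : A ⊕ T),
      Tendsto (fun ε => Q ε (Sum.inl a) y / ε) (𝓝[>] (0:ℝ))
        (𝓝 (Qk 1 (Sum.inl a) y)) := by
    intro a y
    refine deriv_limit ε₀ hε₀ (fun k => Qk k (Sum.inl a) y)
      (fun ε => Q ε (Sum.inl a) y) ?_ ?_
    · show Qk 0 (Sum.inl a) y = 0
      rw [hQ0]; exact habs a y
    · intro ε h1 h2; exact hseries ε h1 h2 _ _
  have hev : Set.Ioo (0:ℝ) ε₀ ∈ 𝓝[>] (0:ℝ) :=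
    Ioo_mem_nhdsGT_of_mem ⟨le_refl 0, hε₀⟩
  have h1nonneg : ∀ (a : A) (y : A ⊕ T), Sum.inl a ≠ y → 0 ≤ Qk 1 (Sum.inl a) y := by
    intro a y hne
    refine ge_of_tendsto (key a y) ?_
    filter_upwards [hev] with ε hε
    exact div_nonneg ((hQmat ε hε.1 hε.2).1 _ _ hne) hε.1.le
  have h1row : ∀ a : A, ∑ y, Qk 1 (Sum.inl a) y = 0 := by
    intro a
    have t1 : Tendsto (fun ε => ∑ y, Q ε (Sum.inl a) y / ε) (𝓝[>] (0:ℝ))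
        (𝓝 (∑ y, Qk 1 (Sum.inl a) y)) := tendsto_finset_sum _ (fun y _ => key a y)
    have t2 : Tendsto (fun ε : ℝ => ∑ y, Q ε (Sum.inl a) y / ε) (𝓝[>] (0:ℝ)) (𝓝 0) := by
      refine Tendsto.congr' ?_ (tendsto_const_nhds (α := ℝ))
      filter_upwards [hev] with ε hε
      rw [← Finset.sum_div, (hQmat ε hε.1 hε.2).2 (Sum.inl a), zero_div]
    exact (tendsto_nhds_unique t1 t2)
  -- Part (b): properties of M = (−T₀)⁻¹ R₀
  have hdet : IsUnit (-(Q 0).toBlocks₂₂).det :=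
    (Matrix.isUnit_iff_isUnit_det _).mp hT0.neg
  have hMul : (-(Q 0).toBlocks₂₂) * ((-(Q 0).toBlocks₂₂)⁻¹ * (Q 0).toBlocks₂₁)
      = (Q 0).toBlocks₂₁ := by
    rw [← Matrix.mul_assoc, Matrix.mul_nonsing_inv _ hdet, Matrix.one_mul]
  set M := (-(Q 0).toBlocks₂₂)⁻¹ * (Q 0).toBlocks₂₁ with hMdef
  have hR₀nn : ∀ (t : T) (b : A), 0 ≤ (Q 0).toBlocks₂₁ t b := by
    intro t b
    show 0 ≤ Q 0 (Sum.inr t) (Sum.inl b)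
    exact hQ0mat.1 _ _ (by simp)
  have hMnn : ∀ (t : T) (b : A), 0 ≤ M t b := by
    intro t b
    refine inv_nonneg_aux (Q 0) hQ0mat.1 hQ0mat.2 htrans (fun u => M u b) ?_ t
    intro u
    have heq : ((-(Q 0).toBlocks₂₂) *ᵥ fun v => M v b) u
        = ((-(Q 0).toBlocks₂₂) * M) u b := by
      simp [Matrix.mulVec, Matrix.mul_apply, dotProduct]
    rw [heq, hMdef, hMul]
    exact hR₀nn u b
  have hMrow : ∀ t : T, ∑ b, M t b = 1 := by
    have hvec : (-(Q 0).toBlocks₂₂) *ᵥ (fun t => ∑ b, M t b)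
        = (-(Q 0).toBlocks₂₂) *ᵥ (fun _ => 1) := by
      funext t
      simp only [Matrix.mulVec, dotProduct]
      have lhs : ∑ u, (-(Q 0).toBlocks₂₂) t u * ∑ b, M u b
          = ∑ b, ((-(Q 0).toBlocks₂₂) * M) t b := by
        simp_rw [Finset.mul_sum, Matrix.mul_apply]
        exact Finset.sum_comm
      rw [lhs, hMul]
      have hrs := hQ0mat.2 (Sum.inr t)
      rw [Fintype.sum_sum_type] at hrs
      have hblk : ∀ u, (-(Q 0).toBlocks₂₂) t u * (1:ℝ) = -(Q 0 (Sum.inr t) (Sum.inr u)) := by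
        intro u; simp [Matrix.toBlocks₂₂]
      have hblk' : ∀ b : A, (Q 0).toBlocks₂₁ t b = Q 0 (Sum.inr t) (Sum.inl b) := by
        intro b; simp [Matrix.toBlocks₂₁]
      simp_rw [hblk, hblk', Finset.sum_neg_distrib]
      linarith
    intro t
    have h2 := congrArg (fun v => (-(Q 0).toBlocks₂₂)⁻¹ *ᵥ v) hvec
    simp only [Matrix.mulVec_mulVec, Matrix.nonsing_inv_mul _ hdet,
      Matrix.one_mulVec] at h2
    exact congrFun h2 t
  -- Assembly
  have hQA : ∀ a b : A, QAmat (Q 0) (Qk 1) a b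
      = Qk 1 (Sum.inl a) (Sum.inl b) + ∑ t, Qk 1 (Sum.inl a) (Sum.inr t) * M t b := by
    intro a b
    show ((Qk 1).toBlocks₁₁
      + (Qk 1).toBlocks₁₂ * (-(Q 0).toBlocks₂₂)⁻¹ * (Q 0).toBlocks₂₁) a b = _
    rw [Matrix.mul_assoc, ← hMdef, Matrix.add_apply, Matrix.mul_apply]
    simp [Matrix.toBlocks₁₁, Matrix.toBlocks₁₂]
  refine ⟨?_, ?_⟩
  · intro a b hab
    rw [hQA]
    have h1 : 0 ≤ Qk 1 (Sum.inl a) (Sum.inl b) := h1nonneg a _ (by simp [hab])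
    have h2 : 0 ≤ ∑ t, Qk 1 (Sum.inl a) (Sum.inr t) * M t b :=
      Finset.sum_nonneg fun t _ => mul_nonneg (h1nonneg a _ (by simp)) (hMnn t b)
    linarith
  · intro a
    have hsum : ∑ b, QAmat (Q 0) (Qk 1) a b
        = ∑ b, Qk 1 (Sum.inl a) (Sum.inl b)
          + ∑ t, Qk 1 (Sum.inl a) (Sum.inr t) * ∑ b, M t b := by
      simp_rw [hQA]
      rw [Finset.sum_add_distrib]
      congr 1
      rw [Finset.sum_comm]
      congr 1; funext t
      rw [← Finset.mul_sum]
    rw [hsum]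
    simp_rw [hMrow, mul_one]
    have hr := h1row a
    rw [Fintype.sum_sum_type] at hr
    linarith
end

section
/- In the setting where Q(ε) is a real-analytic singular perturbation of Q(0) on 𝒳 = 𝒜 ∪ 𝒯, irreducible for ε > 0, with 𝒜 absorbing and 𝒯 transient for Q(0): the stationary distribution π(ε) of Q(ε) extends continuously to ε = 0 with π(0) = [α, 0], where α is a probability vector on 𝒜 satisfying α (A₁ + S₁ (−T₀)⁻¹ R₀) = 0; moreover, the first-order coefficient of π(ε) on the transient states satisfies β^(1) = α S₁ (−T₀)⁻¹. -/
open Matrix Filter Topology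

theorem seriesLemma {a : ℕ → ℝ} {q : ℝ → ℝ} {r : ℝ} (hr : 0 < r)
    (h : ∀ ε : ℝ, 0 ≤ ε → ε < r → HasSum (fun k : ℕ => ε ^ k * a k) (q ε)) :
    ∃ F : ℝ → ℝ, AnalyticAt ℝ F 0 ∧ (∀ ε, 0 ≤ ε → ε < r → F ε = q ε) ∧
      F 0 = a 0 ∧ HasDerivAt F (a 1) 0 := by
  set p := FormalMultilinearSeries.ofScalars ℝ a with hp
  have hnorm : ∀ n, ‖p n‖ = |a n| := fun n => by
    rw [hp]; exact (FormalMultilinearSeries.ofScalars_norm ℝ a n).trans (Real.norm_eq_abs _)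
  have hrad : ∀ s : ℝ, 0 ≤ s → s < r → ENNReal.ofReal s ≤ p.radius := by
    intro s hs0 hsr
    obtain ⟨s', hs'0, hss', hs'r⟩ : ∃ s', 0 < s' ∧ s < s' ∧ s' < r :=
      ⟨(s + r) / 2, by linarith, by linarith, by linarith⟩
    have hsum' : Summable fun k : ℕ => s' ^ k * a k := (h s' hs'0.le hs'r).summable
    have htend : Filter.Tendsto (fun n => |s' ^ n * a n|) atTop (𝓝 0) := by
      simpa using hsum'.tendsto_atTop_zero.abs
    obtain ⟨C, hC⟩ := htend.bddAbove_range
    have hCb : ∀ n, |s' ^ n * a n| ≤ C := fun n => hC (Set.mem_range_self n)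
    have hsummable : Summable fun n : ℕ => ‖p n‖ * (s.toNNReal : ℝ) ^ n := by
      have hle : ∀ n, ‖p n‖ * (s.toNNReal : ℝ) ^ n ≤ C * (s / s') ^ n := by
        intro n
        rw [hnorm, Real.coe_toNNReal _ hs0]
        have h1 : |a n| ≤ C / s' ^ n := by
          rw [le_div_iff₀ (by positivity)]
          calc |a n| * s' ^ n = |s' ^ n * a n| := by
                rw [abs_mul, abs_of_nonneg (by positivity : (0:ℝ) ≤ s' ^ n)]; ring
            _ ≤ C := hCb n
        calc |a n| * s ^ n ≤ (C / s' ^ n) * s ^ n := by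
              apply mul_le_mul_of_nonneg_right h1 (by positivity)
          _ = C * (s / s') ^ n := by rw [div_pow]; ring
      apply Summable.of_nonneg_of_le (fun n => by positivity) hle
      exact (summable_geometric_of_lt_one (by positivity)
        (by rw [div_lt_one hs'0]; exact hss')).mul_left C
    simpa [ENNReal.ofReal, Real.toNNReal] using p.le_radius_of_summable_norm hsummable
  have hpos : 0 < p.radius :=
    lt_of_lt_of_le (by simp [hr, ENNReal.ofReal_pos] : (0:ENNReal) < ENNReal.ofReal (r/2))
      (hrad (r/2) (by linarith) (by linarith))
  have hball := p.hasFPowerSeriesOnBall hpos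
  have hmem : ∀ ε : ℝ, 0 ≤ ε → ε < r → ε ∈ Metric.eball (0:ℝ) p.radius := by
    intro ε hε0 hεr
    rw [Metric.mem_eball, edist_dist, Real.dist_eq, sub_zero, abs_of_nonneg hε0]
    exact lt_of_lt_of_le (ENNReal.ofReal_lt_ofReal_iff (by linarith)|>.mpr (by linarith))
      (hrad ((ε + r)/2) (by linarith) (by linarith))
  have hFeq : ∀ ε : ℝ, 0 ≤ ε → ε < r → p.sum ε = q ε := by
    intro ε hε0 hεr
    have h1 : HasSum (fun n => p n fun _ => ε) (p.sum ε) := p.hasSum (hmem ε hε0 hεr)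
    have h2 : (fun n => p n fun _ => ε) = fun n : ℕ => ε ^ n * a n := by
      funext n
      rw [hp, FormalMultilinearSeries.ofScalars_apply_eq, smul_eq_mul, mul_comm]
    rw [h2] at h1
    exact h1.unique (h ε hε0 hεr)
  have hq0 : q 0 = a 0 := by
    have h1 := h 0 le_rfl hr
    have h2 : HasSum (fun k : ℕ => (0:ℝ) ^ k * a k) ((0:ℝ) ^ 0 * a 0) := by
      apply hasSum_single
      intro b hb
      simp [zero_pow hb]
    simpa using h1.unique h2
  refine ⟨p.sum, hball.hasFPowerSeriesAt.analyticAt, hFeq, ?_, ?_⟩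
  · rw [hFeq 0 le_rfl hr, hq0]
  · have hd := hball.hasFPowerSeriesAt.hasDerivAt
    have : (p 1 fun _ => (1:ℝ)) = a 1 := by
      rw [hp, FormalMultilinearSeries.ofScalars_apply_eq]; simp
    rwa [this] at hd

theorem kernelConst {n : Type*} [Fintype n] [Nonempty n] (M : Matrix n n ℝ)
    (hoff : ∀ x y, x ≠ y → 0 ≤ M x y) (hrow : ∀ x, ∑ y, M x y = 0)
    (hirr : ∀ x y, Relation.ReflTransGen (fun a b => 0 < M a b) x y)
    (v : n → ℝ) (hv : M.mulVec v = 0) : ∀ x y, v x = v y := by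
  obtain ⟨x₀, -, hx₀⟩ := Finset.exists_max_image (Finset.univ : Finset n) v ⟨Classical.arbitrary n, Finset.mem_univ _⟩
  have step : ∀ a b, v a = v x₀ → 0 < M a b → v b = v x₀ := by
    intro a b ha hab
    have e1 : ∑ y, M a y * v y = 0 := by
      have := congrFun hv a
      simpa [Matrix.mulVec, dotProduct] using this
    have hsum : ∑ y, M a y * (v y - v x₀) = 0 := by
      have : ∑ y, M a y * (v y - v x₀) = (∑ y, M a y * v y) - (∑ y, M a y) * v x₀ := by
        rw [Finset.sum_mul, ← Finset.sum_sub_distrib]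
        congr 1; funext y; ring
      rw [this, e1, hrow a, zero_mul, sub_zero]
    have hnonpos : ∀ y ∈ (Finset.univ : Finset n), M a y * (v y - v x₀) ≤ 0 := by
      intro y _
      by_cases hy : y = a
      · subst hy; rw [ha, sub_self, mul_zero]
      · exact mul_nonpos_of_nonneg_of_nonpos (hoff a y (fun hh => hy hh.symm))
          (sub_nonpos.mpr (hx₀ y (Finset.mem_univ y)))
    have hz := (Finset.sum_eq_zero_iff_of_nonpos hnonpos).mp hsum b (Finset.mem_univ b)
    rcases mul_eq_zero.mp hz with h1 | h1
    · exact absurd h1 (ne_of_gt hab)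
    · linarith [sub_eq_zero.mp h1]
  have key : ∀ y, v y = v x₀ := by
    intro y
    induction hirr x₀ y with
    | refl => rfl
    | tail _ hstep ih => exact step _ _ ih hstep
  intro x y; rw [key x, key y]

theorem ratioLimit {f g h : ℝ → ℝ} {δ C : ℝ} (hδ : 0 < δ)
    (hf : AnalyticAt ℝ f 0) (hg : AnalyticAt ℝ g 0)
    (hgne : ∀ ε : ℝ, 0 < ε → ε < δ → g ε ≠ 0)
    (heq : ∀ ε : ℝ, 0 < ε → ε < δ → h ε = f ε / g ε)
    (hb : ∀ ε : ℝ, 0 < ε → ε < δ → |h ε| ≤ C) :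
    ∃ L, Tendsto h (𝓝[>] (0:ℝ)) (𝓝 L) := by
  have hIoo : Set.Ioo (0:ℝ) δ ∈ 𝓝[>] (0:ℝ) := Ioo_mem_nhdsGT_of_mem ⟨le_rfl, hδ⟩
  have hIooEv : ∀ᶠ ε in 𝓝[>] (0:ℝ), ε ∈ Set.Ioo (0:ℝ) δ := eventually_of_mem hIoo fun x hx => hx
  have hgtop : ¬ (∀ᶠ z in 𝓝 (0:ℝ), g z = 0) := by
    intro hev
    obtain ⟨ε, hmem, hg0⟩ := (hIooEv.and (hev.filter_mono nhdsWithin_le_nhds)).exists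
    exact hgne ε hmem.1 hmem.2 hg0
  by_cases hftop : ∀ᶠ z in 𝓝 (0:ℝ), f z = 0
  · refine ⟨0, ?_⟩
    have hev : ∀ᶠ ε in 𝓝[>] (0:ℝ), h ε = 0 := by
      filter_upwards [hftop.filter_mono nhdsWithin_le_nhds, hIooEv] with ε hf0 hmem
      rw [heq ε hmem.1 hmem.2, hf0, zero_div]
    exact (tendsto_congr' hev).mpr tendsto_const_nhds |>.congr (fun _ => rfl) |>.mono_right le_rfl
  · obtain ⟨p, hp⟩ := WithTop.ne_top_iff_exists.mp (fun hh => hftop (analyticOrderAt_eq_top.mp hh))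
    obtain ⟨q, hq⟩ := WithTop.ne_top_iff_exists.mp (fun hh => hgtop (analyticOrderAt_eq_top.mp hh))
    obtain ⟨fg, hfgan, hfg0, hfgev⟩ := (hf.analyticOrderAt_eq_natCast (n := p)).mp hp.symm
    obtain ⟨gg, hggan, hgg0, hggev⟩ := (hg.analyticOrderAt_eq_natCast (n := q)).mp hq.symm
    have hfgev' : ∀ᶠ z in 𝓝 (0:ℝ), f z = z ^ p * fg z := by
      filter_upwards [hfgev] with z hz; simpa [smul_eq_mul] using hz
    have hggev' : ∀ᶠ z in 𝓝 (0:ℝ), g z = z ^ q * gg z := by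
      filter_upwards [hggev] with z hz; simpa [smul_eq_mul] using hz
    have hggne : ∀ᶠ z in 𝓝 (0:ℝ), gg z ≠ 0 := hggan.continuousAt.eventually_ne hgg0
    have hfgne : ∀ᶠ z in 𝓝 (0:ℝ), fg z ≠ 0 := hfgan.continuousAt.eventually_ne hfg0
    rcases le_or_gt q p with hqp | hpq
    · refine ⟨0 ^ (p - q) * (fg 0 / gg 0), ?_⟩
      have ht : Tendsto (fun ε : ℝ => ε ^ (p - q) * (fg ε / gg ε)) (𝓝 (0:ℝ))
          (𝓝 (0 ^ (p - q) * (fg 0 / gg 0))) := by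
        exact ((continuousAt_id.pow _).mul
          (hfgan.continuousAt.div hggan.continuousAt hgg0)).tendsto
      refine (ht.mono_left nhdsWithin_le_nhds).congr' ?_
      filter_upwards [hIooEv, hfgev'.filter_mono nhdsWithin_le_nhds,
        hggev'.filter_mono nhdsWithin_le_nhds, hggne.filter_mono nhdsWithin_le_nhds]
        with ε hmem hfe hge hgge
      have hε : ε ≠ 0 := ne_of_gt hmem.1
      rw [heq ε hmem.1 hmem.2, hfe, hge]
      rw [show p = (p - q) + q from (Nat.sub_add_cancel hqp).symm, pow_add, Nat.add_sub_cancel]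
      field_simp
    · exfalso
      have hzero : (0:ℝ) ^ (q - p) * |gg 0 / fg 0| = 0 := by
        rw [zero_pow (Nat.sub_ne_zero_of_lt hpq), zero_mul]
      have htend0 : Tendsto (fun ε : ℝ => ε ^ (q - p) * |gg ε / fg ε|) (𝓝[>] (0:ℝ)) (𝓝 0) := by
        have hcont : Tendsto (fun ε : ℝ => ε ^ (q - p) * |gg ε / fg ε|) (𝓝 (0:ℝ))
            (𝓝 ((0:ℝ) ^ (q - p) * |gg 0 / fg 0|)) :=
          ((continuousAt_id.pow _).mul
            ((hggan.continuousAt.div hfgan.continuousAt hfg0).abs)).tendsto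
        rw [hzero] at hcont
        exact hcont.mono_left nhdsWithin_le_nhds
      have hev2 : ∀ᶠ ε in 𝓝[>] (0:ℝ),
          ε ^ (q - p) * |gg ε / fg ε| = 1 / |h ε| ∧ h ε ≠ 0 ∧ |h ε| ≤ C := by
        filter_upwards [hIooEv, hfgev'.filter_mono nhdsWithin_le_nhds,
          hggev'.filter_mono nhdsWithin_le_nhds, hggne.filter_mono nhdsWithin_le_nhds,
          hfgne.filter_mono nhdsWithin_le_nhds] with ε hmem hfe hge hgge hfge
        have hε : (0:ℝ) < ε := hmem.1
        have hfne : f ε ≠ 0 := by rw [hfe]; positivity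
        have hgne' : g ε ≠ 0 := hgne ε hmem.1 hmem.2
        have hhne : h ε ≠ 0 := by rw [heq ε hmem.1 hmem.2]; exact div_ne_zero hfne hgne'
        refine ⟨?_, hhne, hb ε hmem.1 hmem.2⟩
        rw [heq ε hmem.1 hmem.2, one_div, abs_div (f ε) (g ε), inv_div, hfe, hge, abs_mul,
          abs_mul, abs_pow, abs_pow, abs_of_pos hε, abs_div (gg ε) (fg ε)]
        rw [show q = (q - p) + p from (Nat.sub_add_cancel hpq.le).symm, pow_add, Nat.add_sub_cancel]
        have h1 : ε ^ p ≠ 0 := by positivity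
        have h2 : |fg ε| ≠ 0 := abs_ne_zero.mpr hfge
        field_simp
      obtain ⟨ε₁, hε₁⟩ := hev2.exists
      have hC : 0 < C := lt_of_lt_of_le (abs_pos.mpr hε₁.2.1) hε₁.2.2
      have hge' : ∀ᶠ ε in 𝓝[>] (0:ℝ), 1 / C ≤ ε ^ (q - p) * |gg ε / fg ε| := by
        filter_upwards [hev2] with ε hε
        rw [hε.1]
        exact one_div_le_one_div_of_le (abs_pos.mpr hε.2.1) hε.2.2
      have := ge_of_tendsto htend0 hge'
      have : (0:ℝ) < 1 / C := by positivity
      linarith [ge_of_tendsto htend0 hge']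

theorem analyticAt_det' {n : Type*} [Fintype n] [DecidableEq n] {M : ℝ → Matrix n n ℝ}
    (h : ∀ i j, AnalyticAt ℝ (fun ε => M ε i j) 0) :
    AnalyticAt ℝ (fun ε => (M ε).det) 0 := by
  have he : (fun ε => (M ε).det) =
      fun ε => ∑ σ : Equiv.Perm n, ((Equiv.Perm.sign σ : ℤ) : ℝ) * ∏ i, M ε (σ i) i := by
    funext ε
    rw [Matrix.det_apply]
    congr 1; funext σ
    rw [Units.smul_def, zsmul_eq_mul]
  rw [he]
  exact Finset.analyticAt_fun_sum _ fun σ _ =>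
    analyticAt_const.mul (Finset.analyticAt_fun_prod _ fun i _ => h _ _)

theorem analyticAt_adj' {n : Type*} [Fintype n] [DecidableEq n] {M : ℝ → Matrix n n ℝ}
    (h : ∀ i j, AnalyticAt ℝ (fun ε => M ε i j) 0) (i j : n) :
    AnalyticAt ℝ (fun ε => (M ε).adjugate i j) 0 := by
  have he : (fun ε => (M ε).adjugate i j) =
      fun ε => ((M ε).updateRow j (Pi.single i 1)).det := by
    funext ε; rw [Matrix.adjugate_apply]
  rw [he]
  apply analyticAt_det'
  intro i' j'
  by_cases hij : i' = j
  · simp only [hij, Matrix.updateRow_apply, if_pos rfl]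
    exact analyticAt_const
  · simp only [Matrix.updateRow_apply, if_neg hij]
    exact h _ _

theorem piFormula {n : Type*} [Fintype n] [DecidableEq n] [Nonempty n] (M : Matrix n n ℝ)
    (hoff : ∀ x y, x ≠ y → 0 ≤ M x y) (hrow : ∀ x, ∑ y, M x y = 0)
    (hirr : ∀ x y, Relation.ReflTransGen (fun a b => 0 < M a b) x y)
    (π : n → ℝ) (hπsum : ∑ x, π x = 1) (hstat : ∀ y, ∑ x, π x * M x y = 0) (x₀ : n) :
    (M.updateCol x₀ (fun _ => 1)).det ≠ 0 ∧
      ∀ x, π x = (M.updateCol x₀ fun _ => 1).adjugate x₀ x /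
        (M.updateCol x₀ fun _ => 1).det := by
  set B := M.updateCol x₀ (fun _ => 1) with hB
  have hdet : B.det ≠ 0 := by
    intro hdet
    obtain ⟨v, hvne, hv⟩ := Matrix.exists_mulVec_eq_zero_iff.mpr hdet
    set v' := Function.update v x₀ 0 with hv'
    have hMv' : ∀ r, M.mulVec v' r = -v x₀ := by
      intro r
      have h0 : ∑ y, B r y * v y = 0 := by
        have := congrFun hv r
        simpa [Matrix.mulVec, dotProduct] using this
      have e1 : ∑ y, B r y * v y = (∑ y ∈ Finset.univ \ {x₀}, M r y * v y) + v x₀ := by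
        rw [Finset.sum_eq_sum_sdiff_singleton_add (Finset.mem_univ x₀) (fun y => B r y * v y)]
        congr 1
        · apply Finset.sum_congr rfl
          intro y hy
          simp only [Finset.mem_sdiff, Finset.mem_singleton] at hy
          rw [hB, Matrix.updateCol_apply, if_neg hy.2]
        · rw [hB, Matrix.updateCol_apply, if_pos rfl, one_mul]
      have e2 : M.mulVec v' r = ∑ y ∈ Finset.univ \ {x₀}, M r y * v y := by
        rw [Matrix.mulVec, dotProduct,
          Finset.sum_eq_sum_sdiff_singleton_add (Finset.mem_univ x₀) (fun y => M r y * v' y)]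
        have : M r x₀ * v' x₀ = 0 := by rw [hv', Function.update_self, mul_zero]
        rw [this, add_zero]
        apply Finset.sum_congr rfl
        intro y hy
        simp only [Finset.mem_sdiff, Finset.mem_singleton] at hy
        rw [hv', Function.update_of_ne hy.2]
      rw [e2]
      linarith [h0, e1.symm.trans h0]
    have hvx₀ : v x₀ = 0 := by
      have hpair : ∑ x, π x * M.mulVec v' x = ∑ y, (∑ x, π x * M x y) * v' y := by
        simp_rw [Matrix.mulVec, dotProduct, Finset.mul_sum, Finset.sum_mul]
        rw [Finset.sum_comm]
        apply Finset.sum_congr rfl; intro y _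
        apply Finset.sum_congr rfl; intro x _
        ring
      have hL : ∑ x, π x * M.mulVec v' x = -v x₀ := by
        simp_rw [hMv']
        rw [← Finset.sum_mul, hπsum, one_mul]
      have hR : ∑ y, (∑ x, π x * M x y) * v' y = 0 := by
        apply Finset.sum_eq_zero; intro y _
        rw [hstat y, zero_mul]
      rw [hL, hR] at hpair
      linarith
    have hveq : v' = v := by
      funext y
      by_cases hy : y = x₀
      · rw [hy, hv', Function.update_self, hvx₀]
      · rw [hv', Function.update_of_ne hy]
    have hMv : M.mulVec v = 0 := by
      funext r
      rw [← hveq]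
      simp [hMv' r, hvx₀]
    have hconst := kernelConst M hoff hrow hirr v hMv
    apply hvne
    funext y
    rw [hconst y x₀, hvx₀]; rfl
  refine ⟨hdet, ?_⟩
  have hu : IsUnit B.det := isUnit_iff_ne_zero.mpr hdet
  have hBv : π ᵥ* B = Pi.single x₀ 1 := by
    funext y
    rw [Matrix.vecMul, dotProduct]
    by_cases hy : y = x₀
    · rw [hy]
      have : ∀ x, π x * B x x₀ = π x := by
        intro x; rw [hB, Matrix.updateCol_apply, if_pos rfl, mul_one]
      rw [Finset.sum_congr rfl fun x _ => this x, hπsum, Pi.single_eq_same]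
    · have : ∀ x, π x * B x y = π x * M x y := by
        intro x; rw [hB, Matrix.updateCol_apply, if_neg hy]
      rw [Finset.sum_congr rfl fun x _ => this x, hstat y, Pi.single_eq_of_ne hy]
  have hπeq : π = Pi.single x₀ 1 ᵥ* B⁻¹ := by
    calc π = π ᵥ* (1 : Matrix n n ℝ) := (Matrix.vecMul_one π).symm
      _ = π ᵥ* (B * B⁻¹) := by rw [Matrix.mul_nonsing_inv B hu]
      _ = (π ᵥ* B) ᵥ* B⁻¹ := by rw [Matrix.vecMul_vecMul]
      _ = Pi.single x₀ 1 ᵥ* B⁻¹ := by rw [hBv]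
  intro x
  have h1 : π x = B⁻¹ x₀ x := by
    rw [hπeq]
    rw [Matrix.vecMul, dotProduct]
    rw [Finset.sum_eq_single x₀]
    · rw [Pi.single_eq_same, one_mul]
    · intro b _ hb; rw [Pi.single_eq_of_ne hb, zero_mul]
    · intro hx; exact absurd (Finset.mem_univ x₀) hx
  rw [h1, Matrix.inv_def, Matrix.smul_apply, Ring.inverse_eq_inv', smul_eq_mul]
  rw [div_eq_inv_mul]

theorem tendsto_det' {n : Type*} [Fintype n] [DecidableEq n] {l : Filter ℝ}
    {M : ℝ → Matrix n n ℝ} {M₀ : Matrix n n ℝ}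
    (h : ∀ i j, Tendsto (fun ε => M ε i j) l (𝓝 (M₀ i j))) :
    Tendsto (fun ε => (M ε).det) l (𝓝 M₀.det) := by
  have he : ∀ (N : Matrix n n ℝ), N.det =
      ∑ σ : Equiv.Perm n, ((Equiv.Perm.sign σ : ℤ) : ℝ) * ∏ i, N (σ i) i := by
    intro N
    rw [Matrix.det_apply]
    congr 1; funext σ
    rw [Units.smul_def, zsmul_eq_mul]
  simp only [he]
  exact tendsto_finset_sum _ fun σ _ =>
    tendsto_const_nhds.mul (tendsto_finset_prod _ fun i _ => h _ _)

theorem tendsto_adj' {n : Type*} [Fintype n] [DecidableEq n] {l : Filter ℝ}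
    {M : ℝ → Matrix n n ℝ} {M₀ : Matrix n n ℝ}
    (h : ∀ i j, Tendsto (fun ε => M ε i j) l (𝓝 (M₀ i j))) (i j : n) :
    Tendsto (fun ε => (M ε).adjugate i j) l (𝓝 (M₀.adjugate i j)) := by
  simp only [Matrix.adjugate_apply]
  apply tendsto_det' (M := fun ε => (M ε).updateRow j (Pi.single i 1))
  intro i' j'
  by_cases hij : i' = j
  · simp only [hij, Matrix.updateRow_apply, if_pos rfl]
    exact tendsto_const_nhds
  · simp only [Matrix.updateRow_apply, if_neg hij]
    exact h _ _

theorem tendsto_inv_entry {n : Type*} [Fintype n] [DecidableEq n] {l : Filter ℝ}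
    {M : ℝ → Matrix n n ℝ} {M₀ : Matrix n n ℝ}
    (h : ∀ i j, Tendsto (fun ε => M ε i j) l (𝓝 (M₀ i j))) (hdet : M₀.det ≠ 0) (i j : n) :
    Tendsto (fun ε => (M ε)⁻¹ i j) l (𝓝 (M₀⁻¹ i j)) := by
  have he : ∀ (N : Matrix n n ℝ), N⁻¹ i j = (N.det)⁻¹ * N.adjugate i j := by
    intro N
    rw [Matrix.inv_def, Matrix.smul_apply, Ring.inverse_eq_inv', smul_eq_mul]
  simp only [he]
  exact ((tendsto_det' h).inv₀ hdet).mul (tendsto_adj' h i j)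

/-- For a real-analytic singular perturbation `Q(ε) = Σ_k ε^k Q⁽ᵏ⁾` of generators on `𝒜 ⊕ 𝒯`,
irreducible for `0 < ε < ε₀`, with 𝒜 absorbing and 𝒯 transient for `Q(0)`, the stationary
distribution `π(ε)` extends continuously to `ε = 0` with limit `[α, 0]`, where `α` is a
probability vector on 𝒜 satisfying `α (A₁ + S₁ (−T₀)⁻¹ R₀) = 0`; moreover, the first-order
coefficient on the transient states is `β⁽¹⁾ = α S₁ (−T₀)⁻¹`, i.e.
`π_t(ε)/ε → (α S₁ (−T₀)⁻¹)_t` as `ε → 0⁺` for each `t ∈ 𝒯`. -/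
theorem stmt10 {A T : Type*} [Fintype A] [Fintype T] [DecidableEq A] [DecidableEq T]
    [Nonempty A] [Nonempty T]
    (ε₀ : ℝ) (hε₀ : 0 < ε₀)
    (Q : ℝ → Matrix (A ⊕ T) (A ⊕ T) ℝ)
    (Qk : ℕ → Matrix (A ⊕ T) (A ⊕ T) ℝ)
    (hseries : ∀ ε : ℝ, 0 ≤ ε → ε < ε₀ → ∀ x y,
      HasSum (fun k : ℕ => ε ^ k * Qk k x y) (Q ε x y))
    (hQ0 : Qk 0 = Q 0)
    (hQmat : ∀ ε : ℝ, 0 < ε → ε < ε₀ →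
      (∀ x y, x ≠ y → 0 ≤ Q ε x y) ∧ ∀ x, ∑ y, Q ε x y = 0)
    (hirr : ∀ ε : ℝ, 0 < ε → ε < ε₀ →
      ∀ x y : A ⊕ T, Relation.ReflTransGen (fun a b => 0 < Q ε a b) x y)
    (hQ0mat : (∀ x y, x ≠ y → 0 ≤ Q 0 x y) ∧ ∀ x, ∑ y, Q 0 x y = 0)
    (habs : ∀ a : A, ∀ y, Q 0 (Sum.inl a) y = 0)
    (htrans : ∀ t : T, ∃ a : A,
      Relation.ReflTransGen (fun u v => 0 < Q 0 u v) (Sum.inr t) (Sum.inl a))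
    (hT0 : IsUnit (Q 0).toBlocks₂₂)
    (π : ℝ → (A ⊕ T) → ℝ)
    (hπ : ∀ ε : ℝ, 0 < ε → ε < ε₀ →
      (∀ x, 0 ≤ π ε x) ∧ (∑ x, π ε x = 1) ∧
      ∀ y, ∑ x, π ε x * Q ε x y = 0) :
    ∃ α : A → ℝ,
      (∀ a, 0 ≤ α a) ∧ (∑ a, α a = 1) ∧
      α ᵥ* QAmat (Q 0) (Qk 1) = 0 ∧
      (∀ a : A, Tendsto (fun ε => π ε (Sum.inl a)) (𝓝[>] (0 : ℝ)) (𝓝 (α a))) ∧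
      (∀ t : T, Tendsto (fun ε => π ε (Sum.inr t)) (𝓝[>] (0 : ℝ)) (𝓝 0)) ∧
      ∀ t : T, Tendsto (fun ε => π ε (Sum.inr t) / ε) (𝓝[>] (0 : ℝ))
        (𝓝 ((α ᵥ* ((Qk 1).toBlocks₁₂ * (-(Q 0).toBlocks₂₂)⁻¹)) t)) := by
  classical
  -- analytic extensions of the entries
  have hFex : ∀ x y : A ⊕ T, ∃ F : ℝ → ℝ, AnalyticAt ℝ F 0 ∧
      (∀ ε, 0 ≤ ε → ε < ε₀ → F ε = Q ε x y) ∧ F 0 = Qk 0 x y ∧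
      HasDerivAt F (Qk 1 x y) 0 :=
    fun x y => seriesLemma hε₀ (fun ε h1 h2 => hseries ε h1 h2 x y)
  choose F hFan hFeq hF0 hFd using hFex
  have hIooEv : ∀ᶠ ε in 𝓝[>] (0:ℝ), ε ∈ Set.Ioo (0:ℝ) ε₀ :=
    eventually_of_mem (Ioo_mem_nhdsGT_of_mem ⟨le_rfl, hε₀⟩) fun x hx => hx
  have hQcont : ∀ x y, Tendsto (fun ε => Q ε x y) (𝓝[>] (0:ℝ)) (𝓝 (Q 0 x y)) := by
    intro x y
    have h1 : Tendsto (F x y) (𝓝[>] (0:ℝ)) (𝓝 (Q 0 x y)) := by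
      have h2 := (hFan x y).continuousAt.tendsto.mono_left
        (nhdsWithin_le_nhds (s := Set.Ioi (0:ℝ)))
      rwa [hF0, hQ0] at h2
    refine h1.congr' ?_
    filter_upwards [hIooEv] with ε hε using hFeq x y ε hε.1.le hε.2
  have hQslope : ∀ x y, Q 0 x y = 0 →
      Tendsto (fun ε => Q ε x y / ε) (𝓝[>] (0:ℝ)) (𝓝 (Qk 1 x y)) := by
    intro x y h0
    have hmono : 𝓝[>] (0:ℝ) ≤ 𝓝[≠] (0:ℝ) :=
      nhdsWithin_mono 0 (fun z hz => ne_of_gt hz)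
    have hs := (hasDerivAt_iff_tendsto_slope.mp (hFd x y)).mono_left hmono
    refine hs.congr' ?_
    filter_upwards [hIooEv] with ε hε
    rw [slope_def_field, hF0, hQ0, h0, sub_zero, sub_zero, hFeq x y ε hε.1.le hε.2]
  set x₀ : A ⊕ T := Sum.inl (Classical.arbitrary A) with hx₀
  set Bt : ℝ → Matrix (A ⊕ T) (A ⊕ T) ℝ :=
    fun ε => (Matrix.of fun x y => F x y ε).updateCol x₀ (fun _ => 1) with hBt
  have hBent : ∀ i j, AnalyticAt ℝ (fun ε => Bt ε i j) 0 := by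
    intro i j
    by_cases hj : j = x₀
    · simp only [hBt, Matrix.updateCol_apply, hj, if_pos rfl]
      exact analyticAt_const
    · simp only [hBt, Matrix.updateCol_apply, if_neg hj, Matrix.of_apply]
      exact hFan i j
  have hgan : AnalyticAt ℝ (fun ε => (Bt ε).det) 0 := analyticAt_det' hBent
  have hfan : ∀ x, AnalyticAt ℝ (fun ε => (Bt ε).adjugate x₀ x) 0 :=
    fun x => analyticAt_adj' hBent x₀ x
  have hBeq : ∀ ε : ℝ, 0 < ε → ε < ε₀ → Bt ε = (Q ε).updateCol x₀ (fun _ => 1) := by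
    intro ε h1 h2
    funext i j
    simp only [hBt]
    by_cases hj : j = x₀
    · simp [Matrix.updateCol_apply, hj]
    · simp [Matrix.updateCol_apply, hj, hFeq i j ε h1.le h2]
  have hform : ∀ ε : ℝ, 0 < ε → ε < ε₀ → (Bt ε).det ≠ 0 ∧
      ∀ x, π ε x = (Bt ε).adjugate x₀ x / (Bt ε).det := by
    intro ε h1 h2
    obtain ⟨hoff, hrow⟩ := hQmat ε h1 h2
    obtain ⟨hpos, hsum, hstat⟩ := hπ ε h1 h2
    have hpf := piFormula (Q ε) hoff hrow (hirr ε h1 h2) (π ε) hsum hstat x₀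
    rw [hBeq ε h1 h2]
    exact hpf
  have hbound : ∀ x, ∀ ε : ℝ, 0 < ε → ε < ε₀ → |π ε x| ≤ 1 := by
    intro x ε h1 h2
    obtain ⟨hpos, hsum, -⟩ := hπ ε h1 h2
    rw [abs_of_nonneg (hpos x)]
    calc π ε x ≤ ∑ z, π ε z := Finset.single_le_sum (fun z _ => hpos z) (Finset.mem_univ x)
      _ = 1 := hsum
  have hLim : ∀ x, ∃ L, Tendsto (fun ε => π ε x) (𝓝[>] (0:ℝ)) (𝓝 L) := fun x =>
    ratioLimit hε₀ (hfan x) hgan (fun ε h1 h2 => (hform ε h1 h2).1)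
      (fun ε h1 h2 => (hform ε h1 h2).2 x) (hbound x)
  choose L hL using hLim
  -- block matrices
  set U0 : Matrix T T ℝ := -(Q 0).toBlocks₂₂ with hU0
  set Um : ℝ → Matrix T T ℝ := fun ε => -(Q ε).toBlocks₂₂ with hUm
  have hUment : ∀ ε t t', Um ε t t' = -(Q ε (Sum.inr t) (Sum.inr t')) := fun _ _ _ => rfl
  have hU0ent : ∀ t t', U0 t t' = -(Q 0 (Sum.inr t) (Sum.inr t')) := fun _ _ => rfl
  have hUtend : ∀ t t', Tendsto (fun ε => Um ε t t') (𝓝[>] (0:ℝ)) (𝓝 (U0 t t')) := by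
    intro t t'
    simp only [hUment, hU0ent]
    exact (hQcont (Sum.inr t) (Sum.inr t')).neg
  have hU0unit : IsUnit U0 := by rw [hU0]; exact hT0.neg
  have hU0det : U0.det ≠ 0 :=
    isUnit_iff_ne_zero.mp ((Matrix.isUnit_iff_isUnit_det U0).mp hU0unit)
  have hUdet : Tendsto (fun ε => (Um ε).det) (𝓝[>] (0:ℝ)) (𝓝 U0.det) := tendsto_det' hUtend
  have hUinv : ∀ t' t, Tendsto (fun ε => (Um ε)⁻¹ t' t) (𝓝[>] (0:ℝ)) (𝓝 (U0⁻¹ t' t)) :=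
    tendsto_inv_entry hUtend hU0det
  have hUevent : ∀ᶠ ε in 𝓝[>] (0:ℝ), (Um ε).det ≠ 0 := hUdet.eventually_ne hU0det
  -- β formula
  have hβ : ∀ᶠ ε in 𝓝[>] (0:ℝ), ∀ t, π ε (Sum.inr t) =
      ∑ a, π ε (Sum.inl a) * ∑ t', Q ε (Sum.inl a) (Sum.inr t') * (Um ε)⁻¹ t' t := by
    filter_upwards [hIooEv, hUevent] with ε hε hdet
    obtain ⟨-, -, hstat⟩ := hπ ε hε.1 hε.2
    have hstat2 : ∀ t, (∑ a, π ε (Sum.inl a) * Q ε (Sum.inl a) (Sum.inr t)) +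
        ∑ t', π ε (Sum.inr t') * Q ε (Sum.inr t') (Sum.inr t) = 0 := by
      intro t
      have hh := hstat (Sum.inr t)
      rwa [Fintype.sum_sum_type] at hh
    have h1 : (fun t => π ε (Sum.inr t)) ᵥ* Um ε =
        fun t => ∑ a, π ε (Sum.inl a) * Q ε (Sum.inl a) (Sum.inr t) := by
      funext t
      rw [Matrix.vecMul, dotProduct]
      have he : ∀ t', π ε (Sum.inr t') * Um ε t' t =
          -(π ε (Sum.inr t') * Q ε (Sum.inr t') (Sum.inr t)) := by
        intro t'; rw [hUment]; ring
      rw [Finset.sum_congr rfl fun t' _ => he t']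
      rw [Finset.sum_neg_distrib]
      linarith [hstat2 t]
    have hu : IsUnit (Um ε).det := isUnit_iff_ne_zero.mpr hdet
    have h2 : (fun t => π ε (Sum.inr t)) =
        (fun t => ∑ a, π ε (Sum.inl a) * Q ε (Sum.inl a) (Sum.inr t)) ᵥ* (Um ε)⁻¹ := by
      calc (fun t => π ε (Sum.inr t))
          = (fun t => π ε (Sum.inr t)) ᵥ* (1 : Matrix T T ℝ) :=
            (Matrix.vecMul_one _).symm
        _ = (fun t => π ε (Sum.inr t)) ᵥ* (Um ε * (Um ε)⁻¹) := by
            rw [Matrix.mul_nonsing_inv _ hu]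
        _ = ((fun t => π ε (Sum.inr t)) ᵥ* Um ε) ᵥ* (Um ε)⁻¹ := by
            rw [Matrix.vecMul_vecMul]
        _ = _ := by rw [h1]
    intro t
    have h3 := congrFun h2 t
    rw [h3, Matrix.vecMul, dotProduct]
    simp_rw [Finset.sum_mul]
    rw [Finset.sum_comm]
    simp_rw [Finset.mul_sum, mul_assoc]
  -- conclusion 6
  set γ : T → ℝ := fun t => ∑ a, L (Sum.inl a) *
    ∑ t', Qk 1 (Sum.inl a) (Sum.inr t') * U0⁻¹ t' t with hγ
  have hconcl6 : ∀ t, Tendsto (fun ε => π ε (Sum.inr t) / ε) (𝓝[>] (0:ℝ)) (𝓝 (γ t)) := by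
    intro t
    have htend : Tendsto (fun ε => ∑ a, π ε (Sum.inl a) *
        ∑ t', (Q ε (Sum.inl a) (Sum.inr t') / ε) * (Um ε)⁻¹ t' t) (𝓝[>] (0:ℝ)) (𝓝 (γ t)) := by
      apply tendsto_finset_sum
      intro a _
      exact (hL (Sum.inl a)).mul (tendsto_finset_sum _ fun t' _ =>
        (hQslope _ _ (habs a (Sum.inr t'))).mul (hUinv t' t))
    refine htend.congr' ?_
    filter_upwards [hβ, hIooEv] with ε hb hε
    rw [hb t, Finset.sum_div]
    apply Finset.sum_congr rfl
    intro a _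
    rw [mul_div_assoc]
    congr 1
    rw [Finset.sum_div]
    apply Finset.sum_congr rfl
    intro t' _
    rw [mul_div_right_comm]
  -- conclusion 5
  have hconcl5 : ∀ t, Tendsto (fun ε => π ε (Sum.inr t)) (𝓝[>] (0:ℝ)) (𝓝 0) := by
    intro t
    have hid : Tendsto (fun ε : ℝ => ε) (𝓝[>] (0:ℝ)) (𝓝 0) :=
      tendsto_id'.mpr nhdsWithin_le_nhds
    have hmul := hid.mul (hconcl6 t)
    rw [zero_mul] at hmul
    refine hmul.congr' ?_
    filter_upwards [hIooEv] with ε hε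
    rw [mul_comm, div_mul_cancel₀ _ (ne_of_gt hε.1)]
  -- sum of α
  have hLr0 : ∀ t, L (Sum.inr t) = 0 := fun t => tendsto_nhds_unique (hL _) (hconcl5 t)
  have hsumα : ∑ a, L (Sum.inl a) = 1 := by
    have h1 : Tendsto (fun ε => ∑ x, π ε x) (𝓝[>] (0:ℝ)) (𝓝 (∑ x, L x)) :=
      tendsto_finset_sum _ fun x _ => hL x
    have h2 : ∀ᶠ ε in 𝓝[>] (0:ℝ), ∑ x, π ε x = 1 := by
      filter_upwards [hIooEv] with ε hε using (hπ ε hε.1 hε.2).2.1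
    have h3 : Tendsto (fun ε => ∑ x, π ε x) (𝓝[>] (0:ℝ)) (𝓝 1) := by
      rw [tendsto_congr' h2]; exact tendsto_const_nhds
    have h4 := tendsto_nhds_unique h1 h3
    rw [Fintype.sum_sum_type] at h4
    simpa [hLr0] using h4
  -- α nonneg
  have hαpos : ∀ a, 0 ≤ L (Sum.inl a) := by
    intro a
    refine ge_of_tendsto (hL (Sum.inl a)) ?_
    filter_upwards [hIooEv] with ε hε using (hπ ε hε.1 hε.2).1 _
  -- identification of γ with the stated limit
  have hγeq : ∀ t, γ t = ((fun a => L (Sum.inl a)) ᵥ*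
      ((Qk 1).toBlocks₁₂ * (-(Q 0).toBlocks₂₂)⁻¹)) t := by
    intro t
    rw [hγ]
    simp only [Matrix.vecMul, dotProduct, Matrix.mul_apply]
    rfl
  -- conclusion 3
  have hconcl3 : (fun a => L (Sum.inl a)) ᵥ* QAmat (Q 0) (Qk 1) = 0 := by
    funext a'
    show ((fun a => L (Sum.inl a)) ᵥ* QAmat (Q 0) (Qk 1)) a' = 0
    have htend : Tendsto (fun ε =>
        (∑ a, π ε (Sum.inl a) * (Q ε (Sum.inl a) (Sum.inl a') / ε)) +
        ∑ t, (π ε (Sum.inr t) / ε) * Q ε (Sum.inr t) (Sum.inl a')) (𝓝[>] (0:ℝ))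
        (𝓝 ((∑ a, L (Sum.inl a) * Qk 1 (Sum.inl a) (Sum.inl a')) +
          ∑ t, γ t * Q 0 (Sum.inr t) (Sum.inl a'))) :=
      (tendsto_finset_sum _ fun a _ => (hL _).mul (hQslope _ _ (habs a _))).add
        (tendsto_finset_sum _ fun t _ => (hconcl6 t).mul (hQcont _ _))
    have hzero : ∀ᶠ ε in 𝓝[>] (0:ℝ),
        (∑ a, π ε (Sum.inl a) * (Q ε (Sum.inl a) (Sum.inl a') / ε)) +
        ∑ t, (π ε (Sum.inr t) / ε) * Q ε (Sum.inr t) (Sum.inl a') = 0 := by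
      filter_upwards [hIooEv] with ε hε
      have hstat := (hπ ε hε.1 hε.2).2.2 (Sum.inl a')
      rw [Fintype.sum_sum_type] at hstat
      have e1 : (∑ a, π ε (Sum.inl a) * (Q ε (Sum.inl a) (Sum.inl a') / ε)) =
          (∑ a, π ε (Sum.inl a) * Q ε (Sum.inl a) (Sum.inl a')) / ε := by
        rw [Finset.sum_div]
        exact Finset.sum_congr rfl fun a _ => (mul_div_assoc _ _ _).symm
      have e2 : (∑ t, (π ε (Sum.inr t) / ε) * Q ε (Sum.inr t) (Sum.inl a')) =
          (∑ t, π ε (Sum.inr t) * Q ε (Sum.inr t) (Sum.inl a')) / ε := by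
        rw [Finset.sum_div]
        exact Finset.sum_congr rfl fun t _ => by rw [mul_div_right_comm]
      rw [e1, e2, ← add_div, hstat, zero_div]
    have hV0 : (∑ a, L (Sum.inl a) * Qk 1 (Sum.inl a) (Sum.inl a')) +
        ∑ t, γ t * Q 0 (Sum.inr t) (Sum.inl a') = 0 :=
      tendsto_nhds_unique ((tendsto_congr' hzero).mp htend) tendsto_const_nhds
    -- algebra
    have halg : ((fun a => L (Sum.inl a)) ᵥ* QAmat (Q 0) (Qk 1)) a' =
        (∑ a, L (Sum.inl a) * Qk 1 (Sum.inl a) (Sum.inl a')) +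
        ∑ t, γ t * Q 0 (Sum.inr t) (Sum.inl a') := by
      simp only [QAmat, Matrix.vecMul, dotProduct, Matrix.add_apply, Matrix.mul_apply,
        hγ, Matrix.toBlocks₁₁, Matrix.toBlocks₁₂, Matrix.toBlocks₂₁,
        Matrix.of_apply, hU0, mul_add, Finset.sum_add_distrib]
      congr 1
      simp_rw [Finset.mul_sum]
      rw [Finset.sum_comm]
      simp_rw [Finset.sum_mul, mul_assoc, Finset.mul_sum]
    rw [halg, hV0]
  refine ⟨fun a => L (Sum.inl a), hαpos, hsumα, hconcl3, fun a => hL (Sum.inl a), hconcl5, ?_⟩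
  intro t
  rw [← hγeq t]
  exact hconcl6 t
end

section
/- Under the assumptions that Q(0) has absorbing states 𝒜 and transient states 𝒯, and that the Q-matrix Q_𝒜 = A₁ + S₁(−T₀)⁻¹R₀ has a single recurrent class, the vector α with π(0) = [α, 0] is the unique probability vector on 𝒜 satisfying α Q_𝒜 = 0. -/
open Matrix Filter Topology

def LeadsTo {V : Type*} (M : Matrix V V ℝ) (x y : V) : Prop :=
  Relation.ReflTransGen (fun a b => 0 < M a b) x y

/-- A recurrent class: a nonempty closed communicating class. -/
def IsRecurrentClass {V : Type*} (M : Matrix V V ℝ) (C : Set V) : Prop :=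
  C.Nonempty ∧ (∀ x ∈ C, ∀ y ∈ C, LeadsTo M x y) ∧ (∀ x ∈ C, ∀ y, LeadsTo M x y → y ∈ C)

/-! ### Auxiliary lemmas -/

section SeriesAux

lemma aux_coeff_bound (c : ℕ → ℝ) (r : ℝ) (hr : 0 < r) (h : Summable fun k => r ^ k * c k) :
    ∃ C : ℝ, 0 ≤ C ∧ ∀ k, |c k| ≤ C / r ^ k := by
  have h0 := h.tendsto_atTop_zero
  have hb : BddAbove (Set.range fun k => |r ^ k * c k|) :=
    (h0.abs.bddAbove_range)
  obtain ⟨C, hC⟩ := hb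
  refine ⟨C, le_trans (abs_nonneg _) (hC ⟨0, rfl⟩), fun k => ?_⟩
  have h2 : |r ^ k * c k| ≤ C := hC ⟨k, rfl⟩
  rw [abs_mul, abs_pow, abs_of_pos hr] at h2
  rw [le_div_iff₀ (pow_pos hr k)]
  linarith [h2]

/-- First-order limit of a power series convergent on `[0, ε₀)`. -/
lemma aux_tendsto_deriv_coeff (c : ℕ → ℝ) (ε₀ : ℝ) (hε₀ : 0 < ε₀) (f : ℝ → ℝ)
    (hf : ∀ ε : ℝ, 0 ≤ ε → ε < ε₀ → HasSum (fun k : ℕ => ε ^ k * c k) (f ε)) :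
    Tendsto (fun ε => (f ε - c 0) / ε) (𝓝[>] (0 : ℝ)) (𝓝 (c 1)) := by
  set r := ε₀ / 2 with hrdef
  have hr : 0 < r := by positivity
  obtain ⟨C, hC0, hC⟩ := aux_coeff_bound c r hr
    (hf r hr.le (by rw [hrdef]; linarith)).summable
  have key : ∀ ε : ℝ, 0 < ε → ε < r / 2 → |(f ε - c 0) / ε - c 1| ≤ (2 * C / r ^ 2) * ε := by
    intro ε hε hεr
    have hεlt : ε < ε₀ := by linarith
    have hs := hf ε hε.le hεlt
    have hs2 : HasSum (fun n : ℕ => ε ^ (n + 2) * c (n + 2))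
        (f ε - ∑ i ∈ Finset.range 2, ε ^ i * c i) :=
      ((hasSum_nat_add_iff' 2).2 hs)
    have hsum2 : ∑ i ∈ Finset.range 2, ε ^ i * c i = c 0 + ε * c 1 := by
      simp [Finset.sum_range_succ]
    rw [hsum2] at hs2
    have hmaj : ∀ n : ℕ, |ε ^ (n + 2) * c (n + 2)| ≤ (C * (ε / r) ^ 2) * (1 / 2) ^ n := by
      intro n
      rw [abs_mul, abs_pow, abs_of_pos hε]
      calc ε ^ (n + 2) * |c (n + 2)| ≤ ε ^ (n + 2) * (C / r ^ (n + 2)) := by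
            exact mul_le_mul_of_nonneg_left (hC _) (by positivity)
        _ = C * (ε / r) ^ (n + 2) := by
            rw [mul_div_left_comm, ← div_pow]
        _ ≤ (C * (ε / r) ^ 2) * (1 / 2) ^ n := by
            rw [pow_add, mul_comm ((ε/r)^n)]
            rw [mul_assoc]
            refine mul_le_mul_of_nonneg_left ?_ hC0
            refine mul_le_mul_of_nonneg_left ?_ (by positivity)
            exact pow_le_pow_left₀ (by positivity) (by rw [div_le_div_iff₀ hr (by norm_num)]; linarith) n
    have hmajsum : HasSum (fun n : ℕ => (C * (ε / r) ^ 2) * (1 / 2) ^ n)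
        ((C * (ε / r) ^ 2) * 2) := by
      have := (hasSum_geometric_of_lt_one (by norm_num : (0:ℝ) ≤ 1/2) (by norm_num)).mul_left
        (C * (ε / r) ^ 2)
      have h2 : (C * (ε / r) ^ 2) * 2 = C * (ε / r) ^ 2 * (1 - 1/2)⁻¹ := by norm_num
      rw [h2]; exact this
    have habs : |f ε - (c 0 + ε * c 1)| ≤ (C * (ε / r) ^ 2) * 2 := by
      have h1 : ‖f ε - (c 0 + ε * c 1)‖ ≤ ∑' n, ‖ε ^ (n + 2) * c (n + 2)‖ := by
        rw [← hs2.tsum_eq]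
        exact norm_tsum_le_tsum_norm (by
          refine Summable.of_nonneg_of_le (fun n => norm_nonneg _) (fun n => hmaj n) hmajsum.summable)
      refine h1.trans ?_
      rw [← hmajsum.tsum_eq]
      exact Summable.tsum_le_tsum hmaj (by
        refine Summable.of_nonneg_of_le (fun n => norm_nonneg _) (fun n => hmaj n) hmajsum.summable)
        hmajsum.summable
    have : (f ε - c 0) / ε - c 1 = (f ε - (c 0 + ε * c 1)) / ε := by
      field_simp
      ring
    rw [this, abs_div, abs_of_pos hε, div_le_iff₀ hε]
    calc |f ε - (c 0 + ε * c 1)| ≤ (C * (ε / r) ^ 2) * 2 := habs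
      _ = (2 * C / r ^ 2) * ε * ε := by field_simp
  have h0 : Tendsto (fun ε : ℝ => (2 * C / r ^ 2) * ε) (𝓝[>] (0:ℝ)) (𝓝 0) := by
    have : Tendsto (fun ε : ℝ => (2 * C / r ^ 2) * ε) (𝓝 (0:ℝ)) (𝓝 ((2 * C / r ^ 2) * 0)) :=
      (tendsto_id.const_mul _)
    rw [mul_zero] at this
    exact this.mono_left nhdsWithin_le_nhds
  have hev : ∀ᶠ ε in 𝓝[>] (0:ℝ), |(f ε - c 0) / ε - c 1| ≤ (2 * C / r ^ 2) * ε := by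
    filter_upwards [self_mem_nhdsWithin,
      Ioo_mem_nhdsGT_of_mem (by constructor <;> [rfl; positivity] : (0:ℝ) ∈ Set.Ico 0 (r/2))]
      with ε hε hε2
    exact key ε hε hε2.2
  have hsq : Tendsto (fun ε => (f ε - c 0) / ε - c 1) (𝓝[>] (0:ℝ)) (𝓝 0) :=
    squeeze_zero_norm' (by simpa [Real.norm_eq_abs] using hev) h0
  have h2 : Tendsto (fun ε => ((f ε - c 0) / ε - c 1) + c 1) (𝓝[>] (0:ℝ)) (𝓝 (0 + c 1)) :=
    hsq.add tendsto_const_nhds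
  simpa using h2

lemma aux_tendsto_coeff_zero (c : ℕ → ℝ) (ε₀ : ℝ) (hε₀ : 0 < ε₀) (f : ℝ → ℝ)
    (hf : ∀ ε : ℝ, 0 ≤ ε → ε < ε₀ → HasSum (fun k : ℕ => ε ^ k * c k) (f ε)) :
    Tendsto f (𝓝[>] (0 : ℝ)) (𝓝 (c 0)) := by
  have h1 := aux_tendsto_deriv_coeff c ε₀ hε₀ f hf
  have h2 : Tendsto (fun ε : ℝ => ε * ((f ε - c 0) / ε) + c 0) (𝓝[>] (0:ℝ))
      (𝓝 (0 * c 1 + c 0)) := by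
    exact ((tendsto_id.mono_left nhdsWithin_le_nhds).mul h1).add tendsto_const_nhds
  rw [zero_mul, zero_add] at h2
  refine h2.congr' ?_
  filter_upwards [self_mem_nhdsWithin] with ε (hε : 0 < ε)
  field_simp
  ring

end SeriesAux

section MatLim
variable {ι : Type*} {n : Type*} [Fintype n] [DecidableEq n] {l : Filter ι}

lemma aux_tendsto_det_of_entries {M : ι → Matrix n n ℝ} {N : Matrix n n ℝ}
    (h : ∀ i j, Tendsto (fun x => M x i j) l (𝓝 (N i j))) :
    Tendsto (fun x => (M x).det) l (𝓝 N.det) := by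
  simp only [Matrix.det_apply]
  refine tendsto_finset_sum _ fun σ _ => ?_
  have hp : Tendsto (fun x => ∏ i, M x (σ i) i) l (𝓝 (∏ i, N (σ i) i)) :=
    tendsto_finset_prod _ fun i _ => h (σ i) i
  exact hp.const_smul _

lemma aux_tendsto_inv_entries {M : ι → Matrix n n ℝ} {N : Matrix n n ℝ}
    (h : ∀ i j, Tendsto (fun x => M x i j) l (𝓝 (N i j)))
    (hN : IsUnit N.det) (i j : n) :
    Tendsto (fun x => (M x)⁻¹ i j) l (𝓝 (N⁻¹ i j)) := by
  have hdet := aux_tendsto_det_of_entries h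
  have hadj : Tendsto (fun x => (M x).adjugate i j) l (𝓝 (N.adjugate i j)) := by
    simp only [Matrix.adjugate_apply]
    refine aux_tendsto_det_of_entries fun a b => ?_
    by_cases hab : a = j
    · subst hab
      simp only [Matrix.updateRow_self]
      exact tendsto_const_nhds
    · simp only [Matrix.updateRow_ne hab]
      exact h a b
  have hd0 : N.det ≠ 0 := hN.ne_zero
  have hinvdet : Tendsto (fun x => ((M x).det)⁻¹) l (𝓝 (N.det)⁻¹) := hdet.inv₀ hd0
  have hmul := hinvdet.mul hadj
  have hev : ∀ᶠ x in l, ((M x).det)⁻¹ * (M x).adjugate i j = (M x)⁻¹ i j := by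
    have : ∀ᶠ x in l, (M x).det ≠ 0 := hdet (isOpen_ne.mem_nhds hd0)
    filter_upwards [this] with x hx
    rw [Matrix.inv_def, Matrix.smul_apply, Ring.inverse_eq_inv', smul_eq_mul]
  have : N⁻¹ i j = (N.det)⁻¹ * N.adjugate i j := by
    rw [Matrix.inv_def, Matrix.smul_apply, Ring.inverse_eq_inv', smul_eq_mul]
  rw [this]
  exact hmul.congr' hev

lemma aux_eventually_det_isUnit {M : ι → Matrix n n ℝ} {N : Matrix n n ℝ}
    (h : ∀ i j, Tendsto (fun x => M x i j) l (𝓝 (N i j))) (hN : IsUnit N.det) :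
    ∀ᶠ x in l, IsUnit (M x).det := by
  have hdet := aux_tendsto_det_of_entries h
  have : ∀ᶠ x in l, (M x).det ≠ 0 := hdet (isOpen_ne.mem_nhds hN.ne_zero)
  filter_upwards [this] with x hx using isUnit_iff_ne_zero.2 hx

end MatLim

section MMat
variable {T A : Type*} [Fintype T] [DecidableEq T] [Fintype A]

lemma aux_mmatrix_mulVec_nonneg (Tm : Matrix T T ℝ) (Rm : Matrix T A ℝ)
    (hToff : ∀ t u, t ≠ u → 0 ≤ Tm t u)
    (hR : ∀ t a, 0 ≤ Rm t a)
    (hrow : ∀ t, (∑ u, Tm t u) + ∑ a, Rm t a = 0)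
    (hreach : ∀ t : T, ∃ u a, Relation.ReflTransGen (fun v w => 0 < Tm v w) t u ∧ 0 < Rm u a)
    (x b : T → ℝ) (hb : ∀ t, 0 ≤ b t) (hx : (-Tm) *ᵥ x = b) :
    ∀ t, 0 ≤ x t := by
  by_contra hcon
  push_neg at hcon
  obtain ⟨t₀, ht₀⟩ := hcon
  obtain ⟨tm, -, htm⟩ := Finset.exists_min_image Finset.univ x ⟨t₀, Finset.mem_univ t₀⟩
  set m := x tm with hm
  have hmneg : m < 0 := lt_of_le_of_lt (htm t₀ (Finset.mem_univ _)) ht₀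
  have hmin : ∀ u, m ≤ x u := fun u => htm u (Finset.mem_univ u)
  have key : ∀ t, x t = m → (∀ u, 0 < Tm t u → x u = m) ∧ ∀ a, Rm t a = 0 := by
    intro t hxt
    have hbt : 0 ≤ b t := hb t
    have hbt' : b t = ∑ u, (-Tm) t u * x u := by rw [← hx]; rfl
    have hterm : ∀ u ∈ Finset.univ.erase t, (-Tm) t u * x u ≤ (-Tm) t u * m := by
      intro u hu
      have hut : u ≠ t := (Finset.mem_erase.1 hu).1
      have h1 : 0 ≤ Tm t u := hToff t u (Ne.symm hut)
      simp only [Matrix.neg_apply]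
      rw [neg_mul, neg_mul, neg_le_neg_iff]
      exact mul_le_mul_of_nonneg_left (hmin u) h1
    have hsplit : ∀ y : T → ℝ, ∑ u, (-Tm) t u * y u
        = (-Tm) t t * y t + ∑ u ∈ Finset.univ.erase t, (-Tm) t u * y u := fun y =>
      (Finset.add_sum_erase _ _ (Finset.mem_univ t)).symm
    have hrho : ∑ u, (-Tm) t u * m = m * ∑ a, Rm t a := by
      simp only [Matrix.neg_apply, neg_mul]
      have h2 : ∑ u : T, -(Tm t u * m) = -((∑ u, Tm t u) * m) := by
        rw [Finset.sum_neg_distrib, Finset.sum_mul]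
      rw [h2]
      have h3 : (∑ u, Tm t u) = -∑ a, Rm t a := by linarith [hrow t]
      rw [h3]; ring
    have hrho0 : 0 ≤ ∑ a, Rm t a := Finset.sum_nonneg fun a _ => hR t a
    have hub : b t ≤ m * ∑ a, Rm t a := by
      rw [hbt', hsplit x, hxt, ← hrho, hsplit (fun _ => m)]
      exact add_le_add le_rfl (Finset.sum_le_sum hterm)
    have hmrho : m * ∑ a, Rm t a ≤ 0 := mul_nonpos_of_nonpos_of_nonneg hmneg.le hrho0
    have hbt0 : b t = 0 := le_antisymm (hub.trans hmrho) hbt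
    have hrho00 : ∑ a, Rm t a = 0 := by
      rcases (mul_nonpos_iff.1 hmrho) with ⟨h1, h2⟩ | ⟨h1, h2⟩
      · linarith
      · have : m * ∑ a, Rm t a = 0 := le_antisymm hmrho (by rw [hbt0] at hub; linarith)
        exact (mul_eq_zero.1 this).resolve_left (ne_of_lt hmneg)
    have hR0 : ∀ a, Rm t a = 0 := fun a =>
      (Finset.sum_eq_zero_iff_of_nonneg (fun a _ => hR t a)).1 hrho00 a (Finset.mem_univ a)
    have hsumeq : ∑ u ∈ Finset.univ.erase t, (-Tm) t u * x u
        = ∑ u ∈ Finset.univ.erase t, (-Tm) t u * m := by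
      have e1 : b t = m * ∑ a, Rm t a := by rw [hbt0, hrho00, mul_zero]
      rw [hbt', hsplit x, hxt, ← hrho, hsplit (fun _ => m)] at e1
      exact add_left_cancel e1
    have htermeq := (Finset.sum_eq_sum_iff_of_le hterm).1 hsumeq
    refine ⟨fun u hu => ?_, hR0⟩
    by_cases hut : u = t
    · rw [hut]; exact hxt
    · have := htermeq u (Finset.mem_erase.2 ⟨hut, Finset.mem_univ u⟩)
      simp only [Matrix.neg_apply, neg_mul, neg_inj] at this
      exact mul_left_cancel₀ (ne_of_gt hu) this
  have prop : ∀ u, Relation.ReflTransGen (fun v w => 0 < Tm v w) tm u → x u = m := by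
    intro u h
    induction h with
    | refl => rfl
    | tail _ hstep ih => exact (key _ ih).1 _ hstep
  obtain ⟨u, a, hreach', hRa⟩ := hreach tm
  have := (key u (prop u hreach')).2 a
  exact absurd this (ne_of_gt hRa)

lemma aux_mmatrix_inv_nonneg (Tm : Matrix T T ℝ) (Rm : Matrix T A ℝ)
    (hToff : ∀ t u, t ≠ u → 0 ≤ Tm t u)
    (hR : ∀ t a, 0 ≤ Rm t a)
    (hrow : ∀ t, (∑ u, Tm t u) + ∑ a, Rm t a = 0)
    (hreach : ∀ t : T, ∃ u a, Relation.ReflTransGen (fun v w => 0 < Tm v w) t u ∧ 0 < Rm u a)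
    (hTunit : IsUnit Tm) :
    ∀ t s, 0 ≤ (-Tm)⁻¹ t s := by
  intro t s
  have hdet : IsUnit (-Tm).det := (isUnit_iff_isUnit_det _).1 hTunit.neg
  have hmul : (-Tm) * (-Tm)⁻¹ = 1 := Matrix.mul_nonsing_inv _ hdet
  have hcol : (-Tm) *ᵥ (fun u => (-Tm)⁻¹ u s) = fun u => (1 : Matrix T T ℝ) u s := by
    funext u
    have : ((-Tm) * (-Tm)⁻¹) u s = (1 : Matrix T T ℝ) u s := by rw [hmul]
    rw [← this]
    simp [Matrix.mulVec, Matrix.mul_apply, dotProduct]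
  have := aux_mmatrix_mulVec_nonneg Tm Rm hToff hR hrow hreach
    (fun u => (-Tm)⁻¹ u s) (fun u => (1 : Matrix T T ℝ) u s)
    (fun u => by simp [Matrix.one_apply]; split <;> norm_num) hcol
  exact this t
end MMat

section Uniq
variable {V : Type*} [Fintype V] [DecidableEq V]

/-- Every nonempty closed set contains a recurrent class. -/
lemma aux_closed_contains_recurrent (M : Matrix V V ℝ) (S : Set V) (hne : S.Nonempty)
    (hcl : ∀ x ∈ S, ∀ y, LeadsTo M x y → y ∈ S) :
    ∃ C : Set V, C ⊆ S ∧ IsRecurrentClass M C := by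
  classical
  let R : V → Finset V := fun x => Finset.univ.filter (fun y => LeadsTo M x y)
  obtain ⟨x₀, hx₀S⟩ := hne
  obtain ⟨z, hzS, hzmin⟩ := Finset.exists_min_image (Finset.univ.filter (· ∈ S))
    (fun x => (R x).card) ⟨x₀, Finset.mem_filter.2 ⟨Finset.mem_univ _, hx₀S⟩⟩
  have hzS' : z ∈ S := (Finset.mem_filter.1 hzS).2
  have hmemR : ∀ x y, y ∈ R x ↔ LeadsTo M x y := by
    intro x y; simp [R]
  refine ⟨(R z : Set V), ?_, ⟨z, by simp [hmemR]; exact Relation.ReflTransGen.refl⟩, ?_, ?_⟩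
  · intro y hy
    exact hcl z hzS' y ((hmemR z y).1 hy)
  · intro x hx y hy
    have hx' : LeadsTo M z x := (hmemR z x).1 hx
    have hy' : LeadsTo M z y := (hmemR z y).1 hy
    have hxS : x ∈ S := hcl z hzS' x hx'
    have hsub : R x ⊆ R z := by
      intro w hw
      exact (hmemR z w).2 (hx'.trans ((hmemR x w).1 hw))
    have hcard : (R z).card ≤ (R x).card :=
      hzmin x (Finset.mem_filter.2 ⟨Finset.mem_univ _, hxS⟩)
    have heq : R x = R z := Finset.eq_of_subset_of_card_le hsub hcard
    have hzx : LeadsTo M x z := by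
      have : z ∈ R x := heq ▸ ((hmemR z z).2 Relation.ReflTransGen.refl)
      exact (hmemR x z).1 this
    exact hzx.trans hy'
  · intro x hx y hxy
    exact (hmemR z y).2 (((hmemR z x).1 hx).trans hxy)

/-- uniqueness of the stationary probability vector for a Q-matrix with a unique
recurrent class. -/
lemma aux_stationary_unique (M : Matrix V V ℝ) [Nonempty V]
    (hoff : ∀ x y, x ≠ y → 0 ≤ M x y) (hrow : ∀ x, ∑ y, M x y = 0)
    (hrec : ∃! C : Set V, IsRecurrentClass M C)
    (α α' : V → ℝ) (hα : (∀ a, 0 ≤ α a) ∧ (∑ a, α a = 1) ∧ α ᵥ* M = 0)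
    (hα' : (∀ a, 0 ≤ α' a) ∧ (∑ a, α' a = 1) ∧ α' ᵥ* M = 0) : α' = α := by
  classical
  set D : ℝ := ∑ x, |M x x| with hD
  have hD0 : 0 ≤ D := Finset.sum_nonneg fun x _ => abs_nonneg _
  set h : ℝ := 1 / (1 + D) with hh
  have hh0 : 0 < h := by positivity
  set P : Matrix V V ℝ := 1 + h • M with hP
  have hdiagM : ∀ x, M x x ≤ 0 := by
    intro x
    have := hrow x
    have h2 : ∑ y ∈ Finset.univ.erase x, M x y ≥ 0 :=
      Finset.sum_nonneg fun y hy => hoff x y (Ne.symm (Finset.mem_erase.1 hy).1)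
    rw [← Finset.add_sum_erase _ _ (Finset.mem_univ x)] at this
    linarith
  have hPnn : ∀ x y, 0 ≤ P x y := by
    intro x y
    by_cases hxy : x = y
    · subst hxy
      simp only [hP, Matrix.add_apply, Matrix.one_apply_eq, Matrix.smul_apply, smul_eq_mul]
      have h1 : |M x x| ≤ D := Finset.single_le_sum (fun x _ => abs_nonneg (M x x)) (Finset.mem_univ x)
      have h2 : h * (-M x x) ≤ h * D := by
        refine mul_le_mul_of_nonneg_left ?_ hh0.le
        calc -M x x ≤ |M x x| := neg_le_abs _
          _ ≤ D := h1
      have h3 : h * D < 1 := by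
        rw [hh, div_mul_eq_mul_div, one_mul, div_lt_one (by linarith)]
        linarith
      nlinarith
    · simp only [hP, Matrix.add_apply, Matrix.one_apply_ne hxy, Matrix.smul_apply, smul_eq_mul,
        zero_add]
      exact mul_nonneg hh0.le (hoff x y hxy)
  have hProw : ∀ x, ∑ y, P x y = 1 := by
    intro x
    simp only [hP, Matrix.add_apply, Matrix.smul_apply, smul_eq_mul]
    rw [Finset.sum_add_distrib, ← Finset.mul_sum, hrow, mul_zero, add_zero]
    simp [Matrix.one_apply]
  have hPpos : ∀ x y, x ≠ y → 0 < M x y → 0 < P x y := by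
    intro x y hxy hM
    simp only [hP, Matrix.add_apply, Matrix.one_apply_ne hxy, Matrix.smul_apply, smul_eq_mul,
      zero_add]
    exact mul_pos hh0 hM
  have prop : ∀ δ : V → ℝ, δ ᵥ* M = 0 → ∀ x y, 0 < δ x → LeadsTo M x y → 0 < δ y := by
    intro δ hδ x y hδx hxy
    have hfix : ∀ y, ∑ x, δ x * P x y = δ y := by
      intro y
      simp only [hP, Matrix.add_apply, Matrix.smul_apply, smul_eq_mul]
      have : ∀ x, δ x * ((1 : Matrix V V ℝ) x y + h * M x y)
          = δ x * (1 : Matrix V V ℝ) x y + h * (δ x * M x y) := by intro x; ring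
      simp_rw [this]
      rw [Finset.sum_add_distrib, ← Finset.mul_sum]
      have h1 : ∑ x, δ x * M x y = 0 := by
        have := congrFun hδ y
        simpa [Matrix.vecMul, dotProduct] using this
      rw [h1, mul_zero, add_zero]
      simp [Matrix.one_apply, Finset.sum_ite_eq, Finset.mem_univ]
    have habs : ∀ y, ∑ x, |δ x| * P x y = |δ y| := by
      have hge : ∀ y, |δ y| ≤ ∑ x, |δ x| * P x y := by
        intro y
        calc |δ y| = |∑ x, δ x * P x y| := by rw [hfix y]
          _ ≤ ∑ x, |δ x * P x y| := Finset.abs_sum_le_sum_abs _ _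
          _ = ∑ x, |δ x| * P x y := by
              refine Finset.sum_congr rfl fun x _ => ?_
              rw [abs_mul, abs_of_nonneg (hPnn x y)]
      have hsum : ∑ y, (∑ x, |δ x| * P x y - |δ y|) = 0 := by
        rw [Finset.sum_sub_distrib, Finset.sum_comm]
        have : ∀ x, ∑ y, |δ x| * P x y = |δ x| := by
          intro x; rw [← Finset.mul_sum, hProw, mul_one]
        simp_rw [this]
        ring
      intro y
      have := (Finset.sum_eq_zero_iff_of_nonneg (fun y _ => by linarith [hge y])).1 hsum y
        (Finset.mem_univ y)
      linarith [this]
    have step : ∀ x y, 0 < δ x → 0 < P x y → 0 < δ y := by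
      intro x y hδx hPxy
      by_contra hcon
      push_neg at hcon
      have h1 : ∑ x, (|δ x| + δ x) * P x y = |δ y| + δ y := by
        simp_rw [add_mul]
        rw [Finset.sum_add_distrib, habs y, hfix y]
      have h2 : (0:ℝ) < ∑ x, (|δ x| + δ x) * P x y := by
        refine Finset.sum_pos' (fun x _ => mul_nonneg (by have := abs_nonneg (δ x); have := neg_abs_le (δ x); linarith) (hPnn x y)) ⟨x, Finset.mem_univ x, ?_⟩
        have : 0 < |δ x| + δ x := by
          have := abs_nonneg (δ x); linarith
        exact mul_pos this hPxy
      have h3 : |δ y| + δ y ≤ 0 := by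
        rw [abs_of_nonpos hcon]; linarith
      linarith [h1 ▸ h2]
    induction hxy with
    | refl => exact hδx
    | tail _ hstep ih =>
        rename_i b c _
        have hbc : b ≠ c := by
          intro hbceq
          subst hbceq
          exact absurd hstep (not_lt.2 (hdiagM b))
        exact step b c ih (hPpos b c hbc hstep)
  set δ : V → ℝ := fun x => α' x - α x with hδdef
  have hδM : δ ᵥ* M = 0 := by
    have : δ ᵥ* M = α' ᵥ* M - α ᵥ* M := by
      rw [hδdef]
      rw [show (fun x => α' x - α x) = α' - α from rfl, Matrix.sub_vecMul]
    rw [this, hα.2.2, hα'.2.2, sub_zero]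
  have hδsum : ∑ x, δ x = 0 := by
    simp only [hδdef]
    rw [Finset.sum_sub_distrib, hα.2.1, hα'.2.1, sub_self]
  have hδM' : (fun x => -δ x) ᵥ* M = 0 := by
    rw [show (fun x => -δ x) = -δ from rfl, Matrix.neg_vecMul, hδM, neg_zero]
  by_cases hplus : ∃ x, 0 < δ x
  · by_cases hminus : ∃ x, δ x < 0
    · obtain ⟨xp, hxp⟩ := hplus
      obtain ⟨xm, hxm⟩ := hminus
      obtain ⟨Cp, hCpS, hCp⟩ := aux_closed_contains_recurrent M {x | 0 < δ x} ⟨xp, hxp⟩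
        (fun x hx y hxy => prop δ hδM x y hx hxy)
      obtain ⟨Cm, hCmS, hCm⟩ := aux_closed_contains_recurrent M {x | δ x < 0} ⟨xm, hxm⟩
        (fun x hx y hxy => by
          have := prop (fun z => -δ z) hδM' x y (by simpa using hx) hxy
          simpa using this)
      obtain ⟨C, -, hCuniq⟩ := hrec
      have h1 : Cp = C := hCuniq Cp hCp
      have h2 : Cm = C := hCuniq Cm hCm
      obtain ⟨w, hw⟩ := hCp.1
      have hw1 : 0 < δ w := hCpS hw
      have hw2 : δ w < 0 := hCmS (by rw [h2, ← h1]; exact hw)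
      linarith
    · push_neg at hminus
      have : ∀ x, δ x = 0 := by
        intro x
        exact (Finset.sum_eq_zero_iff_of_nonneg (fun y _ => hminus y)).1 hδsum x (Finset.mem_univ x)
      funext x
      have := this x
      simp only [hδdef] at this
      linarith
  · push_neg at hplus
    have : ∀ x, δ x = 0 := by
      intro x
      have h2 : ∑ x, -δ x = 0 := by rw [Finset.sum_neg_distrib, hδsum, neg_zero]
      have := (Finset.sum_eq_zero_iff_of_nonneg (fun y _ => by simpa using hplus y)).1 h2 x
        (Finset.mem_univ x)
      linarith
    funext x
    have := this x
    simp only [hδdef] at this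
    linarith
end Uniq

/-- A path in `Q0` starting from a transient state either stays transient or crosses to an
absorbing state via a positive rate from a transient state. -/
lemma aux_reach_split {A T : Type*} (Q0 : Matrix (A ⊕ T) (A ⊕ T) ℝ)
    (habs : ∀ a : A, ∀ y, Q0 (Sum.inl a) y = 0) {x y : A ⊕ T}
    (h : Relation.ReflTransGen (fun u v => 0 < Q0 u v) x y) :
    ∀ t : T, x = Sum.inr t →
      (∃ u, y = Sum.inr u ∧
        Relation.ReflTransGen (fun v w : T => 0 < Q0 (Sum.inr v) (Sum.inr w)) t u)
      ∨ (∃ u b, y = Sum.inl b ∧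
        Relation.ReflTransGen (fun v w : T => 0 < Q0 (Sum.inr v) (Sum.inr w)) t u ∧
        0 < Q0 (Sum.inr u) (Sum.inl b)) := by
  induction h with
  | refl => intro t ht; exact Or.inl ⟨t, ht, Relation.ReflTransGen.refl⟩
  | @tail b c hxb hstep ih =>
      intro t ht
      rcases ih t ht with ⟨u, hbu, hr⟩ | ⟨u, d, hbd, hr, hpos⟩
      · subst hbu
        cases c with
        | inl e => exact Or.inr ⟨u, e, rfl, hr, hstep⟩
        | inr w => exact Or.inl ⟨w, rfl, hr.tail hstep⟩
      · subst hbd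
        rw [habs d c] at hstep
        exact absurd hstep (lt_irrefl 0)

/-- Under the assumptions that `Q(0)` has absorbing states 𝒜 and transient states 𝒯, and that
the Q-matrix `Q_𝒜 = A₁ + S₁(−T₀)⁻¹R₀` has a single recurrent class, the limit
`π(0) = lim_{ε→0} π(ε)` equals `[α, 0]` where `α` is the unique probability vector on 𝒜
satisfying `α Q_𝒜 = 0`. -/
theorem stmt11 {A T : Type*} [Fintype A] [Fintype T] [DecidableEq A] [DecidableEq T]
    [Nonempty A] [Nonempty T]
    (ε₀ : ℝ) (hε₀ : 0 < ε₀)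
    (Q : ℝ → Matrix (A ⊕ T) (A ⊕ T) ℝ)
    (Qk : ℕ → Matrix (A ⊕ T) (A ⊕ T) ℝ)
    (hseries : ∀ ε : ℝ, 0 ≤ ε → ε < ε₀ → ∀ x y,
      HasSum (fun k : ℕ => ε ^ k * Qk k x y) (Q ε x y))
    (hQ0 : Qk 0 = Q 0)
    (hQmat : ∀ ε : ℝ, 0 < ε → ε < ε₀ →
      (∀ x y, x ≠ y → 0 ≤ Q ε x y) ∧ ∀ x, ∑ y, Q ε x y = 0)
    (hirr : ∀ ε : ℝ, 0 < ε → ε < ε₀ →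
      ∀ x y : A ⊕ T, Relation.ReflTransGen (fun a b => 0 < Q ε a b) x y)
    (hQ0mat : (∀ x y, x ≠ y → 0 ≤ Q 0 x y) ∧ ∀ x, ∑ y, Q 0 x y = 0)
    (habs : ∀ a : A, ∀ y, Q 0 (Sum.inl a) y = 0)
    (htrans : ∀ t : T, ∃ a : A,
      Relation.ReflTransGen (fun u v => 0 < Q 0 u v) (Sum.inr t) (Sum.inl a))
    (hT0 : IsUnit (Q 0).toBlocks₂₂)
    (hrec : ∃! C : Set A, IsRecurrentClass (QAmat (Q 0) (Qk 1)) C)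
    (π : ℝ → (A ⊕ T) → ℝ)
    (hπ : ∀ ε : ℝ, 0 < ε → ε < ε₀ →
      (∀ x, 0 ≤ π ε x) ∧ (∑ x, π ε x = 1) ∧
      ∀ y, ∑ x, π ε x * Q ε x y = 0) :
    ∃ α : A → ℝ,
      (∀ a : A, Tendsto (fun ε => π ε (Sum.inl a)) (𝓝[>] (0 : ℝ)) (𝓝 (α a))) ∧
      (∀ t : T, Tendsto (fun ε => π ε (Sum.inr t)) (𝓝[>] (0 : ℝ)) (𝓝 0)) ∧
      (∀ a, 0 ≤ α a) ∧ (∑ a, α a = 1) ∧ α ᵥ* QAmat (Q 0) (Qk 1) = 0 ∧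
      ∀ α' : A → ℝ,
        ((∀ a, 0 ≤ α' a) ∧ (∑ a, α' a = 1) ∧ α' ᵥ* QAmat (Q 0) (Qk 1) = 0) → α' = α := by
  classical
  have hIoo : Set.Ioo (0:ℝ) ε₀ ∈ 𝓝[>] (0:ℝ) := Ioo_mem_nhdsGT_of_mem ⟨le_refl 0, hε₀⟩
  -- continuity of Q at 0⁺
  have hQcont : ∀ x y, Tendsto (fun ε => Q ε x y) (𝓝[>] (0:ℝ)) (𝓝 (Q 0 x y)) := by
    intro x y
    have := aux_tendsto_coeff_zero (fun k => Qk k x y) ε₀ hε₀ (fun ε => Q ε x y)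
      (fun ε h1 h2 => hseries ε h1 h2 x y)
    simpa [hQ0] using this
  -- first-order limits when `Q 0 x y = 0`
  have hQ1lim : ∀ x y, Q 0 x y = 0 →
      Tendsto (fun ε => Q ε x y / ε) (𝓝[>] (0:ℝ)) (𝓝 (Qk 1 x y)) := by
    intro x y h0
    have := aux_tendsto_deriv_coeff (fun k => Qk k x y) ε₀ hε₀ (fun ε => Q ε x y)
      (fun ε h1 h2 => hseries ε h1 h2 x y)
    simpa [hQ0, h0] using this
  have hA1lim : ∀ (a : A) (y : A ⊕ T),
      Tendsto (fun ε => Q ε (Sum.inl a) y / ε) (𝓝[>] (0:ℝ)) (𝓝 (Qk 1 (Sum.inl a) y)) :=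
    fun a y => hQ1lim _ _ (habs a y)
  have hQk1nn : ∀ (a : A) (y : A ⊕ T), Sum.inl a ≠ y → 0 ≤ Qk 1 (Sum.inl a) y := by
    intro a y hne
    refine ge_of_tendsto (hA1lim a y) ?_
    filter_upwards [hIoo] with ε hε
    exact div_nonneg ((hQmat ε hε.1 hε.2).1 _ _ hne) hε.1.le
  -- row sums of `Qk 1` vanish
  have hrowQk1 : ∀ x, ∑ y, Qk 1 x y = 0 := by
    intro x
    have hser : ∀ ε : ℝ, 0 ≤ ε → ε < ε₀ →
        HasSum (fun k : ℕ => ε ^ k * ∑ y, Qk k x y) (∑ y, Q ε x y) := by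
      intro ε h1 h2
      have := hasSum_sum (s := Finset.univ) (f := fun (y : A ⊕ T) (k : ℕ) => ε ^ k * Qk k x y)
        (a := fun y => Q ε x y) (fun y _ => hseries ε h1 h2 x y)
      have h3 : (fun k : ℕ => ∑ y, ε ^ k * Qk k x y) = fun k : ℕ => ε ^ k * ∑ y, Qk k x y := by
        funext k; rw [Finset.mul_sum]
      rwa [h3] at this
    have hlim := aux_tendsto_deriv_coeff _ ε₀ hε₀ _ hser
    have hc0 : (∑ y, Qk 0 x y) = 0 := by rw [hQ0]; exact hQ0mat.2 x
    have hev : (fun ε => ((∑ y, Q ε x y) - ∑ y, Qk 0 x y) / ε) =ᶠ[𝓝[>] (0:ℝ)]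
        fun _ => (0:ℝ) := by
      filter_upwards [hIoo] with ε hε
      rw [(hQmat ε hε.1 hε.2).2 x, hc0]
      simp
    exact tendsto_nhds_unique (Tendsto.congr' hev hlim) tendsto_const_nhds
  -- block facts
  have hTBdet : IsUnit ((Q 0).toBlocks₂₂).det := (Matrix.isUnit_iff_isUnit_det _).1 hT0
  have hTBapp : ∀ t s, (Q 0).toBlocks₂₂ t s = Q 0 (Sum.inr t) (Sum.inr s) := fun _ _ => rfl
  have hRBapp : ∀ t a, (Q 0).toBlocks₂₁ t a = Q 0 (Sum.inr t) (Sum.inl a) := fun _ _ => rfl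
  have hrowTR : ∀ t, (∑ u, (Q 0).toBlocks₂₂ t u) + ∑ a, (Q 0).toBlocks₂₁ t a = 0 := by
    intro t
    have h := hQ0mat.2 (Sum.inr t)
    rw [Fintype.sum_sum_type] at h
    simp only [hTBapp, hRBapp]
    linarith [h]
  have hreach : ∀ t : T, ∃ u a,
      Relation.ReflTransGen (fun v w => 0 < (Q 0).toBlocks₂₂ v w) t u ∧
      0 < (Q 0).toBlocks₂₁ u a := by
    intro t
    obtain ⟨a, ha⟩ := htrans t
    rcases aux_reach_split (Q 0) habs ha t rfl with ⟨u, hu, -⟩ | ⟨u, b, -, hr, hpos⟩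
    · exact absurd hu (by simp)
    · exact ⟨u, b, hr, hpos⟩
  have hInvNN : ∀ t s, 0 ≤ (-(Q 0).toBlocks₂₂)⁻¹ t s :=
    aux_mmatrix_inv_nonneg _ _
      (fun t u htu => hQ0mat.1 _ _ (fun hc => htu (Sum.inr_injective hc)))
      (fun t a => hQ0mat.1 _ _ (by simp))
      hrowTR hreach hT0
  have hnegdet : IsUnit (-(Q 0).toBlocks₂₂).det := (Matrix.isUnit_iff_isUnit_det _).1 hT0.neg
  have hneginv : (-(Q 0).toBlocks₂₂)⁻¹ = -((Q 0).toBlocks₂₂)⁻¹ :=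
    Matrix.inv_eq_right_inv
      (by rw [Matrix.neg_mul, Matrix.mul_neg, neg_neg, Matrix.mul_nonsing_inv _ hTBdet])
  have hQAdef : QAmat (Q 0) (Qk 1) = (Qk 1).toBlocks₁₁
      + (Qk 1).toBlocks₁₂ * (-(Q 0).toBlocks₂₂)⁻¹ * (Q 0).toBlocks₂₁ := rfl
  have hA1app : ∀ a b, (Qk 1).toBlocks₁₁ a b = Qk 1 (Sum.inl a) (Sum.inl b) := fun _ _ => rfl
  have hS1app : ∀ a t, (Qk 1).toBlocks₁₂ a t = Qk 1 (Sum.inl a) (Sum.inr t) := fun _ _ => rfl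
  -- Q_A is a Q-matrix
  have hQAoff : ∀ x y : A, x ≠ y → 0 ≤ QAmat (Q 0) (Qk 1) x y := by
    intro x y hxy
    rw [hQAdef]
    rw [Matrix.add_apply]
    have h1 : 0 ≤ (Qk 1).toBlocks₁₁ x y := by
      rw [hA1app]
      exact hQk1nn x (Sum.inl y) (fun hc => hxy (Sum.inl_injective hc))
    have h2 : 0 ≤ ((Qk 1).toBlocks₁₂ * (-(Q 0).toBlocks₂₂)⁻¹ * (Q 0).toBlocks₂₁) x y := by
      rw [Matrix.mul_apply]
      refine Finset.sum_nonneg fun s _ => mul_nonneg ?_ (by rw [hRBapp]; exact hQ0mat.1 _ _ (by simp))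
      rw [Matrix.mul_apply]
      refine Finset.sum_nonneg fun u _ => mul_nonneg ?_ (hInvNN u s)
      rw [hS1app]
      exact hQk1nn x (Sum.inr u) (by simp)
    exact add_nonneg h1 h2
  have hQArow : ∀ x : A, ∑ y, QAmat (Q 0) (Qk 1) x y = 0 := by
    intro x
    have hM : ((Qk 1).toBlocks₁₂ * (-(Q 0).toBlocks₂₂)⁻¹) * (-(Q 0).toBlocks₂₂)
        = (Qk 1).toBlocks₁₂ := by
      rw [Matrix.mul_assoc, Matrix.nonsing_inv_mul _ hnegdet, Matrix.mul_one]
    have hsum2 : ∑ y, ((Qk 1).toBlocks₁₂ * (-(Q 0).toBlocks₂₂)⁻¹ * (Q 0).toBlocks₂₁) x y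
        = ∑ t, (Qk 1).toBlocks₁₂ x t := by
      calc ∑ y, ((Qk 1).toBlocks₁₂ * (-(Q 0).toBlocks₂₂)⁻¹ * (Q 0).toBlocks₂₁) x y
          = ∑ y, ∑ s, ((Qk 1).toBlocks₁₂ * (-(Q 0).toBlocks₂₂)⁻¹) x s * (Q 0).toBlocks₂₁ s y := by
            simp [Matrix.mul_apply]
        _ = ∑ s, ((Qk 1).toBlocks₁₂ * (-(Q 0).toBlocks₂₂)⁻¹) x s * ∑ y, (Q 0).toBlocks₂₁ s y := by
            rw [Finset.sum_comm]
            exact Finset.sum_congr rfl fun s _ => by rw [Finset.mul_sum]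
        _ = ∑ s, ((Qk 1).toBlocks₁₂ * (-(Q 0).toBlocks₂₂)⁻¹) x s
              * ∑ u, (-(Q 0).toBlocks₂₂) s u := by
            refine Finset.sum_congr rfl fun s _ => ?_
            congr 1
            have := hrowTR s
            simp only [Matrix.neg_apply, Finset.sum_neg_distrib]
            linarith
        _ = ∑ u, ∑ s, ((Qk 1).toBlocks₁₂ * (-(Q 0).toBlocks₂₂)⁻¹) x s
              * (-(Q 0).toBlocks₂₂) s u := by
            rw [Finset.sum_comm]
            exact Finset.sum_congr rfl fun s _ => by rw [Finset.mul_sum]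
        _ = ∑ u, (((Qk 1).toBlocks₁₂ * (-(Q 0).toBlocks₂₂)⁻¹) * (-(Q 0).toBlocks₂₂)) x u := by
            simp [Matrix.mul_apply]
        _ = ∑ t, (Qk 1).toBlocks₁₂ x t := by rw [hM]
    have hfull := hrowQk1 (Sum.inl x)
    rw [Fintype.sum_sum_type] at hfull
    calc ∑ y, QAmat (Q 0) (Qk 1) x y
        = ∑ y, ((Qk 1).toBlocks₁₁ x y
            + ((Qk 1).toBlocks₁₂ * (-(Q 0).toBlocks₂₂)⁻¹ * (Q 0).toBlocks₂₁) x y) := by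
          rw [hQAdef]; exact Finset.sum_congr rfl fun y _ => by rw [Matrix.add_apply]
      _ = (∑ y, (Qk 1).toBlocks₁₁ x y)
            + ∑ y, ((Qk 1).toBlocks₁₂ * (-(Q 0).toBlocks₂₂)⁻¹ * (Q 0).toBlocks₂₁) x y :=
          Finset.sum_add_distrib
      _ = (∑ y, Qk 1 (Sum.inl x) (Sum.inl y)) + ∑ t, Qk 1 (Sum.inl x) (Sum.inr t) := by
          rw [hsum2]
          simp only [hA1app, hS1app]
      _ = 0 := hfull
  -- division of the stationarity equation
  have hstatdiv : ∀ ε ∈ Set.Ioo (0:ℝ) ε₀, ∀ y : A ⊕ T,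
      (∑ a, π ε (Sum.inl a) * (Q ε (Sum.inl a) y / ε))
      + (∑ t, (π ε (Sum.inr t) / ε) * Q ε (Sum.inr t) y) = 0 := by
    intro ε hε y
    have h := (hπ ε hε.1 hε.2).2.2 y
    rw [Fintype.sum_sum_type] at h
    have heq : (∑ a, π ε (Sum.inl a) * (Q ε (Sum.inl a) y / ε))
        + (∑ t, (π ε (Sum.inr t) / ε) * Q ε (Sum.inr t) y)
        = ((∑ a, π ε (Sum.inl a) * Q ε (Sum.inl a) y)
          + ∑ t, π ε (Sum.inr t) * Q ε (Sum.inr t) y) / ε := by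
      rw [add_div, Finset.sum_div, Finset.sum_div]
      congr 1
      · exact Finset.sum_congr rfl fun a _ => (mul_div_assoc _ _ _).symm
      · exact Finset.sum_congr rfl fun t _ => (div_mul_eq_mul_div _ _ _)
    rw [heq, h, zero_div]
  -- the key ultrafilter limit
  have key : ∀ U : Ultrafilter ℝ, ↑U ≤ 𝓝[>] (0:ℝ) →
      ∃ v : (A ⊕ T) → ℝ, Tendsto π ↑U (𝓝 v) ∧ (∀ x, 0 ≤ v x) ∧
        (∀ t, v (Sum.inr t) = 0) ∧ (∑ a, v (Sum.inl a) = 1) ∧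
        (fun a => v (Sum.inl a)) ᵥ* QAmat (Q 0) (Qk 1) = 0 := by
    intro U hU
    have hUIoo : ∀ᶠ ε in ↑U, ε ∈ Set.Ioo (0:ℝ) ε₀ := hU hIoo
    -- compactness
    have hmem : ∀ᶠ ε in ↑U, π ε ∈ Set.pi Set.univ (fun _ : A ⊕ T => Set.Icc (0:ℝ) 1) := by
      filter_upwards [hUIoo] with ε hε
      intro x _
      obtain ⟨hnn, hsum, -⟩ := hπ ε hε.1 hε.2
      exact ⟨hnn x, by rw [← hsum]; exact Finset.single_le_sum (fun y _ => hnn y) (Finset.mem_univ x)⟩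
    have hle : ↑(U.map π) ≤ Filter.principal (Set.pi Set.univ (fun _ : A ⊕ T => Set.Icc (0:ℝ) 1)) := by
      rw [Ultrafilter.coe_map, Filter.le_principal_iff]
      exact Filter.mem_map.2 hmem
    obtain ⟨v, hvK, hvle⟩ :=
      (isCompact_univ_pi fun _ : A ⊕ T => isCompact_Icc (a := (0:ℝ)) (b := 1)).ultrafilter_le_nhds
        (U.map π) hle
    have hv : Tendsto π ↑U (𝓝 v) := by
      rw [Filter.Tendsto, ← Ultrafilter.coe_map]
      exact hvle
    have hvx : ∀ x, Tendsto (fun ε => π ε x) ↑U (𝓝 (v x)) := fun x => tendsto_pi_nhds.1 hv x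
    have h0 : ∀ x, 0 ≤ v x := by
      intro x
      refine ge_of_tendsto (hvx x) ?_
      filter_upwards [hUIoo] with ε hε
      exact (hπ ε hε.1 hε.2).1 x
    have hsumv : ∑ x, v x = 1 := by
      have h1 : Tendsto (fun ε => ∑ x, π ε x) ↑U (𝓝 (∑ x, v x)) :=
        tendsto_finset_sum _ fun x _ => hvx x
      have h2 : Tendsto (fun ε => ∑ x, π ε x) ↑U (𝓝 1) := by
        refine Tendsto.congr' ?_ (tendsto_const_nhds (α := ℝ))
        filter_upwards [hUIoo] with ε hε
        exact ((hπ ε hε.1 hε.2).2.1).symm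
      exact tendsto_nhds_unique h1 h2
    have hstat0 : ∀ y, ∑ x, v x * Q 0 x y = 0 := by
      intro y
      have h1 : Tendsto (fun ε => ∑ x, π ε x * Q ε x y) ↑U (𝓝 (∑ x, v x * Q 0 x y)) :=
        tendsto_finset_sum _ fun x _ => (hvx x).mul ((hQcont x y).mono_left hU)
      have h2 : Tendsto (fun ε => ∑ x, π ε x * Q ε x y) ↑U (𝓝 0) := by
        refine Tendsto.congr' ?_ (tendsto_const_nhds (α := ℝ))
        filter_upwards [hUIoo] with ε hε
        exact ((hπ ε hε.1 hε.2).2.2 y).symm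
      exact tendsto_nhds_unique h1 h2
    have hvT : ∀ t, v (Sum.inr t) = 0 := by
      have hw : (fun t => v (Sum.inr t)) ᵥ* (Q 0).toBlocks₂₂ = 0 := by
        funext s
        have h := hstat0 (Sum.inr s)
        rw [Fintype.sum_sum_type] at h
        have hz : ∑ a, v (Sum.inl a) * Q 0 (Sum.inl a) (Sum.inr s) = 0 := by
          simp [habs]
        rw [hz, zero_add] at h
        simpa [Matrix.vecMul, dotProduct, hTBapp] using h
      have h2 : (fun t => v (Sum.inr t)) ᵥ* ((Q 0).toBlocks₂₂ * ((Q 0).toBlocks₂₂)⁻¹)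
          = (0 : T → ℝ) ᵥ* ((Q 0).toBlocks₂₂)⁻¹ := by
        rw [← Matrix.vecMul_vecMul, hw]
      rw [Matrix.mul_nonsing_inv _ hTBdet, Matrix.vecMul_one, Matrix.zero_vecMul] at h2
      intro t
      exact congrFun h2 t
    have hsumA : ∑ a, v (Sum.inl a) = 1 := by
      have := hsumv
      rw [Fintype.sum_sum_type] at this
      simp only [hvT, Finset.sum_const_zero, add_zero] at this
      exact this
    -- entrywise limits of T-block and its inverse
    have hTBeps : ∀ t s : T, Tendsto (fun ε => (Q ε).toBlocks₂₂ t s) ↑U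
        (𝓝 ((Q 0).toBlocks₂₂ t s)) :=
      fun t s => (hQcont (Sum.inr t) (Sum.inr s)).mono_left hU
    have hdetU : ∀ᶠ ε in ↑U, IsUnit ((Q ε).toBlocks₂₂).det :=
      aux_eventually_det_isUnit hTBeps hTBdet
    have hinvU : ∀ t s : T, Tendsto (fun ε => ((Q ε).toBlocks₂₂)⁻¹ t s) ↑U
        (𝓝 (((Q 0).toBlocks₂₂)⁻¹ t s)) :=
      fun t s => aux_tendsto_inv_entries hTBeps hTBdet t s
    have hulim : ∀ s : T, Tendsto
        (fun ε => -∑ a, π ε (Sum.inl a) * (Q ε (Sum.inl a) (Sum.inr s) / ε)) ↑U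
        (𝓝 (-∑ a, v (Sum.inl a) * Qk 1 (Sum.inl a) (Sum.inr s))) :=
      fun s => (tendsto_finset_sum _ fun a _ =>
        (hvx (Sum.inl a)).mul ((hA1lim a (Sum.inr s)).mono_left hU)).neg
    have hbrep : ∀ᶠ ε in ↑U, ∀ t, π ε (Sum.inr t) / ε
        = ∑ s, (-∑ a, π ε (Sum.inl a) * (Q ε (Sum.inl a) (Sum.inr s) / ε))
            * ((Q ε).toBlocks₂₂)⁻¹ s t := by
      filter_upwards [hUIoo, hdetU] with ε hε hdet
      have hb : (fun t => π ε (Sum.inr t) / ε) ᵥ* (Q ε).toBlocks₂₂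
          = fun s => -∑ a, π ε (Sum.inl a) * (Q ε (Sum.inl a) (Sum.inr s) / ε) := by
        funext s
        have h := hstatdiv ε hε (Sum.inr s)
        simp only [Matrix.vecMul, dotProduct]
        have happ : ∀ t, (Q ε).toBlocks₂₂ t s = Q ε (Sum.inr t) (Sum.inr s) := fun _ => rfl
        simp only [happ]
        linarith [h]
      have h2 : (fun t => π ε (Sum.inr t) / ε)
          = (fun s => -∑ a, π ε (Sum.inl a) * (Q ε (Sum.inl a) (Sum.inr s) / ε))
            ᵥ* ((Q ε).toBlocks₂₂)⁻¹ := by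
        rw [← hb, Matrix.vecMul_vecMul, Matrix.mul_nonsing_inv _ hdet, Matrix.vecMul_one]
      intro t
      have := congrFun h2 t
      rw [this]
      simp [Matrix.vecMul, dotProduct]
    have hblim : ∀ t : T, Tendsto (fun ε => π ε (Sum.inr t) / ε) ↑U
        (𝓝 (∑ s, (-∑ a, v (Sum.inl a) * Qk 1 (Sum.inl a) (Sum.inr s))
          * ((Q 0).toBlocks₂₂)⁻¹ s t)) := by
      intro t
      refine Tendsto.congr' ?_ (tendsto_finset_sum _ fun s _ => (hulim s).mul (hinvU s t))
      filter_upwards [hbrep] with ε hε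
      exact (hε t).symm
    have hfin : ∀ b : A, (∑ a, v (Sum.inl a) * Qk 1 (Sum.inl a) (Sum.inl b))
        + ∑ t, (∑ s, (-∑ a, v (Sum.inl a) * Qk 1 (Sum.inl a) (Sum.inr s))
          * ((Q 0).toBlocks₂₂)⁻¹ s t) * Q 0 (Sum.inr t) (Sum.inl b) = 0 := by
      intro b
      have h1 : Tendsto (fun ε =>
          (∑ a, π ε (Sum.inl a) * (Q ε (Sum.inl a) (Sum.inl b) / ε))
          + ∑ t, (π ε (Sum.inr t) / ε) * Q ε (Sum.inr t) (Sum.inl b)) ↑U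
          (𝓝 ((∑ a, v (Sum.inl a) * Qk 1 (Sum.inl a) (Sum.inl b))
          + ∑ t, (∑ s, (-∑ a, v (Sum.inl a) * Qk 1 (Sum.inl a) (Sum.inr s))
            * ((Q 0).toBlocks₂₂)⁻¹ s t) * Q 0 (Sum.inr t) (Sum.inl b))) :=
        (tendsto_finset_sum _ fun a _ =>
          (hvx (Sum.inl a)).mul ((hA1lim a (Sum.inl b)).mono_left hU)).add
        (tendsto_finset_sum _ fun t _ =>
          (hblim t).mul ((hQcont (Sum.inr t) (Sum.inl b)).mono_left hU))
      have h2 : Tendsto (fun ε =>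
          (∑ a, π ε (Sum.inl a) * (Q ε (Sum.inl a) (Sum.inl b) / ε))
          + ∑ t, (π ε (Sum.inr t) / ε) * Q ε (Sum.inr t) (Sum.inl b)) ↑U (𝓝 0) := by
        refine Tendsto.congr' ?_ (tendsto_const_nhds (α := ℝ))
        filter_upwards [hUIoo] with ε hε
        exact (hstatdiv ε hε (Sum.inl b)).symm
      exact tendsto_nhds_unique h1 h2
    -- assemble stationarity
    have hstatQA : (fun a => v (Sum.inl a)) ᵥ* QAmat (Q 0) (Qk 1) = 0 := by
      funext b
      have hbeta : ((fun a => v (Sum.inl a)) ᵥ* ((Qk 1).toBlocks₁₂ * (-(Q 0).toBlocks₂₂)⁻¹))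
          = fun t => ∑ s, (-∑ a, v (Sum.inl a) * Qk 1 (Sum.inl a) (Sum.inr s))
            * ((Q 0).toBlocks₂₂)⁻¹ s t := by
        rw [← Matrix.vecMul_vecMul, hneginv, Matrix.vecMul_neg, ← Matrix.neg_vecMul]
        funext t
        simp only [Matrix.vecMul, dotProduct, Pi.neg_apply, hS1app]
      have e1 : ((fun a => v (Sum.inl a)) ᵥ* QAmat (Q 0) (Qk 1)) b
          = ((fun a => v (Sum.inl a)) ᵥ* (Qk 1).toBlocks₁₁) b
            + (((fun a => v (Sum.inl a)) ᵥ* ((Qk 1).toBlocks₁₂ * (-(Q 0).toBlocks₂₂)⁻¹))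
              ᵥ* (Q 0).toBlocks₂₁) b := by
        rw [hQAdef, Matrix.vecMul_add, Matrix.vecMul_vecMul, Matrix.mul_assoc]
        rfl
      rw [Pi.zero_apply, e1, hbeta]
      have e2 : ((fun a => v (Sum.inl a)) ᵥ* (Qk 1).toBlocks₁₁) b
          = ∑ a, v (Sum.inl a) * Qk 1 (Sum.inl a) (Sum.inl b) := by
        simp only [Matrix.vecMul, dotProduct, hA1app]
      have e3 : ((fun t => ∑ s, (-∑ a, v (Sum.inl a) * Qk 1 (Sum.inl a) (Sum.inr s))
            * ((Q 0).toBlocks₂₂)⁻¹ s t) ᵥ* (Q 0).toBlocks₂₁) b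
          = ∑ t, (∑ s, (-∑ a, v (Sum.inl a) * Qk 1 (Sum.inl a) (Sum.inr s))
            * ((Q 0).toBlocks₂₂)⁻¹ s t) * Q 0 (Sum.inr t) (Sum.inl b) := by
        simp only [Matrix.vecMul, dotProduct, hRBapp]
      rw [e2, e3]
      exact hfin b
    exact ⟨v, hv, h0, hvT, hsumA, hstatQA⟩
  -- conclude
  haveI : (𝓝[>] (0:ℝ)).NeBot := nhdsGT_neBot 0
  obtain ⟨v₀, hv₀, h0₀, hvT₀, hsum₀, hstat₀⟩ :=
    key (Ultrafilter.of (𝓝[>] (0:ℝ))) (Ultrafilter.of_le _)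
  have huniq : ∀ α' : A → ℝ,
      ((∀ a, 0 ≤ α' a) ∧ (∑ a, α' a = 1) ∧ α' ᵥ* QAmat (Q 0) (Qk 1) = 0) →
      α' = fun a => v₀ (Sum.inl a) := fun α' hα' =>
    aux_stationary_unique _ hQAoff hQArow hrec _ α'
      ⟨fun a => h0₀ _, hsum₀, hstat₀⟩ hα'
  have hvten : Tendsto π (𝓝[>] (0:ℝ)) (𝓝 v₀) := by
    rw [tendsto_iff_ultrafilter]
    intro U hU
    obtain ⟨v, hv, h0v, hvTv, hsumAv, hstatAv⟩ := key U hU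
    have hveq : v = v₀ := by
      have heq := huniq (fun a => v (Sum.inl a)) ⟨fun a => h0v _, hsumAv, hstatAv⟩
      funext x
      cases x with
      | inl a => exact congrFun heq a
      | inr t => rw [hvTv t, hvT₀ t]
    rwa [hveq] at hv
  refine ⟨fun a => v₀ (Sum.inl a), fun a => tendsto_pi_nhds.1 hvten (Sum.inl a),
    fun t => ?_, fun a => h0₀ _, hsum₀, hstat₀, huniq⟩
  have := tendsto_pi_nhds.1 hvten (Sum.inr t)
  rwa [hvT₀ t] at this
end

section
/- Suppose Assumptions hold: 𝒜 absorbing and 𝒯 transient for Q(0), the restricted chain generated by Q_𝒜 has a single recurrent class, and the perturbation is linear: Q(ε) = Q^(0) + ε Q^(1). Then for every k ≥ 1 the coefficients of the stationary distribution expansion π(ε) = Σ_k ε^k [α^(k), β^(k)] satisfy the recursion β^(k) = (α^(k−1) S₁ + β^(k−1) T₁)(−T₀)⁻¹, and α^(k) is the unique vector solving α^(k) Q_𝒜 = −β^(k)(R₁ + T₁(−T₀)⁻¹R₀) together with α^(k)·𝟙 = −β^(k)·𝟙. -/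
open Matrix

set_option maxHeartbeats 1000000

/-- If a power series sums to zero on an interval `(0,r)`, its constant coefficient is zero. -/
lemma hasSum_coeff_zero_head (c : ℕ → ℝ) (r : ℝ) (hr : 0 < r)
    (h : ∀ ε : ℝ, 0 < ε → ε < r → HasSum (fun k : ℕ => ε ^ k * c k) 0) :
    c 0 = 0 := by
  set ρ := r / 2 with hρdef
  have hρ : 0 < ρ := by positivity
  have hρr : ρ < r := by rw [hρdef]; linarith
  have hsum : Summable fun k : ℕ => |c k| * ρ ^ k := by
    have habs : Summable fun k : ℕ => |ρ ^ k * c k| :=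
      summable_abs_iff.mpr (h ρ hρ hρr).summable
    refine habs.congr fun k => ?_
    rw [abs_mul, abs_of_nonneg (by positivity : (0:ℝ) ≤ ρ ^ k), mul_comm]
  have hK : Summable fun k : ℕ => |c (k + 1)| * ρ ^ k := by
    have h1 : Summable fun k : ℕ => |c (k + 1)| * ρ ^ (k + 1) :=
      (summable_nat_add_iff 1).mpr hsum
    have h2 := h1.mul_right ρ⁻¹
    refine h2.congr fun k => ?_
    field_simp [pow_succ]
    ring
  set K := ∑' k : ℕ, |c (k + 1)| * ρ ^ k with hKdef
  have hK0 : 0 ≤ K := tsum_nonneg fun k => mul_nonneg (abs_nonneg _) (pow_nonneg hρ.le k)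
  have key : ∀ ε : ℝ, 0 < ε → ε < ρ → |c 0| ≤ ε * K := by
    intro ε hε hερ
    have hs := h ε hε (lt_trans hερ hρr)
    have hshift : HasSum (fun n : ℕ => ε ^ (n + 1) * c (n + 1)) (-(c 0)) := by
      refine (hasSum_nat_add_iff (f := fun n : ℕ => ε ^ n * c n) 1).mpr ?_
      simpa using hs
    have h1 : |c 0| = |∑' k : ℕ, ε ^ (k + 1) * c (k + 1)| := by
      rw [hshift.tsum_eq, abs_neg]
    have hsummable1 : Summable fun k : ℕ => |ε ^ (k + 1) * c (k + 1)| :=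
      summable_abs_iff.mpr hshift.summable
    have h2 : ∀ k : ℕ, |ε ^ (k + 1) * c (k + 1)| ≤ ε * (|c (k + 1)| * ρ ^ k) := by
      intro k
      rw [abs_mul, abs_of_nonneg (by positivity : (0:ℝ) ≤ ε ^ (k + 1)), pow_succ]
      have hεk : ε ^ k ≤ ρ ^ k := pow_le_pow_left₀ hε.le hερ.le k
      have := mul_le_mul_of_nonneg_right hεk (by positivity : (0:ℝ) ≤ ε * |c (k+1)|)
      nlinarith [abs_nonneg (c (k+1)), pow_nonneg hε.le k, pow_nonneg hρ.le k]
    calc |c 0| = |∑' k : ℕ, ε ^ (k + 1) * c (k + 1)| := h1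
      _ ≤ ∑' k : ℕ, |ε ^ (k + 1) * c (k + 1)| := by
          have := norm_tsum_le_tsum_norm (f := fun k : ℕ => ε ^ (k+1) * c (k+1))
              (by simp only [Real.norm_eq_abs]; exact hsummable1)
          simp only [Real.norm_eq_abs] at this
          exact this
      _ ≤ ∑' k : ℕ, ε * (|c (k + 1)| * ρ ^ k) :=
          Summable.tsum_le_tsum h2 hsummable1 (hK.mul_left ε)
      _ = ε * K := tsum_mul_left
  by_contra h0
  have hc0 : 0 < |c 0| := abs_pos.mpr h0
  set ε := min (ρ / 2) (|c 0| / (2 * (K + 1))) with hεdef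
  have hεpos : 0 < ε := lt_min (by positivity) (by positivity)
  have hερ : ε < ρ := lt_of_le_of_lt (min_le_left _ _) (by linarith)
  have h3 := key ε hεpos hερ
  have h4 : ε ≤ |c 0| / (2 * (K + 1)) := min_le_right _ _
  have h5 : ε * (K + 1) ≤ |c 0| / 2 := by
    rw [le_div_iff₀ (by positivity)] at h4
    nlinarith
  nlinarith

lemma coeff_eq_zero (r : ℝ) (hr : 0 < r) :
    ∀ (c : ℕ → ℝ), (∀ ε : ℝ, 0 < ε → ε < r → HasSum (fun k : ℕ => ε ^ k * c k) 0) →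
    ∀ k, c k = 0 := by
  intro c hc k
  induction k generalizing c with
  | zero => exact hasSum_coeff_zero_head c r hr hc
  | succ k ih =>
    have h0 : c 0 = 0 := hasSum_coeff_zero_head c r hr hc
    exact ih (fun n => c (n + 1)) (by
      intro ε hε hεr
      have hs := hc ε hε hεr
      have hshift : HasSum (fun n : ℕ => ε ^ (n + 1) * c (n + 1)) 0 := by
        refine (hasSum_nat_add_iff (f := fun n : ℕ => ε ^ n * c n) 1).mpr ?_
        simpa [h0] using hs
      have h2 := hshift.mul_left ε⁻¹
      simp only [mul_zero] at h2
      have heq : (fun n : ℕ => ε⁻¹ * (ε ^ (n + 1) * c (n + 1)))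
          = fun n : ℕ => ε ^ n * c (n + 1) := by
        funext n
        field_simp [pow_succ]
        ring
      rwa [heq] at h2)

section Markov

variable {A : Type*} [Fintype A] [DecidableEq A] [Nonempty A]

/-- Every state leads into the unique recurrent class. -/
lemma leadsTo_recClass (M : Matrix A A ℝ) (C : Set A)
    (hC : IsRecurrentClass M C) (huniq : ∀ D, IsRecurrentClass M D → D = C) :
    ∀ x : A, ∃ c ∈ C, LeadsTo M x c := by
  classical
  have key : ∀ n : ℕ, ∀ x : A, ({y | LeadsTo M x y}).ncard ≤ n → ∃ c ∈ C, LeadsTo M x c := by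
    intro n
    induction n with
    | zero =>
      intro x hx
      have hmem : x ∈ {y | LeadsTo M x y} := Relation.ReflTransGen.refl
      have : ({y | LeadsTo M x y}).ncard = 0 := Nat.le_zero.mp hx
      rw [Set.ncard_eq_zero (Set.toFinite _)] at this
      exact absurd (this ▸ hmem) (Set.notMem_empty x)
    | succ n ih =>
      intro x hx
      by_cases hall : ∀ y, LeadsTo M x y → LeadsTo M y x
      · have hrc : IsRecurrentClass M {y | LeadsTo M x y} := by
          refine ⟨⟨x, Relation.ReflTransGen.refl⟩, ?_, ?_⟩
          · intro y hy z hz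
            exact Relation.ReflTransGen.trans (hall y hy) hz
          · intro y hy z hz
            exact Relation.ReflTransGen.trans hy hz
        have := huniq _ hrc
        obtain ⟨c, hc⟩ := hC.1
        refine ⟨c, hc, ?_⟩
        have : c ∈ {y | LeadsTo M x y} := this ▸ hc
        exact this
      · push_neg at hall
        obtain ⟨y, hxy, hnyx⟩ := hall
        have hsub : {z | LeadsTo M y z} ⊂ {z | LeadsTo M x z} := by
          constructor
          · intro z hz
            exact Relation.ReflTransGen.trans hxy hz
          · intro hle
            exact hnyx (hle (show x ∈ {z | LeadsTo M x z} from Relation.ReflTransGen.refl))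
        have hcard : ({z | LeadsTo M y z}).ncard < ({z | LeadsTo M x z}).ncard :=
          Set.ncard_lt_ncard hsub (Set.toFinite _)
        obtain ⟨c, hc, hyc⟩ := ih y (by omega)
        exact ⟨c, hc, Relation.ReflTransGen.trans hxy hyc⟩
  intro x
  exact key _ x le_rfl

/-- Maximum principle propagation along the chain graph. -/
lemma prop_max (M : Matrix A A ℝ) (hM1 : ∀ a b, a ≠ b → 0 ≤ M a b)
    (hM2 : ∀ a, ∑ b, M a b = 0) (h : A → ℝ) (hh : M *ᵥ h = 0)
    (y0 : A) (hmax : ∀ b, h b ≤ h y0) :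
    ∀ z, LeadsTo M y0 z → h z = h y0 := by
  intro z hz
  induction hz with
  | refl => rfl
  | @tail b c p hstep ih =>
    have e2 : ∑ d, M b d * h d = 0 := by
      have := congrFun hh b
      simpa [Matrix.mulVec, dotProduct] using this
    have e1 : ∑ d, M b d * (h d - h b) = 0 := by
      rw [Finset.sum_congr rfl (fun d _ => mul_sub (M b d) (h d) (h b)),
        Finset.sum_sub_distrib, e2, ← Finset.sum_mul, hM2, zero_mul, sub_zero]
    have hterm : ∀ d ∈ Finset.univ, M b d * (h d - h b) ≤ 0 := by
      intro d _
      by_cases hdb : d = b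
      · simp [hdb]
      · have h1 : 0 ≤ M b d := hM1 b d (Ne.symm hdb)
        have h2 : h d - h b ≤ 0 := by
          rw [ih]
          linarith [hmax d]
        exact mul_nonpos_iff.mpr (Or.inl ⟨h1, h2⟩)
    have hall := (Finset.sum_eq_zero_iff_of_nonpos hterm).mp e1 c (Finset.mem_univ c)
    have hc : h c = h b := by
      rcases mul_eq_zero.mp hall with h' | h'
      · exact absurd h' (ne_of_gt hstep)
      · linarith [sub_eq_zero.mp h']
    rw [hc, ih]

/-- Harmonic functions are constant when there is a unique recurrent class. -/
lemma harmonic_const (M : Matrix A A ℝ) (hM1 : ∀ a b, a ≠ b → 0 ≤ M a b)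
    (hM2 : ∀ a, ∑ b, M a b = 0) (C : Set A) (hC : IsRecurrentClass M C)
    (hreach : ∀ x : A, ∃ c ∈ C, LeadsTo M x c)
    (h : A → ℝ) (hh : M *ᵥ h = 0) : ∀ a b, h a = h b := by
  obtain ⟨y0, hy0⟩ := Finite.exists_max h
  obtain ⟨y1, hy1⟩ := Finite.exists_min h
  obtain ⟨c0, hc0, p0⟩ := hreach y0
  obtain ⟨c1, hc1, p1⟩ := hreach y1
  have hhn : M *ᵥ (-h) = 0 := by rw [Matrix.mulVec_neg, hh, neg_zero]
  have hA : h c0 = h y0 := prop_max M hM1 hM2 h hh y0 hy0 c0 p0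
  have hmax' : ∀ b, h b ≤ h c0 := fun b => hA ▸ hy0 b
  have hB : h c1 = h c0 := prop_max M hM1 hM2 h hh c0 hmax' c1 (hC.2.1 c0 hc0 c1 hc1)
  have hCmin : (-h) c1 = (-h) y1 :=
    prop_max M hM1 hM2 (-h) hhn y1 (fun b => by simpa using hy1 b) c1 p1
  have hminmax : h y0 = h y1 := by
    have : h c1 = h y1 := by simpa using hCmin
    rw [← this, hB, hA]
  intro a b
  have h1 : h a ≤ h y0 := hy0 a
  have h2 : h y1 ≤ h a := hy1 a
  have h3 : h b ≤ h y0 := hy0 b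
  have h4 : h y1 ≤ h b := hy1 b
  rw [hminmax] at h1 h3
  linarith

/-- No vector maps to the constant one vector under a generator matrix. -/
lemma no_mulVec_one (M : Matrix A A ℝ) (hM1 : ∀ a b, a ≠ b → 0 ≤ M a b)
    (hM2 : ∀ a, ∑ b, M a b = 0) (u : A → ℝ) :
    M *ᵥ u ≠ fun _ => (1 : ℝ) := by
  intro hu
  obtain ⟨a, ha⟩ := Finite.exists_max u
  have h1 : ∑ b, M a b * u b = 1 := by
    have := congrFun hu a
    simpa [Matrix.mulVec, dotProduct] using this
  have h2 : ∑ b, M a b * (u b - u a) = 1 := by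
    rw [Finset.sum_congr rfl (fun d _ => mul_sub (M a d) (u d) (u a)),
      Finset.sum_sub_distrib, h1, ← Finset.sum_mul, hM2, zero_mul, sub_zero]
  have h3 : ∑ b, M a b * (u b - u a) ≤ 0 := by
    apply Finset.sum_nonpos
    intro b _
    by_cases hba : b = a
    · simp [hba]
    · exact mul_nonpos_iff.mpr (Or.inl ⟨hM1 a b (Ne.symm hba), by linarith [ha b]⟩)
  linarith

/-- The left kernel of a generator with unique recurrent class meets the sum-zero
hyperplane trivially. -/
lemma leftKernel_trivial (M : Matrix A A ℝ) (hM1 : ∀ a b, a ≠ b → 0 ≤ M a b)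
    (hM2 : ∀ a, ∑ b, M a b = 0) (hrec : ∃! C : Set A, IsRecurrentClass M C)
    (w : A → ℝ) (hw : w ᵥ* M = 0) (hs : ∑ a, w a = 0) : w = 0 := by
  classical
  by_contra hwne
  obtain ⟨C, hC, huniq⟩ := hrec
  have hreach := leadsTo_recClass M C hC huniq
  -- right kernel is the constants
  have hker : LinearMap.ker M.mulVecLin = Submodule.span ℝ {(fun _ => (1:ℝ))} := by
    apply le_antisymm
    · intro h hm
      rw [LinearMap.mem_ker, Matrix.mulVecLin_apply] at hm
      have hconst := harmonic_const M hM1 hM2 C hC hreach h hm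
      rw [Submodule.mem_span_singleton]
      refine ⟨h (Classical.arbitrary A), ?_⟩
      funext a
      simp [hconst (Classical.arbitrary A) a]
    · rw [Submodule.span_singleton_le_iff_mem, LinearMap.mem_ker, Matrix.mulVecLin_apply]
      funext a
      simpa [Matrix.mulVec, dotProduct] using hM2 a
  have hone_ne : (fun _ => (1:ℝ)) ≠ (0 : A → ℝ) := by
    intro h
    have := congrFun h (Classical.arbitrary A)
    simpa using this
  have hkerdim : Module.finrank ℝ (LinearMap.ker M.mulVecLin) = 1 := by
    rw [hker]; exact finrank_span_singleton hone_ne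
  have hrn := LinearMap.finrank_range_add_finrank_ker M.mulVecLin
  rw [Module.finrank_pi, hkerdim] at hrn
  -- the functional u ↦ ∑ w a * u a
  set φ : (A → ℝ) →ₗ[ℝ] ℝ :=
    { toFun := fun u => ∑ a, w a * u a
      map_add' := by intro u v; simp [mul_add, Finset.sum_add_distrib]
      map_smul' := by intro c u; simp [Finset.mul_sum, mul_left_comm, smul_eq_mul] } with hφdef
  have hφw : φ w = ∑ a, w a * w a := rfl
  have hwpos : 0 < ∑ a, w a * w a := by
    obtain ⟨a, ha⟩ := Function.ne_iff.mp hwne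
    apply Finset.sum_pos' (fun b _ => mul_self_nonneg (w b)) ⟨a, Finset.mem_univ a, ?_⟩
    have hwa : w a ≠ 0 := by simpa using ha
    exact mul_self_pos.mpr hwa
  have hφsurj : LinearMap.range φ = ⊤ := by
    rw [LinearMap.range_eq_top]
    intro r
    refine ⟨(r / (∑ a, w a * w a)) • w, ?_⟩
    rw [LinearMap.map_smul, hφw, smul_eq_mul]
    exact div_mul_cancel₀ r hwpos.ne'
  have hφrn := LinearMap.finrank_range_add_finrank_ker φ
  rw [Module.finrank_pi, hφsurj] at hφrn
  have htop : Module.finrank ℝ (⊤ : Submodule ℝ ℝ) = 1 := by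
    simpa using (finrank_top ℝ ℝ)
  rw [htop] at hφrn
  -- range of mulVecLin M is contained in ker φ
  have hle : LinearMap.range M.mulVecLin ≤ LinearMap.ker φ := by
    rintro _ ⟨v, rfl⟩
    rw [LinearMap.mem_ker, Matrix.mulVecLin_apply]
    show ∑ a, w a * (M *ᵥ v) a = 0
    have hcol : ∀ b, ∑ a, w a * M a b = 0 := by
      intro b
      have := congrFun hw b
      simpa [Matrix.vecMul, dotProduct] using this
    calc ∑ a, w a * (M *ᵥ v) a = ∑ a, ∑ b, w a * (M a b * v b) := by
          simp [Matrix.mulVec, dotProduct, Finset.mul_sum]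
      _ = ∑ b, ∑ a, w a * (M a b * v b) := Finset.sum_comm
      _ = ∑ b, (∑ a, w a * M a b) * v b := by
          refine Finset.sum_congr rfl fun b _ => ?_
          rw [Finset.sum_mul]
          exact Finset.sum_congr rfl fun a _ => by ring
      _ = 0 := by simp [hcol]
  have heq : LinearMap.range M.mulVecLin = LinearMap.ker φ :=
    Submodule.eq_of_le_of_finrank_le hle (by omega)
  have hone_mem : (fun _ => (1:ℝ)) ∈ LinearMap.ker φ := by
    rw [LinearMap.mem_ker]
    show ∑ a, w a * 1 = 0
    simpa using hs
  rw [← heq] at hone_mem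
  obtain ⟨u, hu⟩ := hone_mem
  rw [Matrix.mulVecLin_apply] at hu
  exact no_mulVec_one M hM1 hM2 u hu

end Markov


/-- Columns of `(-T₀)⁻¹` are nonnegative for a transient sub-generator block. -/
lemma neg_blocks_inv_nonneg {A T : Type*} [Fintype A] [Fintype T] [DecidableEq T]
    (Q0 : Matrix (A ⊕ T) (A ⊕ T) ℝ)
    (hoff : ∀ x y, x ≠ y → 0 ≤ Q0 x y)
    (hsum : ∀ x, ∑ y, Q0 x y = 0)
    (htrans : ∀ t : T, ∃ a : A,
      Relation.ReflTransGen (fun u v => 0 < Q0 u v) (Sum.inr t) (Sum.inl a))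
    (hdet : IsUnit (-Q0.toBlocks₂₂).det) :
    ∀ t t' : T, 0 ≤ (-Q0.toBlocks₂₂)⁻¹ t t' := by
  classical
  set T0 := Q0.toBlocks₂₂ with hT0def
  have hT0app : ∀ s k : T, T0 s k = Q0 (Sum.inr s) (Sum.inr k) := fun _ _ => rfl
  intro t j
  by_contra hneg
  push_neg at hneg
  have hne : Nonempty T := ⟨t⟩
  set z : T → ℝ := fun s => (-T0)⁻¹ s j with hzdef
  obtain ⟨i0, hi0min⟩ := Finite.exists_min z
  have hzi0 : z i0 < 0 := lt_of_le_of_lt (hi0min t) hneg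
  have hTN := Matrix.mul_nonsing_inv (-T0) hdet
  have hcol : ∀ s, ∑ k, (-T0) s k * z k = if s = j then 1 else 0 := by
    intro s
    have := congrFun (congrFun hTN s) j
    rw [Matrix.mul_apply] at this
    rw [this, Matrix.one_apply]
  have hTz : ∀ s, ∑ k, T0 s k * z k ≤ 0 := by
    intro s
    have h1 : 0 ≤ ∑ k, (-T0) s k * z k := by
      rw [hcol s]; split <;> norm_num
    have h2 : ∑ k, (-T0) s k * z k = -∑ k, T0 s k * z k := by
      simp [Matrix.neg_apply, Finset.sum_neg_distrib]
    linarith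
  have hrowsum : ∀ s, (∑ a, Q0 (Sum.inr s) (Sum.inl a)) + ∑ k, T0 s k = 0 := by
    intro s
    have := hsum (Sum.inr s)
    rw [Fintype.sum_sum_type] at this
    simpa [hT0app] using this
  have sclaim : ∀ s, z s = z i0 →
      (∀ a, Q0 (Sum.inr s) (Sum.inl a) = 0) ∧ (∀ k, 0 < T0 s k → z k = z i0) := by
    intro s hzs
    have hterm : ∀ k ∈ Finset.univ, 0 ≤ T0 s k * (z k - z i0) := by
      intro k _
      by_cases hks : k = s
      · rw [hks, hzs]; simp
      · exact mul_nonneg (hoff _ _ (by simp [Ne.symm hks]))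
          (sub_nonneg.mpr (hi0min k))
    have hsum1 : ∑ k, T0 s k * (z k - z i0)
        = (∑ k, T0 s k * z k) - (∑ k, T0 s k) * z i0 := by
      rw [Finset.sum_congr rfl (fun k _ => mul_sub (T0 s k) (z k) (z i0)),
        Finset.sum_sub_distrib, Finset.sum_mul]
    have hanonneg : 0 ≤ ∑ a, Q0 (Sum.inr s) (Sum.inl a) :=
      Finset.sum_nonneg fun a _ => hoff _ _ (by simp)
    have hrs : ∑ k, T0 s k ≤ 0 := by linarith [hrowsum s]
    have h3 : 0 ≤ (∑ k, T0 s k) * z i0 := by nlinarith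
    have htot : ∑ k, T0 s k * (z k - z i0) = 0 := by
      have hge : 0 ≤ ∑ k, T0 s k * (z k - z i0) := Finset.sum_nonneg hterm
      have hle' : ∑ k, T0 s k * (z k - z i0) ≤ 0 := by
        rw [hsum1]; linarith [hTz s]
      linarith
    have hall := (Finset.sum_eq_zero_iff_of_nonneg hterm).mp htot
    constructor
    · -- row sum is zero hence all exits vanish
      have hz0 : (∑ k, T0 s k) * z i0 = 0 := by
        rw [hsum1] at htot
        linarith [hTz s]
      have hrs0 : ∑ k, T0 s k = 0 := by
        rcases mul_eq_zero.mp hz0 with h' | h'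
        · exact h'
        · exact absurd h' (ne_of_lt hzi0)
      have ha0 : ∑ a, Q0 (Sum.inr s) (Sum.inl a) = 0 := by
        have := hrowsum s; linarith
      intro a
      exact (Finset.sum_eq_zero_iff_of_nonneg
        (fun a _ => hoff _ _ (by simp))).mp ha0 a (Finset.mem_univ a)
    · intro k hk
      have := hall k (Finset.mem_univ k)
      rcases mul_eq_zero.mp this with h' | h'
      · exact absurd h' (ne_of_gt hk)
      · have := sub_eq_zero.mp h'
        exact this
  have stay : ∀ y, Relation.ReflTransGen (fun u v => 0 < Q0 u v) (Sum.inr i0) y →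
      ∃ s, z s = z i0 ∧ y = Sum.inr s := by
    intro y hy
    induction hy with
    | refl => exact ⟨i0, rfl, rfl⟩
    | @tail b c p hstep ih =>
      obtain ⟨s, hzs, rfl⟩ := ih
      cases c with
      | inl a =>
        rw [(sclaim s hzs).1 a] at hstep
        exact absurd hstep (lt_irrefl 0)
      | inr s' =>
        exact ⟨s', ((sclaim s hzs).2 s' (by rw [hT0app]; exact hstep)).symm ▸ rfl, rfl⟩
  obtain ⟨a, hpath⟩ := htrans i0
  obtain ⟨s, _, heq⟩ := stay _ hpath
  exact Sum.inl_ne_inr heq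

/-- For a linear perturbation `Q(ε) = Q⁽⁰⁾ + ε Q⁽¹⁾` of generators on `𝒜 ⊕ 𝒯` (irreducible for
`0 < ε < ε₀`, 𝒜 absorbing and 𝒯 transient for `Q⁽⁰⁾`, and `Q_𝒜` with a single recurrent
class), the coefficients of the stationary-distribution expansion
`π(ε) = Σ_k ε^k [α⁽ᵏ⁾, β⁽ᵏ⁾]` satisfy, for every `k ≥ 1`,
`β⁽ᵏ⁾ = (α⁽ᵏ⁻¹⁾ S₁ + β⁽ᵏ⁻¹⁾ T₁)(−T₀)⁻¹`, and `α⁽ᵏ⁾` is the unique vector solving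
`α⁽ᵏ⁾ Q_𝒜 = −β⁽ᵏ⁾(R₁ + T₁(−T₀)⁻¹R₀)` together with `α⁽ᵏ⁾·𝟙 = −β⁽ᵏ⁾·𝟙`. -/
theorem stmt12 {A T : Type*} [Fintype A] [Fintype T] [DecidableEq A] [DecidableEq T]
    [Nonempty A] [Nonempty T]
    (ε₀ ε₁ : ℝ) (hε₀ : 0 < ε₀) (hε₁ : 0 < ε₁) (hε₁₀ : ε₁ ≤ ε₀)
    (Q0 Q1 : Matrix (A ⊕ T) (A ⊕ T) ℝ)
    (hQmat : ∀ ε : ℝ, 0 < ε → ε < ε₀ →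
      (∀ x y, x ≠ y → 0 ≤ (Q0 + ε • Q1) x y) ∧ ∀ x, ∑ y, (Q0 + ε • Q1) x y = 0)
    (hirr : ∀ ε : ℝ, 0 < ε → ε < ε₀ →
      ∀ x y : A ⊕ T, Relation.ReflTransGen (fun a b => 0 < (Q0 + ε • Q1) a b) x y)
    (habs : ∀ a : A, ∀ y, Q0 (Sum.inl a) y = 0)
    (htrans : ∀ t : T, ∃ a : A,
      Relation.ReflTransGen (fun u v => 0 < Q0 u v) (Sum.inr t) (Sum.inl a))
    (hT0 : IsUnit Q0.toBlocks₂₂)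
    (hrec : ∃! C : Set A, IsRecurrentClass (QAmat Q0 Q1) C)
    (π : ℝ → (A ⊕ T) → ℝ)
    (hπ : ∀ ε : ℝ, 0 < ε → ε < ε₀ →
      (∀ x, 0 ≤ π ε x) ∧ (∑ x, π ε x = 1) ∧
      ∀ y, ∑ x, π ε x * (Q0 + ε • Q1) x y = 0)
    (πk : ℕ → (A ⊕ T) → ℝ)
    (hser : ∀ ε : ℝ, 0 < ε → ε < ε₁ → ∀ x,
      HasSum (fun k : ℕ => ε ^ k * πk k x) (π ε x)) :
    ∀ k : ℕ, 1 ≤ k →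
      ((fun t : T => πk k (Sum.inr t)) =
        ((fun a : A => πk (k - 1) (Sum.inl a)) ᵥ* Q1.toBlocks₁₂ +
         (fun t : T => πk (k - 1) (Sum.inr t)) ᵥ* Q1.toBlocks₂₂) ᵥ* (-Q0.toBlocks₂₂)⁻¹) ∧
      ((fun a : A => πk k (Sum.inl a)) ᵥ* QAmat Q0 Q1 =
        -((fun t : T => πk k (Sum.inr t)) ᵥ*
            (Q1.toBlocks₂₁ + Q1.toBlocks₂₂ * (-Q0.toBlocks₂₂)⁻¹ * Q0.toBlocks₂₁))) ∧
      (∑ a : A, πk k (Sum.inl a) = -∑ t : T, πk k (Sum.inr t)) ∧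
      ∀ v : A → ℝ,
        (v ᵥ* QAmat Q0 Q1 =
            -((fun t : T => πk k (Sum.inr t)) ᵥ*
                (Q1.toBlocks₂₁ + Q1.toBlocks₂₂ * (-Q0.toBlocks₂₂)⁻¹ * Q0.toBlocks₂₁)) ∧
          ∑ a : A, v a = -∑ t : T, πk k (Sum.inr t)) →
        v = fun a : A => πk k (Sum.inl a) := by
  classical
  have hb11 : ∀ a b, Q1.toBlocks₁₁ a b = Q1 (Sum.inl a) (Sum.inl b) := fun _ _ => rfl
  have hb12 : ∀ a t, Q1.toBlocks₁₂ a t = Q1 (Sum.inl a) (Sum.inr t) := fun _ _ => rfl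
  have hb21 : ∀ t a, Q1.toBlocks₂₁ t a = Q1 (Sum.inr t) (Sum.inl a) := fun _ _ => rfl
  have hb22 : ∀ t s, Q1.toBlocks₂₂ t s = Q1 (Sum.inr t) (Sum.inr s) := fun _ _ => rfl
  have hc21 : ∀ t a, Q0.toBlocks₂₁ t a = Q0 (Sum.inr t) (Sum.inl a) := fun _ _ => rfl
  have hc22 : ∀ t s, Q0.toBlocks₂₂ t s = Q0 (Sum.inr t) (Sum.inr s) := fun _ _ => rfl
  have hdet : IsUnit (-Q0.toBlocks₂₂).det := by
    rw [Matrix.det_neg]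
    exact ((isUnit_one.neg).pow _).mul ((Matrix.isUnit_iff_isUnit_det _).mp hT0)
  -- row sums of Q0 and Q1 vanish
  have hsum_eps : ∀ e : ℝ, 0 < e → e < ε₀ → ∀ x,
      (∑ y, Q0 x y) + e * ∑ y, Q1 x y = 0 := by
    intro e he he0 x
    have h := (hQmat e he he0).2 x
    simp only [Matrix.add_apply, Matrix.smul_apply, smul_eq_mul] at h
    rw [Finset.sum_add_distrib] at h
    rw [Finset.mul_sum]
    exact h
  have hQ1sum : ∀ x, ∑ y, Q1 x y = 0 := by
    intro x
    have h1 := hsum_eps (ε₀/2) (by positivity) (by linarith) x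
    have h2 := hsum_eps (ε₀/4) (by positivity) (by linarith) x
    have h3 : (ε₀/4) * ∑ y, Q1 x y = 0 := by linarith
    rcases mul_eq_zero.mp h3 with h | h
    · linarith
    · exact h
  have hQ0sum : ∀ x, ∑ y, Q0 x y = 0 := by
    intro x
    have h1 := hsum_eps (ε₀/2) (by positivity) (by linarith) x
    rw [hQ1sum x] at h1
    linarith
  have hQ0off : ∀ x y, x ≠ y → 0 ≤ Q0 x y := by
    intro x y hxy
    by_contra hneg
    push_neg at hneg
    set b := |Q1 x y| with hbdef
    have hb0 : 0 ≤ b := abs_nonneg _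
    set e := min (ε₀/2) ((-Q0 x y) / (2*(b+1))) with hedef
    have hepos : 0 < e := lt_min (by positivity) (div_pos (by linarith) (by positivity))
    have heε₀ : e < ε₀ := lt_of_le_of_lt (min_le_left _ _) (by linarith)
    have h := (hQmat e hepos heε₀).1 x y hxy
    rw [Matrix.add_apply, Matrix.smul_apply, smul_eq_mul] at h
    have h4 : e ≤ (-Q0 x y)/(2*(b+1)) := min_le_right _ _
    rw [le_div_iff₀ (by positivity)] at h4
    have h5 : Q1 x y ≤ b := le_abs_self _
    nlinarith [mul_le_mul_of_nonneg_left h5 hepos.le]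
  have hQ1top : ∀ (a : A) (y : A ⊕ T), Sum.inl a ≠ y → 0 ≤ Q1 (Sum.inl a) y := by
    intro a y hay
    have h := (hQmat (ε₀/2) (by positivity) (by linarith)).1 _ y hay
    rw [Matrix.add_apply, Matrix.smul_apply, smul_eq_mul, habs] at h
    nlinarith
  have hNnn : ∀ s t, 0 ≤ (-Q0.toBlocks₂₂)⁻¹ s t :=
    neg_blocks_inv_nonneg Q0 hQ0off hQ0sum htrans hdet
  -- the reduced matrix is a generator
  have hQA1 : ∀ a b, a ≠ b → 0 ≤ QAmat Q0 Q1 a b := by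
    intro a b hab
    have h1 : 0 ≤ Q1.toBlocks₁₁ a b := by
      rw [hb11]; exact hQ1top a _ (by simp [hab])
    have h2 : 0 ≤ (Q1.toBlocks₁₂ * (-Q0.toBlocks₂₂)⁻¹ * Q0.toBlocks₂₁) a b := by
      rw [Matrix.mul_apply]
      refine Finset.sum_nonneg fun t _ => mul_nonneg ?_ ?_
      · rw [Matrix.mul_apply]
        refine Finset.sum_nonneg fun s _ => mul_nonneg ?_ (hNnn s t)
        rw [hb12]; exact hQ1top a _ (by simp)
      · rw [hc21]; exact hQ0off _ _ (by simp)
    have hQAab : QAmat Q0 Q1 a b = Q1.toBlocks₁₁ a b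
        + (Q1.toBlocks₁₂ * (-Q0.toBlocks₂₂)⁻¹ * Q0.toBlocks₂₁) a b := rfl
    rw [hQAab]
    linarith
  have hQA2 : ∀ a, ∑ c, QAmat Q0 Q1 a c = 0 := by
    intro a
    have hone : Q0.toBlocks₂₁ *ᵥ (fun _ => (1:ℝ)) = (-Q0.toBlocks₂₂) *ᵥ (fun _ => 1) := by
      funext s
      have h := hQ0sum (Sum.inr s)
      rw [Fintype.sum_sum_type] at h
      simp only [Matrix.mulVec, dotProduct, mul_one, Matrix.neg_apply, hc21, hc22,
        Finset.sum_neg_distrib]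
      linarith
    have hmv : QAmat Q0 Q1 *ᵥ (fun _ => (1:ℝ)) = fun a => ∑ y, Q1 (Sum.inl a) y := by
      unfold QAmat
      rw [Matrix.add_mulVec, ← Matrix.mulVec_mulVec, ← Matrix.mulVec_mulVec, hone,
        Matrix.mulVec_mulVec, Matrix.mulVec_mulVec,
        Matrix.mul_assoc Q1.toBlocks₁₂ (-Q0.toBlocks₂₂)⁻¹ (-Q0.toBlocks₂₂),
        Matrix.nonsing_inv_mul _ hdet, Matrix.mul_one]
      funext a
      rw [Fintype.sum_sum_type (f := fun y => Q1 (Sum.inl a) y)]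
      simp only [Pi.add_apply, Matrix.mulVec, dotProduct, mul_one, hb11, hb12]
    have h := congrFun hmv a
    simp only [Matrix.mulVec, dotProduct, mul_one] at h
    rw [h, hQ1sum]
  -- coefficient identities from the power series
  have hstar : ∀ k : ℕ, ∀ y, (∑ x, πk (k+1) x * Q0 x y) + (∑ x, πk k x * Q1 x y) = 0 := by
    intro k y
    have hall : ∀ n, ((∑ x, πk n x * Q0 x y)
        + if n = 0 then 0 else ∑ x, πk (n-1) x * Q1 x y) = 0 := by
      refine coeff_eq_zero ε₁ hε₁ _ ?_
      intro ε hε hεr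
      have hεε₀ : ε < ε₀ := lt_of_lt_of_le hεr hε₁₀
      have h0 : HasSum (fun n : ℕ => ε ^ n * ∑ x, πk n x * Q0 x y)
          (∑ x, π ε x * Q0 x y) := by
        have h := hasSum_sum (s := Finset.univ)
          (f := fun x (n : ℕ) => (ε ^ n * πk n x) * Q0 x y)
          (a := fun x => π ε x * Q0 x y)
          (fun x _ => (hser ε hε hεr x).mul_right _)
        have heq : (fun n : ℕ => ∑ x, (ε ^ n * πk n x) * Q0 x y)
            = fun n : ℕ => ε ^ n * ∑ x, πk n x * Q0 x y := by
          funext n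
          rw [Finset.mul_sum]
          exact Finset.sum_congr rfl fun x _ => by ring
        rwa [heq] at h
      have h1 : HasSum (fun n : ℕ => ε ^ n * ∑ x, πk n x * Q1 x y)
          (∑ x, π ε x * Q1 x y) := by
        have h := hasSum_sum (s := Finset.univ)
          (f := fun x (n : ℕ) => (ε ^ n * πk n x) * Q1 x y)
          (a := fun x => π ε x * Q1 x y)
          (fun x _ => (hser ε hε hεr x).mul_right _)
        have heq : (fun n : ℕ => ∑ x, (ε ^ n * πk n x) * Q1 x y)
            = fun n : ℕ => ε ^ n * ∑ x, πk n x * Q1 x y := by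
          funext n
          rw [Finset.mul_sum]
          exact Finset.sum_congr rfl fun x _ => by ring
        rwa [heq] at h
      have h1' := h1.mul_left ε
      have hg : HasSum
          (fun n : ℕ => ε ^ n * (if n = 0 then 0 else ∑ x, πk (n-1) x * Q1 x y))
          (ε * ∑ x, π ε x * Q1 x y) := by
        have hpre : HasSum (fun n : ℕ => ε ^ (n+1) *
            (if n+1 = 0 then (0:ℝ) else ∑ x, πk (n+1-1) x * Q1 x y))
            (ε * ∑ x, π ε x * Q1 x y) := by
          have heq2 : (fun n : ℕ => ε ^ (n+1) *
              (if n+1 = 0 then (0:ℝ) else ∑ x, πk (n+1-1) x * Q1 x y))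
              = fun n : ℕ => ε * (ε ^ n * ∑ x, πk n x * Q1 x y) := by
            funext n
            simp only [Nat.succ_ne_zero, if_false, Nat.add_sub_cancel, pow_succ]
            ring
          rw [heq2]
          exact h1'
        have hsh := (hasSum_nat_add_iff
          (f := fun n : ℕ => ε ^ n * (if n = 0 then (0:ℝ) else ∑ x, πk (n-1) x * Q1 x y))
          1).mp hpre
        simpa using hsh
      have htotal := h0.add hg
      have hval : (∑ x, π ε x * Q0 x y) + ε * ∑ x, π ε x * Q1 x y = 0 := by
        have h := (hπ ε hε hεε₀).2.2 y
        simp only [Matrix.add_apply, Matrix.smul_apply, smul_eq_mul, mul_add] at h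
        rw [Finset.sum_add_distrib] at h
        have h2 : ∑ x, π ε x * (ε * Q1 x y) = ε * ∑ x, π ε x * Q1 x y := by
          rw [Finset.mul_sum]
          exact Finset.sum_congr rfl fun x _ => by ring
        rw [h2] at h
        exact h
      rw [hval] at htotal
      have heq3 : (fun n : ℕ => ε ^ n * (∑ x, πk n x * Q0 x y)
          + ε ^ n * (if n = 0 then 0 else ∑ x, πk (n-1) x * Q1 x y))
          = fun n : ℕ => ε ^ n * ((∑ x, πk n x * Q0 x y)
            + if n = 0 then 0 else ∑ x, πk (n-1) x * Q1 x y) := by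
        funext n
        ring
      rwa [heq3] at htotal
    have h := hall (k+1)
    simpa using h
  have hsum0 : ∀ k, 1 ≤ k → ∑ x, πk k x = 0 := by
    intro k hk
    have hall : ∀ n, ((∑ x, πk n x) - if n = 0 then 1 else 0) = 0 := by
      refine coeff_eq_zero ε₁ hε₁ _ ?_
      intro ε hε hεr
      have hεε₀ : ε < ε₀ := lt_of_lt_of_le hεr hε₁₀
      have h0 : HasSum (fun n : ℕ => ε ^ n * ∑ x, πk n x) 1 := by
        have h := hasSum_sum (s := Finset.univ) (f := fun x (n : ℕ) => ε ^ n * πk n x)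
          (a := fun x => π ε x) (fun x _ => hser ε hε hεr x)
        rw [(hπ ε hε hεε₀).2.1] at h
        have heq : (fun n : ℕ => ∑ x, ε ^ n * πk n x)
            = fun n : ℕ => ε ^ n * ∑ x, πk n x := by
          funext n
          rw [Finset.mul_sum]
        rwa [heq] at h
      have h1 : HasSum (fun n : ℕ => ε ^ n * (if n = 0 then (1:ℝ) else 0)) 1 := by
        have h := hasSum_ite_eq (0:ℕ) (1:ℝ)
        have heq : (fun n : ℕ => if n = (0:ℕ) then (1:ℝ) else 0)
            = fun n : ℕ => ε ^ n * (if n = 0 then (1:ℝ) else 0) := by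
          funext n
          by_cases hn : n = 0 <;> simp [hn]
        rwa [heq] at h
      have h2 := h0.sub h1
      rw [sub_self] at h2
      have heq2 : (fun n : ℕ => ε ^ n * (∑ x, πk n x)
          - ε ^ n * (if n = 0 then (1:ℝ) else 0))
          = fun n : ℕ => ε ^ n * ((∑ x, πk n x) - if n = 0 then (1:ℝ) else 0) := by
        funext n
        ring
      rwa [heq2] at h2
    have h := hall k
    rw [if_neg (by omega)] at h
    linarith
  -- vector form of the recursion for β
  have hbeta : ∀ k : ℕ, (fun t => πk (k+1) (Sum.inr t)) =
      ((fun a => πk k (Sum.inl a)) ᵥ* Q1.toBlocks₁₂ +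
       (fun t => πk k (Sum.inr t)) ᵥ* Q1.toBlocks₂₂) ᵥ* (-Q0.toBlocks₂₂)⁻¹ := by
    intro k
    have hmain : (fun t => πk (k+1) (Sum.inr t)) ᵥ* (-Q0.toBlocks₂₂)
        = (fun a => πk k (Sum.inl a)) ᵥ* Q1.toBlocks₁₂ +
          (fun t => πk k (Sum.inr t)) ᵥ* Q1.toBlocks₂₂ := by
      funext t
      have h := hstar k (Sum.inr t)
      rw [Fintype.sum_sum_type, Fintype.sum_sum_type] at h
      simp only [habs, mul_zero, Finset.sum_const_zero, zero_add] at h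
      simp only [Pi.add_apply, Matrix.vecMul, dotProduct, Matrix.neg_apply,
        hb12, hb22, hc22, mul_neg, Finset.sum_neg_distrib]
      linarith
    calc (fun t => πk (k+1) (Sum.inr t))
        = ((fun t => πk (k+1) (Sum.inr t)) ᵥ* (-Q0.toBlocks₂₂)) ᵥ* (-Q0.toBlocks₂₂)⁻¹ := by
          rw [Matrix.vecMul_vecMul, Matrix.mul_nonsing_inv _ hdet, Matrix.vecMul_one]
      _ = _ := by rw [hmain]
  -- vector equation for α
  have halpha : ∀ k : ℕ, (fun a => πk k (Sum.inl a)) ᵥ* QAmat Q0 Q1 =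
      -((fun t => πk k (Sum.inr t)) ᵥ*
        (Q1.toBlocks₂₁ + Q1.toBlocks₂₂ * (-Q0.toBlocks₂₂)⁻¹ * Q0.toBlocks₂₁)) := by
    intro k
    have h1 : (fun t => πk (k+1) (Sum.inr t)) ᵥ* Q0.toBlocks₂₁
        + ((fun a => πk k (Sum.inl a)) ᵥ* Q1.toBlocks₁₁
           + (fun t => πk k (Sum.inr t)) ᵥ* Q1.toBlocks₂₁) = (0 : A → ℝ) := by
      funext c
      have h := hstar k (Sum.inl c)
      rw [Fintype.sum_sum_type, Fintype.sum_sum_type] at h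
      simp only [habs, mul_zero, Finset.sum_const_zero, zero_add] at h
      simp only [Pi.add_apply, Pi.zero_apply, Matrix.vecMul, dotProduct,
        hb11, hb21, hc21]
      linarith
    rw [hbeta k, Matrix.vecMul_vecMul, Matrix.add_vecMul, Matrix.vecMul_vecMul,
      Matrix.vecMul_vecMul] at h1
    have hQAdef : QAmat Q0 Q1 = Q1.toBlocks₁₁
        + Q1.toBlocks₁₂ * ((-Q0.toBlocks₂₂)⁻¹ * Q0.toBlocks₂₁) := by
      unfold QAmat
      rw [Matrix.mul_assoc]
    rw [hQAdef, Matrix.vecMul_add,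
      Matrix.mul_assoc Q1.toBlocks₂₂ (-Q0.toBlocks₂₂)⁻¹ Q0.toBlocks₂₁, Matrix.vecMul_add]
    funext c
    have hc' := congrFun h1 c
    simp only [Pi.add_apply, Pi.zero_apply, Pi.neg_apply] at hc' ⊢
    linarith
  -- conclusion
  intro k hk
  obtain ⟨m, rfl⟩ : ∃ m, k = m + 1 := ⟨k - 1, by omega⟩
  have hg1 : (fun t : T => πk (m+1) (Sum.inr t)) =
      ((fun a : A => πk (m+1-1) (Sum.inl a)) ᵥ* Q1.toBlocks₁₂ +
       (fun t : T => πk (m+1-1) (Sum.inr t)) ᵥ* Q1.toBlocks₂₂) ᵥ* (-Q0.toBlocks₂₂)⁻¹ := by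
    simpa using hbeta m
  have hsplit := hsum0 (m+1) (by omega)
  rw [Fintype.sum_sum_type] at hsplit
  refine ⟨hg1, halpha (m+1), by linarith, ?_⟩
  rintro v ⟨hv1, hv2⟩
  have hw : (v - fun a => πk (m+1) (Sum.inl a)) ᵥ* QAmat Q0 Q1 = 0 := by
    rw [Matrix.sub_vecMul, hv1, halpha (m+1), sub_self]
  have hwsum : ∑ a, (v - fun a => πk (m+1) (Sum.inl a)) a = 0 := by
    simp only [Pi.sub_apply]
    rw [Finset.sum_sub_distrib, hv2]
    linarith
  have hzero := leftKernel_trivial (QAmat Q0 Q1) hQA1 hQA2 hrec _ hw hwsum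
  exact sub_eq_zero.mp hzero
end

section
/- With linear perturbation Q(ε) = Q^(0) + ε Q^(1), 𝒜 absorbing and 𝒯 transient for Q(0), and A₁ invertible, the matrix Q_𝒯 := T₀ + R₀ (−A₁)⁻¹ S₁ is a Q-matrix on 𝒯. Moreover, if ν is the unique probability vector on 𝒯 with ν Q_𝒯 = 0 (which exists when Q_𝒯 has a single recurrent class), then α = c ν R₀ (−A₁)⁻¹ with normalization constant c = (ν R₀ (−A₁)⁻¹ 𝟙)⁻¹, and the first-order transient coefficient is β^(1) = c ν. -/
open Matrix Filter Topology

set_option maxHeartbeats 1000000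

namespace Stmt13Aux


variable {A : Type*} [Fintype A] [DecidableEq A]

lemma mulVec_mono {P : Matrix A A ℝ} (hP : ∀ i j, 0 ≤ P i j) {u v : A → ℝ}
    (huv : ∀ i, u i ≤ v i) : ∀ i, (P *ᵥ u) i ≤ (P *ᵥ v) i := fun i =>
  Finset.sum_le_sum fun j _ => mul_le_mul_of_nonneg_left (huv j) (hP i j)

lemma pow_entry_nonneg {P : Matrix A A ℝ} (hP : ∀ i j, 0 ≤ P i j) :
    ∀ (n : ℕ) i j, 0 ≤ (P ^ n) i j := by
  intro n
  induction n with
  | zero => intro i j; rw [pow_zero, Matrix.one_apply]; positivity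
  | succ n ih =>
    intro i j
    rw [pow_succ, Matrix.mul_apply]
    exact Finset.sum_nonneg fun k _ => mul_nonneg (ih i k) (hP k j)

lemma substoch_tendsto_zero {P : Matrix A A ℝ}
    (hP : ∀ i j, 0 ≤ P i j) (hrow : ∀ i, ∑ j, P i j ≤ 1)
    (hunit : IsUnit (1 - P).det) (i : A) :
    Tendsto (fun n => ((P ^ n) *ᵥ (fun _ => (1:ℝ))) i) atTop (𝓝 0) := by
  set v : ℕ → A → ℝ := fun n => (P ^ n) *ᵥ (fun _ => (1:ℝ)) with hv
  have hP1 : ∀ i, (P *ᵥ (fun _ => (1:ℝ))) i ≤ 1 := by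
    intro i; simpa [Matrix.mulVec, dotProduct] using hrow i
  have hnn : ∀ n i, 0 ≤ v n i := fun n i =>
    Finset.sum_nonneg fun j _ => mul_nonneg (pow_entry_nonneg hP n i j) zero_le_one
  have hsucc : ∀ n, v (n+1) = (P ^ n) *ᵥ (P *ᵥ (fun _ => (1:ℝ))) := by
    intro n; rw [hv]; simp only [pow_succ, Matrix.mulVec_mulVec]
  have hanti : ∀ i, Antitone fun n => v n i := by
    intro i
    apply antitone_nat_of_succ_le
    intro n
    rw [hsucc n]
    calc ((P ^ n) *ᵥ (P *ᵥ fun _ => (1:ℝ))) i ≤ ((P ^ n) *ᵥ fun _ => (1:ℝ)) i :=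
          mulVec_mono (pow_entry_nonneg hP n) hP1 i
      _ = v n i := rfl
  set w : A → ℝ := fun i => ⨅ n, v n i with hw
  have htend : ∀ i, Tendsto (fun n => v n i) atTop (𝓝 (w i)) := by
    intro i
    exact tendsto_atTop_ciInf (hanti i) ⟨0, fun y hy => by
      obtain ⟨n, rfl⟩ := hy; exact hnn n i⟩
  have hvw : Tendsto v atTop (𝓝 w) := tendsto_pi_nhds.mpr htend
  have hPw : P *ᵥ w = w := by
    have h1 : Tendsto (fun n => P *ᵥ v n) atTop (𝓝 (P *ᵥ w)) :=
      ((continuous_const.matrix_mulVec continuous_id).tendsto w).comp hvw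
    have h2 : ∀ n, P *ᵥ v n = v (n+1) := by
      intro n; rw [hv]; simp only [Matrix.mulVec_mulVec, ← pow_succ']
    have h3 : Tendsto (fun n => v (n+1)) atTop (𝓝 w) :=
      hvw.comp (tendsto_add_atTop_nat 1)
    exact tendsto_nhds_unique (by simpa only [h2] using h1) h3
  have hw0 : w = 0 := by
    have hker : (1 - P) *ᵥ w = 0 := by
      rw [Matrix.sub_mulVec, Matrix.one_mulVec, hPw, sub_self]
    calc w = ((1 - P)⁻¹ * (1 - P)) *ᵥ w := by
            rw [Matrix.nonsing_inv_mul _ hunit, Matrix.one_mulVec]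
      _ = (1 - P)⁻¹ *ᵥ ((1 - P) *ᵥ w) := by rw [← Matrix.mulVec_mulVec]
      _ = 0 := by rw [hker, Matrix.mulVec_zero]
  have := htend i
  rw [hw0] at this
  simpa using this

lemma inv_one_sub_mulVec_nonneg {P : Matrix A A ℝ}
    (hP : ∀ i j, 0 ≤ P i j) (hrow : ∀ i, ∑ j, P i j ≤ 1)
    (hunit : IsUnit (1 - P).det) {x : A → ℝ} (hx : ∀ i, 0 ≤ x i) :
    ∀ i, 0 ≤ ((1 - P)⁻¹ *ᵥ x) i := by
  set y : A → ℝ := (1 - P)⁻¹ *ᵥ x with hy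
  have hxy : (1 - P) *ᵥ y = x := by
    rw [hy, Matrix.mulVec_mulVec, Matrix.mul_nonsing_inv _ hunit, Matrix.one_mulVec]
  have hPy : ∀ i, (P *ᵥ y) i ≤ y i := by
    intro i
    have : y i - (P *ᵥ y) i = x i := by
      have := congrFun hxy i
      simpa [Matrix.sub_mulVec, Matrix.one_mulVec] using this
    linarith [hx i]
  have hpow : ∀ n i, ((P ^ n) *ᵥ y) i ≤ y i := by
    intro n
    induction n with
    | zero => intro i; simp [Matrix.one_mulVec]
    | succ n ih =>
      intro i
      have h1 : ((P ^ (n+1)) *ᵥ y) i = ((P ^ n) *ᵥ (P *ᵥ y)) i := by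
        rw [pow_succ, ← Matrix.mulVec_mulVec]
      rw [h1]
      exact le_trans (mulVec_mono (pow_entry_nonneg hP n) hPy i) (ih i)
  intro i
  set C : ℝ := ∑ j, |y j| with hC
  have hyC : ∀ j, -C ≤ y j := by
    intro j
    have h1 : |y j| ≤ C := Finset.single_le_sum (fun j _ => abs_nonneg (y j)) (Finset.mem_univ j)
    have := neg_abs_le (y j)
    linarith
  have hlow : ∀ n, -C * (((P ^ n) *ᵥ fun _ => (1:ℝ)) i) ≤ y i := by
    intro n
    calc -C * (((P ^ n) *ᵥ fun _ => (1:ℝ)) i)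
        = ((P ^ n) *ᵥ fun _ => -C) i := by
          simp [Matrix.mulVec, dotProduct, Finset.mul_sum, Finset.sum_mul, mul_comm]
      _ ≤ ((P ^ n) *ᵥ y) i := mulVec_mono (pow_entry_nonneg hP n) hyC i
      _ ≤ y i := hpow n i
  have hlim : Tendsto (fun n => -C * (((P ^ n) *ᵥ fun _ => (1:ℝ)) i)) atTop (𝓝 0) := by
    have := (substoch_tendsto_zero hP hrow hunit i).const_mul (-C)
    simpa using this
  exact le_of_tendsto' hlim hlow

lemma neg_inv_nonneg {M : Matrix A A ℝ} (hoff : ∀ i j, i ≠ j → 0 ≤ M i j)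
    (hrow : ∀ i, ∑ j, M i j ≤ 0) (hdet : IsUnit M.det) :
    ∀ i j, 0 ≤ (-M)⁻¹ i j := by
  have hdiag : ∀ i, M i i ≤ 0 := by
    intro i
    have h1 : ∑ j ∈ Finset.univ.erase i, M i j ≥ 0 :=
      Finset.sum_nonneg fun j hj => hoff i j (Ne.symm (Finset.ne_of_mem_erase hj))
    have h2 : M i i + ∑ j ∈ Finset.univ.erase i, M i j = ∑ j, M i j := by
      rw [Finset.add_sum_erase _ _ (Finset.mem_univ i)]
    linarith [hrow i]
  set s : ℝ := 1 + ∑ i, (-M i i) with hs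
  have hsum_nn : (0:ℝ) ≤ ∑ i, (-M i i) :=
    Finset.sum_nonneg fun i _ => show (0:ℝ) ≤ -M i i by linarith [hdiag i]
  have hspos : 0 < s := by rw [hs]; linarith
  have hsle : ∀ i, -M i i ≤ s := by
    intro i
    have h := Finset.single_le_sum (f := fun i => -M i i)
      (fun i _ => show (0:ℝ) ≤ -M i i by linarith [hdiag i]) (Finset.mem_univ i)
    rw [hs]; linarith
  set P : Matrix A A ℝ := 1 + s⁻¹ • M with hPdef
  have hPapp : ∀ i j, P i j = (if i = j then (1:ℝ) else 0) + s⁻¹ * M i j := by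
    intro i j; rw [hPdef]; simp [Matrix.one_apply]
  have hPnn : ∀ i j, 0 ≤ P i j := by
    intro i j
    rw [hPapp]
    by_cases h : i = j
    · subst h
      rw [if_pos rfl]
      have h1 : s⁻¹ * M i i ≥ s⁻¹ * (-s) := by
        apply mul_le_mul_of_nonneg_left _ (le_of_lt (inv_pos.mpr hspos))
        linarith [hsle i]
      have h2 : s⁻¹ * (-s) = -1 := by field_simp
      linarith
    · simp only [if_neg h]
      have := hoff i j h
      positivity
  have hProw : ∀ i, ∑ j, P i j ≤ 1 := by
    intro i
    have : ∑ j, P i j = 1 + s⁻¹ * ∑ j, M i j := by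
      simp only [hPapp]
      rw [Finset.sum_add_distrib, Finset.sum_ite_eq Finset.univ i (fun _ => (1:ℝ))]
      simp [Finset.mul_sum]
    rw [this]
    have : s⁻¹ * ∑ j, M i j ≤ 0 :=
      mul_nonpos_of_nonneg_of_nonpos (le_of_lt (inv_pos.mpr hspos)) (hrow i)
    linarith
  have h1P : 1 - P = s⁻¹ • (-M) := by
    rw [hPdef]; ext i j; simp [Matrix.smul_apply]
  have hunit : IsUnit (1 - P).det := by
    rw [h1P, Matrix.det_smul, Matrix.det_neg]
    exact ((isUnit_iff_ne_zero.mpr (inv_ne_zero (ne_of_gt hspos))).pow _).mul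
      (((isUnit_one.neg).pow _).mul hdet)
  have hMinv : (-M)⁻¹ = s⁻¹ • (1 - P)⁻¹ := by
    apply Matrix.inv_eq_right_inv
    have hM1P : -M = s • (1 - P) := by
      rw [h1P, smul_smul, mul_inv_cancel₀ (ne_of_gt hspos), one_smul]
    rw [Matrix.mul_smul, hM1P, Matrix.smul_mul, Matrix.mul_nonsing_inv _ hunit]
    rw [smul_smul, inv_mul_cancel₀ (ne_of_gt hspos), one_smul]
  intro i j
  rw [hMinv]
  have hsingle : ∀ k, 0 ≤ (Pi.single j 1 : A → ℝ) k := by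
    intro k
    rw [Pi.single_apply]
    positivity
  have := inv_one_sub_mulVec_nonneg hPnn hProw hunit hsingle i
  have happ : ((1 - P)⁻¹ *ᵥ Pi.single j 1) i = (1 - P)⁻¹ i j := by
    simp [Matrix.mulVec_single]
  rw [happ] at this
  have : 0 ≤ s⁻¹ * (1 - P)⁻¹ i j := mul_nonneg (le_of_lt (inv_pos.mpr hspos)) this
  simpa [Matrix.smul_apply] using this


lemma vecMul_smul_mat {n m : Type*} [Fintype n] (x : n → ℝ) (a : ℝ) (M : Matrix n m ℝ) :
    x ᵥ* (a • M) = a • (x ᵥ* M) := by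
  funext j
  simp only [Matrix.vecMul, dotProduct, Matrix.smul_apply, Pi.smul_apply, smul_eq_mul,
    Finset.mul_sum]
  exact Finset.sum_congr rfl fun i _ => by ring

end Stmt13Aux

/-- The matrix `Q_𝒯 = T₀ + R₀ (−A₁)⁻¹ S₁`. -/
noncomputable def QTmat {A T : Type*} [Fintype A] [DecidableEq A]
    (Q0 Q1 : Matrix (A ⊕ T) (A ⊕ T) ℝ) : Matrix T T ℝ :=
  Q0.toBlocks₂₂ + Q0.toBlocks₂₁ * (-Q1.toBlocks₁₁)⁻¹ * Q1.toBlocks₁₂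

/-- With linear perturbation `Q(ε) = Q⁽⁰⁾ + ε Q⁽¹⁾` (irreducible for `0 < ε < ε₀`), 𝒜
absorbing and 𝒯 transient for `Q⁽⁰⁾`, and `A₁` invertible, the matrix
`Q_𝒯 = T₀ + R₀(−A₁)⁻¹S₁` is a Q-matrix on 𝒯.  Moreover, if `ν` is the unique probability
vector on 𝒯 with `ν Q_𝒯 = 0`, then `π(0) = [α, 0]` with `α = c ν R₀ (−A₁)⁻¹`,
`c = (ν R₀ (−A₁)⁻¹ 𝟙)⁻¹`, and the first-order transient coefficient is `β⁽¹⁾ = c ν`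
(expressed via limits of `π(ε)` and `π(ε)/ε` as `ε → 0⁺`). -/
theorem stmt13 {A T : Type*} [Fintype A] [Fintype T] [DecidableEq A] [DecidableEq T]
    [Nonempty A] [Nonempty T]
    (ε₀ : ℝ) (hε₀ : 0 < ε₀)
    (Q0 Q1 : Matrix (A ⊕ T) (A ⊕ T) ℝ)
    (hQmat : ∀ ε : ℝ, 0 < ε → ε < ε₀ →
      (∀ x y, x ≠ y → 0 ≤ (Q0 + ε • Q1) x y) ∧ ∀ x, ∑ y, (Q0 + ε • Q1) x y = 0)
    (hirr : ∀ ε : ℝ, 0 < ε → ε < ε₀ →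
      ∀ x y : A ⊕ T, Relation.ReflTransGen (fun a b => 0 < (Q0 + ε • Q1) a b) x y)
    (habs : ∀ a : A, ∀ y, Q0 (Sum.inl a) y = 0)
    (htrans : ∀ t : T, ∃ a : A,
      Relation.ReflTransGen (fun u v => 0 < Q0 u v) (Sum.inr t) (Sum.inl a))
    (hT0 : IsUnit Q0.toBlocks₂₂)
    (hA1 : IsUnit Q1.toBlocks₁₁)
    (ν : T → ℝ) (hνnn : ∀ t, 0 ≤ ν t) (hν1 : ∑ t, ν t = 1)
    (hνQ : ν ᵥ* QTmat Q0 Q1 = 0)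
    (hνuniq : ∀ ν' : T → ℝ,
      ((∀ t, 0 ≤ ν' t) ∧ (∑ t, ν' t = 1) ∧ ν' ᵥ* QTmat Q0 Q1 = 0) → ν' = ν)
    (π : ℝ → (A ⊕ T) → ℝ)
    (hπ : ∀ ε : ℝ, 0 < ε → ε < ε₀ →
      (∀ x, 0 ≤ π ε x) ∧ (∑ x, π ε x = 1) ∧
      ∀ y, ∑ x, π ε x * (Q0 + ε • Q1) x y = 0) :
    ((∀ s t : T, s ≠ t → 0 ≤ QTmat Q0 Q1 s t) ∧ ∀ s : T, ∑ t, QTmat Q0 Q1 s t = 0) ∧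
    (∀ a : A, Tendsto (fun ε => π ε (Sum.inl a)) (𝓝[>] (0 : ℝ))
      (𝓝 ((∑ b : A, (ν ᵥ* (Q0.toBlocks₂₁ * (-Q1.toBlocks₁₁)⁻¹)) b)⁻¹ *
        (ν ᵥ* (Q0.toBlocks₂₁ * (-Q1.toBlocks₁₁)⁻¹)) a))) ∧
    (∀ t : T, Tendsto (fun ε => π ε (Sum.inr t)) (𝓝[>] (0 : ℝ)) (𝓝 0)) ∧
    ∀ t : T, Tendsto (fun ε => π ε (Sum.inr t) / ε) (𝓝[>] (0 : ℝ))
      (𝓝 ((∑ b : A, (ν ᵥ* (Q0.toBlocks₂₁ * (-Q1.toBlocks₁₁)⁻¹)) b)⁻¹ * ν t)) := by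
  clear hirr htrans
  set A₁ := Q1.toBlocks₁₁ with hA₁d
  set S₁ := Q1.toBlocks₁₂ with hS₁d
  set R₀ := Q0.toBlocks₂₁ with hR₀d
  set T₀ := Q0.toBlocks₂₂ with hT₀d
  set R₁ := Q1.toBlocks₂₁ with hR₁d
  set T₁ := Q1.toBlocks₂₂ with hT₁d
  set N := (-A₁)⁻¹ with hNd
  have hA₁app : ∀ a b, A₁ a b = Q1 (Sum.inl a) (Sum.inl b) := fun a b => rfl
  have hS₁app : ∀ a t, S₁ a t = Q1 (Sum.inl a) (Sum.inr t) := fun a t => rfl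
  have hR₀app : ∀ t a, R₀ t a = Q0 (Sum.inr t) (Sum.inl a) := fun t a => rfl
  have hT₀app : ∀ s t, T₀ s t = Q0 (Sum.inr s) (Sum.inr t) := fun s t => rfl
  have hR₁app : ∀ t a, R₁ t a = Q1 (Sum.inr t) (Sum.inl a) := fun t a => rfl
  have hT₁app : ∀ s t, T₁ s t = Q1 (Sum.inr s) (Sum.inr t) := fun s t => rfl
  have hIoo : Set.Ioo (0:ℝ) ε₀ ∈ 𝓝[>] (0:ℝ) := Ioo_mem_nhdsGT_of_mem ⟨le_refl 0, hε₀⟩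
  have hQ1row : ∀ x, ∑ y, Q1 x y = 0 := by
    intro x
    have h2 := (hQmat (ε₀/2) (by positivity) (by linarith)).2 x
    have h3 := (hQmat (ε₀/3) (by positivity) (by linarith)).2 x
    simp only [Matrix.add_apply, Matrix.smul_apply, smul_eq_mul, Finset.sum_add_distrib,
      ← Finset.mul_sum] at h2 h3
    have hεb : ε₀ * (∑ y, Q1 x y) = 0 := by linarith
    rcases mul_eq_zero.mp hεb with h | h
    · exact absurd h (ne_of_gt hε₀)
    · exact h
  have hQ0row : ∀ x, ∑ y, Q0 x y = 0 := by
    intro x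
    have h2 := (hQmat (ε₀/2) (by positivity) (by linarith)).2 x
    simp only [Matrix.add_apply, Matrix.smul_apply, smul_eq_mul, Finset.sum_add_distrib,
      ← Finset.mul_sum] at h2
    rw [hQ1row x, mul_zero, add_zero] at h2
    exact h2
  have hQ1nn : ∀ (a : A) y, Sum.inl a ≠ y → 0 ≤ Q1 (Sum.inl a) y := by
    intro a y hne
    have h := (hQmat (ε₀/2) (by positivity) (by linarith)).1 (Sum.inl a) y hne
    simp only [Matrix.add_apply, Matrix.smul_apply, smul_eq_mul, habs, zero_add] at h
    nlinarith
  have hQ0nn : ∀ x y, x ≠ y → 0 ≤ Q0 x y := by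
    intro x y hne
    have hc : Tendsto (fun ε : ℝ => Q0 x y + ε * Q1 x y) (𝓝[>] 0) (𝓝 (Q0 x y)) := by
      have h0 : Tendsto (fun ε : ℝ => Q0 x y + ε * Q1 x y) (𝓝 0) (𝓝 (Q0 x y + 0 * Q1 x y)) :=
        ((continuous_const.add (continuous_id.mul continuous_const)).tendsto 0)
      rw [zero_mul, add_zero] at h0
      exact h0.mono_left nhdsWithin_le_nhds
    refine ge_of_tendsto hc ?_
    filter_upwards [hIoo] with ε hε
    simpa [Matrix.add_apply, Matrix.smul_apply, smul_eq_mul] using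
      (hQmat ε hε.1 hε.2).1 x y hne
  have hA1S1 : ∀ a, (∑ b, A₁ a b) + (∑ t, S₁ a t) = 0 := by
    intro a
    have := hQ1row (Sum.inl a)
    rwa [Fintype.sum_sum_type] at this
  have hR0T0 : ∀ t, (∑ a, R₀ t a) + (∑ s, T₀ t s) = 0 := by
    intro t
    have := hQ0row (Sum.inr t)
    rwa [Fintype.sum_sum_type] at this
  have hA1off : ∀ a b, a ≠ b → 0 ≤ A₁ a b := fun a b h =>
    hQ1nn a (Sum.inl b) (by simpa using h)
  have hS1nn : ∀ a t, 0 ≤ S₁ a t := fun a t => hQ1nn a (Sum.inr t) (by simp)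
  have hR0nn : ∀ t a, 0 ≤ R₀ t a := fun t a => hQ0nn _ _ (by simp)
  have hT0off : ∀ s t, s ≠ t → 0 ≤ T₀ s t := fun s t h => hQ0nn _ _ (by simpa using h)
  have hA1row : ∀ a, ∑ b, A₁ a b ≤ 0 := by
    intro a
    have h := hA1S1 a
    have h2 : 0 ≤ ∑ t, S₁ a t := Finset.sum_nonneg fun t _ => hS1nn a t
    linarith
  have hA1det : IsUnit A₁.det := (Matrix.isUnit_iff_isUnit_det _).mp hA1
  have hT0det : IsUnit T₀.det := (Matrix.isUnit_iff_isUnit_det _).mp hT0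
  have hnegA1det : IsUnit (-A₁).det := by
    rw [Matrix.det_neg]
    exact ((isUnit_one.neg).pow _).mul hA1det
  have hNnn : ∀ a b, 0 ≤ N a b := Stmt13Aux.neg_inv_nonneg hA1off hA1row hA1det
  have hQT : QTmat Q0 Q1 = T₀ + R₀ * N * S₁ := rfl
  have hQTpart : (∀ s t : T, s ≠ t → 0 ≤ QTmat Q0 Q1 s t) ∧
      ∀ s : T, ∑ t, QTmat Q0 Q1 s t = 0 := by
    constructor
    · intro s t hst
      rw [hQT, Matrix.add_apply]
      have h1 : 0 ≤ (R₀ * N * S₁) s t := by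
        rw [Matrix.mul_apply]
        refine Finset.sum_nonneg fun b _ => mul_nonneg ?_ (hS1nn b t)
        rw [Matrix.mul_apply]
        exact Finset.sum_nonneg fun a _ => mul_nonneg (hR0nn s a) (hNnn a b)
      have h2 := hT0off s t hst
      linarith
    · intro s
      have hS1A1 : S₁ *ᵥ (fun _ => (1:ℝ)) = (-A₁) *ᵥ (fun _ => (1:ℝ)) := by
        funext a
        have h := hA1S1 a
        simp only [Matrix.mulVec, dotProduct, Matrix.neg_apply, mul_one]
        rw [Finset.sum_neg_distrib]
        linarith
      have hNone : N *ᵥ ((-A₁) *ᵥ (fun _ => (1:ℝ))) = (fun _ => (1:ℝ)) := by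
        rw [Matrix.mulVec_mulVec, hNd, Matrix.nonsing_inv_mul _ hnegA1det, Matrix.one_mulVec]
      have key2 : (R₀ * N * S₁) *ᵥ (fun _ => (1:ℝ)) = R₀ *ᵥ (fun _ => (1:ℝ)) := by
        calc (R₀ * N * S₁) *ᵥ (fun _ => (1:ℝ))
            = R₀ *ᵥ (N *ᵥ (S₁ *ᵥ (fun _ => (1:ℝ)))) := by
              rw [Matrix.mulVec_mulVec, Matrix.mulVec_mulVec]
          _ = R₀ *ᵥ (fun _ => (1:ℝ)) := by rw [hS1A1, hNone]
      have key : ((T₀ + R₀ * N * S₁) *ᵥ (fun _ => (1:ℝ))) s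
          = (T₀ *ᵥ (fun _ => (1:ℝ))) s + (R₀ *ᵥ (fun _ => (1:ℝ))) s := by
        rw [Matrix.add_mulVec, key2]
        rfl
      have h1 : ∑ t, QTmat Q0 Q1 s t = ((T₀ + R₀ * N * S₁) *ᵥ (fun _ => (1:ℝ))) s := by
        rw [hQT]
        simp [Matrix.mulVec, dotProduct]
      rw [h1, key]
      have h2 := hR0T0 s
      simp only [Matrix.mulVec, dotProduct, mul_one]
      linarith
  set αf : ℝ → A → ℝ := fun ε a => π ε (Sum.inl a) with hαfd
  set βf : ℝ → T → ℝ := fun ε t => π ε (Sum.inr t) with hβfd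
  set γf : ℝ → T → ℝ := fun ε t => π ε (Sum.inr t) / ε with hγfd
  set u : A → ℝ := ν ᵥ* (R₀ * N) with hud
  set c : ℝ := (∑ b, u b)⁻¹ with hcd
  have hident : ∀ (x : A → ℝ) (μ : T → ℝ), (∀ a, 0 ≤ x a) → (∀ t, 0 ≤ μ t) →
      (∑ a, x a) = 1 → x ᵥ* A₁ + μ ᵥ* R₀ = 0 → x ᵥ* S₁ + μ ᵥ* T₀ = 0 →
      x = c • u ∧ μ = c • ν := by
    intro x μ hx0 hμ0 hxsum hEAl hETl
    have hxμ : x = μ ᵥ* (R₀ * N) := by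
      have h1 : x ᵥ* (-A₁) = μ ᵥ* R₀ := by
        rw [Matrix.vecMul_neg]
        have h2 : x ᵥ* A₁ = -(μ ᵥ* R₀) := eq_neg_of_add_eq_zero_left hEAl
        rw [h2, neg_neg]
      calc x = (x ᵥ* ((-A₁) * N)) := by
            rw [hNd, Matrix.mul_nonsing_inv _ hnegA1det, Matrix.vecMul_one]
        _ = (x ᵥ* (-A₁)) ᵥ* N := (Matrix.vecMul_vecMul _ _ _).symm
        _ = (μ ᵥ* R₀) ᵥ* N := by rw [h1]
        _ = μ ᵥ* (R₀ * N) := Matrix.vecMul_vecMul _ _ _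
    have hμQT : μ ᵥ* QTmat Q0 Q1 = 0 := by
      rw [hQT, Matrix.vecMul_add]
      have h2 : μ ᵥ* (R₀ * N * S₁) = x ᵥ* S₁ := by
        rw [← Matrix.vecMul_vecMul, ← hxμ]
      rw [h2, add_comm]
      exact hETl
    set σ := ∑ t, μ t with hσd
    have hσnn : 0 ≤ σ := Finset.sum_nonneg fun t _ => hμ0 t
    have hσpos : 0 < σ := by
      rcases eq_or_lt_of_le hσnn with h | h
      · exfalso
        have hμz : μ = 0 := by
          funext t
          exact (Finset.sum_eq_zero_iff_of_nonneg (fun t _ => hμ0 t)).mp h.symm t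
            (Finset.mem_univ t)
        rw [hμz, Matrix.zero_vecMul] at hxμ
        rw [hxμ] at hxsum
        simp at hxsum
      · exact h
    have hν' : σ⁻¹ • μ = ν := by
      apply hνuniq
      refine ⟨fun t => mul_nonneg (inv_nonneg.mpr hσnn) (hμ0 t), ?_, ?_⟩
      · simp only [Pi.smul_apply, smul_eq_mul, ← Finset.mul_sum]
        rw [← hσd, inv_mul_cancel₀ (ne_of_gt hσpos)]
      · rw [Matrix.smul_vecMul, hμQT, smul_zero]
    have hμν : μ = σ • ν := by
      rw [← hν', smul_smul, mul_inv_cancel₀ (ne_of_gt hσpos), one_smul]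
    have hxσ : x = σ • u := by rw [hxμ, hμν, Matrix.smul_vecMul, hud]
    have hσc : σ * (∑ b, u b) = 1 := by
      rw [hxσ] at hxsum
      simp only [Pi.smul_apply, smul_eq_mul, ← Finset.mul_sum] at hxsum
      exact hxsum
    have hc : c = σ := by rw [hcd]; exact inv_eq_of_mul_eq_one_left hσc
    exact ⟨by rw [hxσ, hc], by rw [hμν, hc]⟩
  have hstatA : ∀ ε, 0 < ε → ε < ε₀ →
      αf ε ᵥ* A₁ + γf ε ᵥ* R₀ + βf ε ᵥ* R₁ = 0 := by
    intro ε h1 h2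
    have hne : ε ≠ 0 := ne_of_gt h1
    funext b
    have hraw := (hπ ε h1 h2).2.2 (Sum.inl b)
    rw [Fintype.sum_sum_type] at hraw
    simp only [Matrix.add_apply, Matrix.smul_apply, smul_eq_mul, habs, zero_add] at hraw
    have hmul : ε * ((αf ε ᵥ* A₁ + γf ε ᵥ* R₀ + βf ε ᵥ* R₁) b) = 0 := by
      rw [← hraw]
      simp only [Pi.add_apply, Matrix.vecMul, dotProduct]
      rw [mul_add, mul_add, Finset.mul_sum, Finset.mul_sum, Finset.mul_sum, add_assoc,
        ← Finset.sum_add_distrib]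
      congr 1
      · refine Finset.sum_congr rfl fun a _ => ?_
        rw [hA₁app]
        simp only [hαfd]
        ring
      · refine Finset.sum_congr rfl fun t _ => ?_
        rw [hR₀app, hR₁app]
        simp only [hγfd, hβfd]
        field_simp
    rcases mul_eq_zero.mp hmul with h | h
    · exact absurd h hne
    · simpa using h
  have hstatT : ∀ ε, 0 < ε → ε < ε₀ →
      αf ε ᵥ* S₁ + γf ε ᵥ* T₀ + βf ε ᵥ* T₁ = 0 := by
    intro ε h1 h2
    have hne : ε ≠ 0 := ne_of_gt h1
    funext s
    have hraw := (hπ ε h1 h2).2.2 (Sum.inr s)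
    rw [Fintype.sum_sum_type] at hraw
    simp only [Matrix.add_apply, Matrix.smul_apply, smul_eq_mul, habs, zero_add] at hraw
    have hmul : ε * ((αf ε ᵥ* S₁ + γf ε ᵥ* T₀ + βf ε ᵥ* T₁) s) = 0 := by
      rw [← hraw]
      simp only [Pi.add_apply, Matrix.vecMul, dotProduct]
      rw [mul_add, mul_add, Finset.mul_sum, Finset.mul_sum, Finset.mul_sum, add_assoc,
        ← Finset.sum_add_distrib]
      congr 1
      · refine Finset.sum_congr rfl fun a _ => ?_
        rw [hS₁app]
        simp only [hαfd]
        ring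
      · refine Finset.sum_congr rfl fun t _ => ?_
        rw [hT₀app, hT₁app]
        simp only [hγfd, hβfd]
        field_simp
    rcases mul_eq_zero.mp hmul with h | h
    · exact absurd h hne
    · simpa using h
  have hβγ : ∀ ε : ℝ, ε ≠ 0 → βf ε = ε • γf ε := by
    intro ε hne
    funext t
    simp only [hβfd, hγfd, Pi.smul_apply, smul_eq_mul]
    rw [mul_comm]
    exact (div_mul_cancel₀ _ hne).symm
  have hγeq : ∀ ε, 0 < ε → ε < ε₀ → IsUnit (T₀ + ε • T₁).det →
      γf ε = -((αf ε ᵥ* S₁) ᵥ* (T₀ + ε • T₁)⁻¹) := by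
    intro ε h1 h2 hdet
    have hne : ε ≠ 0 := ne_of_gt h1
    have hT : γf ε ᵥ* (T₀ + ε • T₁) = -(αf ε ᵥ* S₁) := by
      rw [Matrix.vecMul_add, Stmt13Aux.vecMul_smul_mat]
      have h3 := hstatT ε h1 h2
      have h4 : βf ε ᵥ* T₁ = ε • (γf ε ᵥ* T₁) := by
        rw [hβγ ε hne, Matrix.smul_vecMul]
      rw [h4] at h3
      have h5 : αf ε ᵥ* S₁ + (γf ε ᵥ* T₀ + ε • (γf ε ᵥ* T₁)) = 0 := by
        rw [← add_assoc]
        exact h3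
      exact eq_neg_of_add_eq_zero_right h5
    calc γf ε = (γf ε ᵥ* (T₀ + ε • T₁)) ᵥ* (T₀ + ε • T₁)⁻¹ := by
          rw [Matrix.vecMul_vecMul, Matrix.mul_nonsing_inv _ hdet, Matrix.vecMul_one]
      _ = -((αf ε ᵥ* S₁) ᵥ* (T₀ + ε • T₁)⁻¹) := by rw [hT, Matrix.neg_vecMul]
  have hTmcont : Continuous fun ε : ℝ => T₀ + ε • T₁ :=
    continuous_const.add (continuous_id.smul continuous_const)
  have hdet0 : (T₀ + (0:ℝ) • T₁).det ≠ 0 := by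
    rw [zero_smul, add_zero]
    exact hT0det.ne_zero
  have hTmdet : ∀ᶠ ε in 𝓝 (0:ℝ), IsUnit (T₀ + ε • T₁).det := by
    have hev := (hTmcont.matrix_det.continuousAt (x := (0:ℝ))).eventually_ne hdet0
    filter_upwards [hev] with ε hε
    exact isUnit_iff_ne_zero.mpr hε
  have hJcont : Tendsto (fun ε : ℝ => (T₀ + ε • T₁)⁻¹) (𝓝 0) (𝓝 T₀⁻¹) := by
    have heq : (fun ε : ℝ => (T₀ + ε • T₁)⁻¹)
        = fun ε => ((T₀ + ε • T₁).det)⁻¹ • (T₀ + ε • T₁).adjugate := by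
      funext ε
      rw [Matrix.inv_def, Ring.inverse_eq_inv]
    have h1 : ContinuousAt (fun ε : ℝ => ((T₀ + ε • T₁).det)⁻¹ • (T₀ + ε • T₁).adjugate) 0 :=
      (hTmcont.matrix_det.continuousAt.inv₀ hdet0).smul hTmcont.matrix_adjugate.continuousAt
    have h3 : ((T₀ + (0:ℝ) • T₁).det)⁻¹ • (T₀ + (0:ℝ) • T₁).adjugate = T₀⁻¹ := by
      rw [zero_smul, add_zero, Matrix.inv_def, Ring.inverse_eq_inv]
    rw [heq, ← h3]
    exact h1.tendsto
  have master : Tendsto (fun ε => (αf ε, γf ε)) (𝓝[>] (0:ℝ)) (𝓝 (c • u, c • ν)) := by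
    apply tendsto_of_subseq_tendsto
    intro e he
    have he0 : Tendsto e atTop (𝓝 (0:ℝ)) := he.mono_right nhdsWithin_le_nhds
    have hee : ∀ᶠ n in atTop, (e n ∈ Set.Ioo (0:ℝ) ε₀) ∧ IsUnit (T₀ + e n • T₁).det :=
      (he.eventually_mem hIoo).and (he0.eventually hTmdet)
    have hmem : ∀ᶠ n in atTop, αf (e n) ∈ Set.pi Set.univ (fun _ : A => Set.Icc (0:ℝ) 1) := by
      filter_upwards [hee] with n hn
      intro a _
      obtain ⟨⟨h1, h2⟩, -⟩ := hn
      obtain ⟨hnn, hsum, -⟩ := hπ (e n) h1 h2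
      refine ⟨hnn _, ?_⟩
      rw [← hsum]
      exact Finset.single_le_sum (fun z _ => hnn z) (Finset.mem_univ _)
    obtain ⟨x, hxK, φ, hφ, hxlim⟩ :=
      (isCompact_univ_pi fun _ : A => isCompact_Icc).tendsto_subseq' hmem.frequently
    refine ⟨φ, ?_⟩
    have he' : Tendsto (fun n => e (φ n)) atTop (𝓝[>] 0) := he.comp hφ.tendsto_atTop
    have he'0 : Tendsto (fun n => e (φ n)) atTop (𝓝 (0:ℝ)) := he'.mono_right nhdsWithin_le_nhds
    have hee' : ∀ᶠ n in atTop,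
        (e (φ n) ∈ Set.Ioo (0:ℝ) ε₀) ∧ IsUnit (T₀ + e (φ n) • T₁).det :=
      hφ.tendsto_atTop.eventually hee
    have hxlim' : Tendsto (fun n => αf (e (φ n))) atTop (𝓝 x) := hxlim
    set μ0 : T → ℝ := -((x ᵥ* S₁) ᵥ* T₀⁻¹) with hμ0d
    have hγlim : Tendsto (fun n => γf (e (φ n))) atTop (𝓝 μ0) := by
      have h1 : Tendsto (fun n => αf (e (φ n)) ᵥ* S₁) atTop (𝓝 (x ᵥ* S₁)) :=
        ((continuous_id.matrix_vecMul continuous_const).tendsto x).comp hxlim'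
      have hJ : Tendsto (fun n => (T₀ + e (φ n) • T₁)⁻¹) atTop (𝓝 T₀⁻¹) :=
        hJcont.comp he'0
      have hcont : Continuous fun p : (T → ℝ) × Matrix T T ℝ => p.1 ᵥ* p.2 :=
        continuous_fst.matrix_vecMul continuous_snd
      have h2 : Tendsto (fun n => (αf (e (φ n)) ᵥ* S₁) ᵥ* (T₀ + e (φ n) • T₁)⁻¹) atTop
          (𝓝 ((x ᵥ* S₁) ᵥ* T₀⁻¹)) :=
        (hcont.tendsto _).comp (h1.prodMk_nhds hJ)
      refine (h2.neg).congr' ?_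
      filter_upwards [hee'] with n hn
      exact (hγeq _ hn.1.1 hn.1.2 hn.2).symm
    have hβlim : Tendsto (fun n => βf (e (φ n))) atTop (𝓝 (0 : T → ℝ)) := by
      have h2 : Tendsto (fun n => e (φ n) • γf (e (φ n))) atTop (𝓝 ((0:ℝ) • μ0)) :=
        he'0.smul hγlim
      rw [zero_smul] at h2
      refine h2.congr' ?_
      filter_upwards [hee'] with n hn
      exact (hβγ _ (ne_of_gt hn.1.1)).symm
    have hx0 : ∀ a, 0 ≤ x a := fun a => (hxK a (Set.mem_univ a)).1
    have hμ0nn : ∀ t, 0 ≤ μ0 t := by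
      intro t
      have hγt : Tendsto (fun n => γf (e (φ n)) t) atTop (𝓝 (μ0 t)) :=
        ((continuous_apply t).tendsto μ0).comp hγlim
      refine ge_of_tendsto hγt ?_
      filter_upwards [hee'] with n hn
      have hnn := (hπ (e (φ n)) hn.1.1 hn.1.2).1 (Sum.inr t)
      have : γf (e (φ n)) t = π (e (φ n)) (Sum.inr t) / e (φ n) := rfl
      rw [this]
      exact div_nonneg hnn (le_of_lt hn.1.1)
    have hxsum : ∑ a, x a = 1 := by
      have h1 : Tendsto (fun n => ∑ a, αf (e (φ n)) a) atTop (𝓝 (∑ a, x a)) :=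
        tendsto_finset_sum _ fun a _ => ((continuous_apply a).tendsto x).comp hxlim'
      have h3 : Tendsto (fun n => 1 - ∑ t, βf (e (φ n)) t) atTop
          (𝓝 (1 - ∑ t, (0 : T → ℝ) t)) :=
        tendsto_const_nhds.sub (tendsto_finset_sum _ fun t _ =>
          ((continuous_apply t).tendsto _).comp hβlim)
      have h4 : ∀ᶠ n in atTop, ∑ a, αf (e (φ n)) a = 1 - ∑ t, βf (e (φ n)) t := by
        filter_upwards [hee'] with n hn
        have hsum := (hπ (e (φ n)) hn.1.1 hn.1.2).2.1
        rw [Fintype.sum_sum_type] at hsum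
        simp only [hαfd, hβfd]
        linarith
      have h4' : (fun n => 1 - ∑ t, βf (e (φ n)) t) =ᶠ[atTop]
          (fun n => ∑ a, αf (e (φ n)) a) := h4.mono fun n hn => hn.symm
      have h5 : Tendsto (fun n => ∑ a, αf (e (φ n)) a) atTop
          (𝓝 (1 - ∑ t, (0 : T → ℝ) t)) := h3.congr' h4'
      have h7 : (∑ a, x a) = 1 - ∑ t, (0 : T → ℝ) t := tendsto_nhds_unique h1 h5
      simpa using h7
    have hEAlim : x ᵥ* A₁ + μ0 ᵥ* R₀ = 0 := by
      have hA : Tendsto (fun n => αf (e (φ n)) ᵥ* A₁ + γf (e (φ n)) ᵥ* R₀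
          + βf (e (φ n)) ᵥ* R₁) atTop
          (𝓝 (x ᵥ* A₁ + μ0 ᵥ* R₀ + (0 : T → ℝ) ᵥ* R₁)) := by
        refine Filter.Tendsto.add (Filter.Tendsto.add ?_ ?_) ?_
        · exact ((continuous_id.matrix_vecMul continuous_const).tendsto x).comp hxlim'
        · exact ((continuous_id.matrix_vecMul continuous_const).tendsto μ0).comp hγlim
        · exact ((continuous_id.matrix_vecMul continuous_const).tendsto _).comp hβlim
      have hconst : ∀ᶠ n in atTop, αf (e (φ n)) ᵥ* A₁ + γf (e (φ n)) ᵥ* R₀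
          + βf (e (φ n)) ᵥ* R₁ = 0 := by
        filter_upwards [hee'] with n hn
        exact hstatA _ hn.1.1 hn.1.2
      have h0 : Tendsto (fun _ : ℕ => (0 : A → ℝ)) atTop (𝓝 0) := tendsto_const_nhds
      have h8 := tendsto_nhds_unique (h0.congr' (hconst.mono fun n hn => hn.symm)) hA
      rw [Matrix.zero_vecMul, add_zero] at h8
      exact h8.symm
    have hETlim : x ᵥ* S₁ + μ0 ᵥ* T₀ = 0 := by
      have hA : Tendsto (fun n => αf (e (φ n)) ᵥ* S₁ + γf (e (φ n)) ᵥ* T₀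
          + βf (e (φ n)) ᵥ* T₁) atTop
          (𝓝 (x ᵥ* S₁ + μ0 ᵥ* T₀ + (0 : T → ℝ) ᵥ* T₁)) := by
        refine Filter.Tendsto.add (Filter.Tendsto.add ?_ ?_) ?_
        · exact ((continuous_id.matrix_vecMul continuous_const).tendsto x).comp hxlim'
        · exact ((continuous_id.matrix_vecMul continuous_const).tendsto μ0).comp hγlim
        · exact ((continuous_id.matrix_vecMul continuous_const).tendsto _).comp hβlim
      have hconst : ∀ᶠ n in atTop, αf (e (φ n)) ᵥ* S₁ + γf (e (φ n)) ᵥ* T₀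
          + βf (e (φ n)) ᵥ* T₁ = 0 := by
        filter_upwards [hee'] with n hn
        exact hstatT _ hn.1.1 hn.1.2
      have h0 : Tendsto (fun _ : ℕ => (0 : T → ℝ)) atTop (𝓝 0) := tendsto_const_nhds
      have h8 := tendsto_nhds_unique (h0.congr' (hconst.mono fun n hn => hn.symm)) hA
      rw [Matrix.zero_vecMul, add_zero] at h8
      exact h8.symm
    obtain ⟨hxc, hμc⟩ := hident x μ0 hx0 hμ0nn hxsum hEAlim hETlim
    rw [hxc] at hxlim'
    rw [hμc] at hγlim
    exact hxlim'.prodMk_nhds hγlim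
  refine ⟨hQTpart, ?_, ?_, ?_⟩
  · intro a
    have h := ((continuous_apply a).tendsto (c • u)).comp
      ((continuous_fst.tendsto _).comp master)
    have h2 : Tendsto (fun ε => π ε (Sum.inl a)) (𝓝[>] (0:ℝ)) (𝓝 ((c • u) a)) := h
    simpa using h2
  · intro t
    have h := ((continuous_apply t).tendsto (c • ν)).comp
      ((continuous_snd.tendsto _).comp master)
    have h2 : Tendsto (fun ε => π ε (Sum.inr t) / ε * ε) (𝓝[>] (0:ℝ))
        (𝓝 ((c • ν) t * 0)) :=
      h.mul (tendsto_id.mono_right nhdsWithin_le_nhds)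
    rw [mul_zero] at h2
    refine h2.congr' ?_
    filter_upwards [self_mem_nhdsWithin] with ε (hε : ε ∈ Set.Ioi (0:ℝ))
    exact div_mul_cancel₀ _ (ne_of_gt hε)
  · intro t
    have h := ((continuous_apply t).tendsto (c • ν)).comp
      ((continuous_snd.tendsto _).comp master)
    have h2 : Tendsto (fun ε => π ε (Sum.inr t) / ε) (𝓝[>] (0:ℝ)) (𝓝 ((c • ν) t)) := h
    simpa using h2
end
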